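/- arXiv:1612.00426 — 5 statements merged into one kernel-verified Lean document; each statement's English description precedes it below -/
import Mathlib

section
/- For every positive integer n, the joint distribution of (des, maj) over the symmetric group S_n equals the joint distribution of (stc, inv): sum over w in S_n of x^{des(w)} q^{maj(w)} equals sum over w in S_n of x^{stc(w)} q^{inv(w)}. -/
open Finset

/-- Descent set of a word (1-based positions: `i ∈ desSet w` iff `1 ≤ i ≤ n-1` and `w_i > w_{i+1}`). -/
def desSet {α : Type*} [LinearOrder α] {n : ℕ} (w : Fin n → α) : Finset ℕ :=
  (Finset.Ico 1 n).filter fun i =>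
    ∃ h : i < n, w ⟨i, h⟩ < w ⟨i - 1, Nat.lt_of_le_of_lt (Nat.sub_le i 1) h⟩

def desStat {α : Type*} [LinearOrder α] {n : ℕ} (w : Fin n → α) : ℕ := (desSet w).card

def majStat {α : Type*} [LinearOrder α] {n : ℕ} (w : Fin n → α) : ℕ := ∑ i ∈ desSet w, i

def invStat {α : Type*} [LinearOrder α] {n : ℕ} (w : Fin n → α) : ℕ :=
  ((Finset.univ : Finset (Fin n × Fin n)).filter fun p => p.1 < p.2 ∧ w p.2 < w p.1).card

/-- Lehmer code. -/
def lehmer {α : Type*} [LinearOrder α] {n : ℕ} (w : Fin n → α) (i : Fin n) : ℕ :=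
  (Finset.univ.filter fun j => i < j ∧ w j < w i).card

/-- `c` contains a subsequence of length `r` which is entrywise strictly greater than
the staircase `(r-1, r-2, ..., 1, 0)`, i.e. the entry at (1-based) place `k` exceeds `r - k`. -/
def hasStaircase {n : ℕ} (c : Fin n → ℕ) (r : ℕ) : Prop :=
  ∃ f : Fin r → Fin n, StrictMono f ∧ ∀ k : Fin r, r < c (f k) + (k : ℕ) + 1

noncomputable def stcWord {n : ℕ} (c : Fin n → ℕ) : ℕ := sSup {r | hasStaircase c r}

noncomputable def stcStat {α : Type*} [LinearOrder α] {n : ℕ} (w : Fin n → α) : ℕ := stcWord (lehmer w)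

noncomputable abbrev PP := Polynomial (Polynomial ℤ)
noncomputable def xP : PP := Polynomial.X
noncomputable def qP : PP := Polynomial.C Polynomial.X
namespace Skandera

open Equiv

lemma hasStaircase_zero {n : ℕ} (c : Fin n → ℕ) : hasStaircase c 0 :=
  ⟨Fin.elim0, fun a => a.elim0, fun k => k.elim0⟩

lemma hasStaircase_le_n {n r : ℕ} {c : Fin n → ℕ} (h : hasStaircase c r) : r ≤ n := by
  obtain ⟨f, hf, -⟩ := h
  simpa using Fintype.card_le_of_injective f hf.injective

lemma hasStaircase_anti {n : ℕ} {c : Fin n → ℕ} {r r' : ℕ} (hr : r' ≤ r)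
    (h : hasStaircase c r) : hasStaircase c r' := by
  obtain ⟨f, hf, hc⟩ := h
  refine ⟨fun k => f ⟨(k : ℕ) + (r - r'), by omega⟩, fun a b hab => hf ?_, fun k => ?_⟩
  · simp only [Fin.mk_lt_mk, Fin.lt_def] at hab ⊢
    omega
  · have := hc ⟨(k : ℕ) + (r - r'), by omega⟩
    simp only at this ⊢
    omega

lemma stcWord_hasStaircase {n : ℕ} (c : Fin n → ℕ) : hasStaircase c (stcWord c) :=
  Nat.sSup_mem ⟨0, by exact hasStaircase_zero c⟩ ⟨n, fun _ hr => hasStaircase_le_n hr⟩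

lemma stcWord_le {n : ℕ} (c : Fin n → ℕ) : stcWord c ≤ n :=
  hasStaircase_le_n (stcWord_hasStaircase c)

lemma le_stcWord {n : ℕ} {c : Fin n → ℕ} {r : ℕ} (h : hasStaircase c r) : r ≤ stcWord c :=
  le_csSup ⟨n, fun _ hr => hasStaircase_le_n hr⟩ (by exact h)

lemma stcWord_eq_of {n : ℕ} {c : Fin n → ℕ} {r : ℕ} (h1 : hasStaircase c r)
    (h2 : ¬ hasStaircase c (r + 1)) : stcWord c = r := by
  refine le_antisymm (csSup_le ⟨0, by exact hasStaircase_zero c⟩ fun b hb => ?_) (le_stcWord h1)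
  by_contra hlt
  exact h2 (hasStaircase_anti (by omega) hb)


lemma cases_apply_ne_zero {n : ℕ} (p : ℕ) (c : Fin n → ℕ) {x : Fin (n+1)} (hx : x ≠ 0) :
    Fin.cases p c x = c (x.pred hx) := by
  obtain ⟨j, rfl⟩ := Fin.eq_succ_of_ne_zero hx
  simp

lemma hasStaircase_cases_succ {n : ℕ} {c : Fin n → ℕ} {p r : ℕ}
    (h : hasStaircase (fun i => Fin.cases p c i : Fin (n+1) → ℕ) (r + 1)) :
    hasStaircase c r ∧ (hasStaircase c (r + 1) ∨ r < p) := by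
  obtain ⟨g, hg, hc⟩ := h
  by_cases h0 : ∀ k, g k ≠ 0
  · have hstep : hasStaircase c (r + 1) := by
      refine ⟨fun k => (g k).pred (h0 k), fun a b hab => ?_, fun k => ?_⟩
      · simpa [Fin.pred_lt_pred_iff] using hg hab
      · have := hc k
        rw [show (fun i => Fin.cases p c i) (g k) = c ((g k).pred (h0 k)) from
          cases_apply_ne_zero p c (h0 k)] at this
        exact this
    exact ⟨hasStaircase_anti (by omega) hstep, Or.inl hstep⟩
  · push_neg at h0
    obtain ⟨k0, hk0⟩ := h0
    have hg0 : g 0 = 0 := by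
      rcases Fin.eq_zero_or_eq_succ k0 with h | ⟨j, hj⟩
      · rwa [h] at hk0
      · exfalso
        have : g 0 < g k0 := hg (by simp [hj, Fin.pos_iff_ne_zero, Fin.succ_ne_zero])
        rw [hk0] at this
        exact absurd this (Fin.not_lt_zero _).elim
    have hp : r < p := by
      have := hc 0
      rw [hg0] at this
      simpa using this
    have hne : ∀ j : Fin r, g j.succ ≠ 0 := by
      intro j
      have : g 0 < g j.succ := hg (by simp [Fin.pos_iff_ne_zero, Fin.succ_ne_zero])
      rw [hg0] at this
      exact Fin.pos_iff_ne_zero.mp this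
    refine ⟨⟨fun j => (g j.succ).pred (hne j), fun a b hab => ?_, fun j => ?_⟩, Or.inr hp⟩
    · simp only [Fin.pred_lt_pred_iff]
      exact hg (by simpa using hab)
    · have := hc j.succ
      rw [show (fun i => Fin.cases p c i) (g j.succ) = c ((g j.succ).pred (hne j)) from
        cases_apply_ne_zero p c (hne j)] at this
      simp only [Fin.val_succ] at this
      show r < c ((g j.succ).pred (hne j)) + (j : ℕ) + 1
      omega

lemma hasStaircase_cases_tail {n : ℕ} {c : Fin n → ℕ} (p : ℕ)
    (f : Fin (stcWord c) → Fin n) (hf : StrictMono f)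
    (hc : ∀ k, stcWord c < c (f k) + (k : ℕ) + 1) :
    hasStaircase (fun i => Fin.cases p c i : Fin (n+1) → ℕ) (stcWord c) := by
  refine ⟨fun k => (f k).succ, fun a b hab => by simpa using hf hab, fun k => ?_⟩
  simpa using hc k

lemma stcWord_cases (p : ℕ) {n : ℕ} (c : Fin n → ℕ) :
    stcWord (fun i => Fin.cases p c i : Fin (n+1) → ℕ)
      = stcWord c + (if stcWord c < p then 1 else 0) := by
  obtain ⟨f, hf, hcf⟩ := stcWord_hasStaircase c
  by_cases hsp : stcWord c < p
  · simp only [hsp, if_true]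
    refine stcWord_eq_of ?_ ?_
    · -- staircase of length s+1 : prepend position 0
      refine ⟨fun k => Fin.cases 0 (fun j => (f j).succ) k, ?_, ?_⟩
      · intro a b hab
        induction b using Fin.cases with
        | zero => exact absurd hab (Fin.not_lt_zero _).elim
        | succ jb =>
          induction a using Fin.cases with
          | zero => simp [Fin.pos_iff_ne_zero, Fin.succ_ne_zero]
          | succ ja =>
            simp only [Fin.cases_succ]
            have : ja < jb := by simpa using hab
            simpa using hf this
      · intro k
        induction k using Fin.cases with
        | zero => simpa using hsp
        | succ j =>
          have := hcf j
          simp only [Fin.cases_succ, Fin.val_succ]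
          omega
    · intro h
      obtain ⟨h1, -⟩ := hasStaircase_cases_succ h
      have := le_stcWord h1
      omega
  · simp only [hsp, if_false, add_zero]
    refine stcWord_eq_of (hasStaircase_cases_tail p f hf hcf) ?_
    intro h
    obtain ⟨-, h2⟩ := hasStaircase_cases_succ h
    rcases h2 with h2 | h2
    · have := le_stcWord h2; omega
    · omega


variable {α : Type*} [LinearOrder α]

/-- first-entry decomposition -/
def mk1 {n : ℕ} (p : Fin (n+1)) (e : Perm (Fin n)) : Perm (Fin (n+1)) :=
  (finSuccEquiv n).trans (e.optionCongr.trans (finSuccEquiv' p).symm)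

@[simp] lemma mk1_zero {n : ℕ} (p : Fin (n+1)) (e : Perm (Fin n)) : mk1 p e 0 = p := by
  simp [mk1]

@[simp] lemma mk1_succ {n : ℕ} (p : Fin (n+1)) (e : Perm (Fin n)) (i : Fin n) :
    mk1 p e i.succ = p.succAbove (e i) := by
  simp [mk1, finSuccEquiv'_symm_some]

/-- max-insertion decomposition -/
def mk2 {n : ℕ} (k : Fin (n+1)) (e : Perm (Fin n)) : Perm (Fin (n+1)) :=
  (finSuccEquiv' k).trans (e.optionCongr.trans finSuccEquivLast.symm)

@[simp] lemma mk2_self {n : ℕ} (k : Fin (n+1)) (e : Perm (Fin n)) : mk2 k e k = Fin.last n := by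
  simp [mk2, finSuccEquiv'_at]

@[simp] lemma mk2_succAbove {n : ℕ} (k : Fin (n+1)) (e : Perm (Fin n)) (i : Fin n) :
    mk2 k e (k.succAbove i) = (e i).castSucc := by
  simp [mk2, finSuccEquiv'_succAbove, finSuccEquivLast_symm_some]

lemma mk1_bijective {n : ℕ} :
    Function.Bijective (fun pe : Fin (n+1) × Perm (Fin n) => mk1 pe.1 pe.2) := by
  rw [Fintype.bijective_iff_injective_and_card]
  constructor
  · rintro ⟨p, e⟩ ⟨p', e'⟩ h
    simp only at h
    have hp : p = p' := by
      have := DFunLike.congr_fun h (0 : Fin (n+1))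
      simpa using this
    subst hp
    have he : e = e' := by
      ext i
      have := DFunLike.congr_fun h i.succ
      simp only [mk1_succ] at this
      exact congrArg Fin.val (Fin.succAbove_right_injective this)
    simp [he]
  · simp [Fintype.card_perm, Nat.factorial_succ]

lemma mk2_bijective {n : ℕ} :
    Function.Bijective (fun ke : Fin (n+1) × Perm (Fin n) => mk2 ke.1 ke.2) := by
  rw [Fintype.bijective_iff_injective_and_card]
  constructor
  · rintro ⟨k, e⟩ ⟨k', e'⟩ h
    simp only at h
    have hk : k = k' := by
      by_contra hne
      obtain ⟨j, hj⟩ := Fin.exists_succAbove_eq hne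
      have := DFunLike.congr_fun h k
      rw [mk2_self, ← hj, mk2_succAbove] at this
      exact absurd this.symm (Fin.castSucc_lt_last (e' j)).ne
    subst hk
    have he : e = e' := by
      ext i
      have := DFunLike.congr_fun h (k.succAbove i)
      simp only [mk2_succAbove] at this
      exact congrArg Fin.val (Fin.castSucc_injective n this)
    simp [he]
  · simp [Fintype.card_perm, Nat.factorial_succ]

/-- inv = sum of Lehmer code -/
lemma invStat_eq_sum_lehmer {n : ℕ} (w : Fin n → α) : invStat w = ∑ i, lehmer w i := by
  unfold invStat lehmer
  rw [Finset.card_eq_sum_card_fiberwise (f := Prod.fst) (t := univ) (fun x _ => mem_univ _)]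
  refine Finset.sum_congr rfl fun i _ => ?_
  refine Finset.card_bij' (fun p _ => p.2) (fun j _ => (i, j)) ?_ ?_ ?_ ?_
  · rintro ⟨a, b⟩ hab
    simp only [mem_filter, mem_univ, true_and] at hab ⊢
    obtain ⟨⟨h1, h2⟩, h3⟩ := hab
    subst h3
    exact ⟨h1, h2⟩
  · intro j hj
    simp only [mem_filter, mem_univ, true_and] at hj ⊢
    simp [hj]
  · rintro ⟨a, b⟩ hab
    simp only [mem_filter] at hab
    simp [hab.2]
  · intro j hj
    rfl

lemma card_filter_pos {n : ℕ} (P : Fin (n+1) → Prop) [DecidablePred P] (h0 : ¬ P 0) :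
    (univ.filter P).card = (univ.filter fun i : Fin n => P i.succ).card := by
  refine Finset.card_bij' (fun j hj => j.pred (by rintro rfl; exact h0 (by simpa using (mem_filter.mp hj).2)))
    (fun i _ => i.succ) ?_ ?_ ?_ ?_
  · intro j hj
    simp only [mem_filter, mem_univ, true_and] at hj ⊢
    rwa [Fin.succ_pred]
  · intro i hi
    simp only [mem_filter, mem_univ, true_and] at hi ⊢
    exact hi
  · intro j hj
    simp
  · intro i hi
    simp

lemma card_filter_comp_perm {n : ℕ} (e : Perm (Fin n)) (Q : Fin n → Prop) [DecidablePred Q] :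
    (univ.filter fun i => Q (e i)).card = (univ.filter Q).card := by
  refine Finset.card_bij' (fun i _ => e i) (fun v _ => e.symm v) ?_ ?_ ?_ ?_ <;>
    simp [mem_filter]

lemma card_filter_val_lt {n : ℕ} (p : Fin (n+1)) :
    (univ.filter fun v : Fin n => (v : ℕ) < (p : ℕ)).card = p := by
  rw [← Finset.card_range (p : ℕ)]
  refine Finset.card_bij' (fun v _ => (v : ℕ)) (fun m hm => ⟨m, by
    simp only [mem_range] at hm; omega⟩) ?_ ?_ ?_ ?_
  · intro v hv
    simp only [mem_filter, mem_univ, true_and] at hv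
    simpa using hv
  · intro m hm
    simp only [mem_range] at hm
    simp [hm]
  · intro v hv
    simp
  · intro m hm
    simp

lemma lehmer_mk1_zero {n : ℕ} (p : Fin (n+1)) (e : Perm (Fin n)) :
    lehmer (fun i => mk1 p e i) 0 = p := by
  unfold lehmer
  rw [show (univ.filter fun j : Fin (n+1) => 0 < j ∧ (fun i => mk1 p e i) j < (fun i => mk1 p e i) 0)
      = univ.filter fun j : Fin (n+1) => 0 < j ∧ mk1 p e j < p by simp]
  rw [card_filter_pos _ (by simp)]
  rw [show (univ.filter fun i : Fin n => 0 < i.succ ∧ mk1 p e i.succ < p)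
      = univ.filter fun i : Fin n => ((e i : ℕ) < (p : ℕ)) by
    refine Finset.filter_congr fun i _ => ?_
    simp only [Fin.succ_pos, true_and, mk1_succ]
    rw [Fin.succAbove_lt_iff_castSucc_lt, Fin.castSucc_lt_iff_succ_le]
    constructor
    · intro h; have := Fin.le_def.mp h; simp at this; omega
    · intro h; rw [Fin.le_def]; simp; omega]
  rw [card_filter_comp_perm e (fun v => (v : ℕ) < (p : ℕ))]
  exact card_filter_val_lt p

lemma lehmer_mk1_succ {n : ℕ} (p : Fin (n+1)) (e : Perm (Fin n)) (i : Fin n) :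
    lehmer (fun i => mk1 p e i) i.succ = lehmer (fun i => e i) i := by
  unfold lehmer
  rw [card_filter_pos _ (by rintro ⟨h, -⟩; exact (Fin.not_lt_zero _) h)]
  congr 1
  refine Finset.filter_congr fun j _ => ?_
  simp [Fin.succ_lt_succ_iff, Fin.succAbove_lt_succAbove_iff]

lemma mk2_apply_of_lt {n : ℕ} {k : Fin (n+1)} (e : Perm (Fin n)) {m : Fin (n+1)}
    (h : (m : ℕ) < (k : ℕ)) :
    mk2 k e m = (e ⟨(m : ℕ), by omega⟩).castSucc := by
  have hmn : (m : ℕ) < n := by omega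
  have hs : k.succAbove ⟨(m : ℕ), hmn⟩ = m := by
    rw [Fin.succAbove_of_castSucc_lt]
    · ext; simp
    · rw [Fin.lt_def]; simpa using h
  have h2 := mk2_succAbove k e ⟨(m : ℕ), hmn⟩
  rw [hs] at h2
  exact h2

lemma mk2_apply_of_gt {n : ℕ} {k : Fin (n+1)} (e : Perm (Fin n)) {m : Fin (n+1)}
    (h : (k : ℕ) < (m : ℕ)) :
    mk2 k e m = (e ⟨(m : ℕ) - 1, by omega⟩).castSucc := by
  have hmn : (m : ℕ) - 1 < n := by omega
  have hs : k.succAbove ⟨(m : ℕ) - 1, hmn⟩ = m := by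
    rw [Fin.succAbove_of_le_castSucc]
    · ext; simp; omega
    · rw [Fin.le_def]; simp; omega
  have h2 := mk2_succAbove k e ⟨(m : ℕ) - 1, hmn⟩
  rw [hs] at h2
  exact h2

set_option maxHeartbeats 2000000 in
lemma mem_desSet_mk2 {n : ℕ} (k : Fin (n+1)) (e : Perm (Fin n)) (i : ℕ) :
    i ∈ desSet (fun j => mk2 k e j) ↔
      (i ∈ desSet (fun j => e j) ∧ i < (k : ℕ)) ∨ ((k : ℕ) < n ∧ i = (k : ℕ) + 1) ∨
        ((k : ℕ) + 2 ≤ i ∧ i - 1 ∈ desSet (fun j => e j)) := by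
  simp only [desSet, mem_filter, mem_Ico]
  constructor
  · rintro ⟨⟨h1, h2⟩, hn1, hlt⟩
    rcases lt_trichotomy i (k : ℕ) with hik | hik | hik
    · left
      rw [mk2_apply_of_lt e (show ((⟨i, hn1⟩ : Fin (n+1)) : ℕ) < (k : ℕ) by simpa using hik),
        mk2_apply_of_lt e (show ((⟨i - 1, _⟩ : Fin (n+1)) : ℕ) < (k : ℕ) by simp; omega),
        Fin.castSucc_lt_castSucc_iff] at hlt
      exact ⟨⟨⟨h1, by omega⟩, by omega, hlt⟩, hik⟩
    · exfalso
      have hk : (⟨i, hn1⟩ : Fin (n+1)) = k := Fin.ext (by simpa using hik)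
      rw [hk, mk2_self] at hlt
      exact absurd hlt (not_lt.mpr (Fin.le_last _))
    · by_cases hik2 : i = (k : ℕ) + 1
      · right; left
        exact ⟨by omega, hik2⟩
      · right; right
        refine ⟨by omega, ?_⟩
        rw [mk2_apply_of_gt e (show (k : ℕ) < ((⟨i, hn1⟩ : Fin (n+1)) : ℕ) by simpa using hik),
          mk2_apply_of_gt e (show (k : ℕ) < ((⟨i - 1, _⟩ : Fin (n+1)) : ℕ) by simp; omega),
          Fin.castSucc_lt_castSucc_iff] at hlt
        exact ⟨⟨by omega, by omega⟩, by omega, hlt⟩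
  · rintro (⟨⟨⟨hd1, hd2⟩, hd3, hlt⟩, hik⟩ | ⟨hkn, rfl⟩ | ⟨hki, ⟨hd1, hd2⟩, hd3, hlt⟩)
    · refine ⟨⟨hd1, by omega⟩, by omega, ?_⟩
      rw [mk2_apply_of_lt e (show ((⟨i, by omega⟩ : Fin (n+1)) : ℕ) < (k : ℕ) by simpa using hik),
        mk2_apply_of_lt e (show ((⟨i - 1, _⟩ : Fin (n+1)) : ℕ) < (k : ℕ) by simp; omega),
        Fin.castSucc_lt_castSucc_iff]
      exact hlt
    · refine ⟨⟨by omega, by omega⟩, by omega, ?_⟩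
      have hk : (⟨(k : ℕ) + 1 - 1, by omega⟩ : Fin (n+1)) = k := Fin.ext (by simp)
      rw [hk, mk2_self,
        mk2_apply_of_gt e (show (k : ℕ) < ((⟨(k : ℕ) + 1, by omega⟩ : Fin (n+1)) : ℕ) by simp)]
      exact Fin.castSucc_lt_last _
    · refine ⟨⟨by omega, by omega⟩, by omega, ?_⟩
      rw [mk2_apply_of_gt e (show (k : ℕ) < ((⟨i, by omega⟩ : Fin (n+1)) : ℕ) by simp; omega),
        mk2_apply_of_gt e (show (k : ℕ) < ((⟨i - 1, _⟩ : Fin (n+1)) : ℕ) by simp; omega),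
        Fin.castSucc_lt_castSucc_iff]
      exact hlt

variable {M : Type*} [AddCommMonoid M]

lemma sum_dgt_image {n : ℕ} (D : Finset ℕ) (hD : D ⊆ Ico 1 n) (f : ℕ → M) :
    ∑ j ∈ D, f ((D.filter fun t => j < t).card) = ∑ t ∈ range D.card, f t := by
  have hinj : Set.InjOn (fun j => (D.filter fun t => j < t).card) D := by
    intro a ha b hb heq
    simp only at heq
    by_contra hne
    have key : ∀ x y, x ∈ D → y ∈ D → x < y →
        (D.filter fun t => y < t).card < (D.filter fun t => x < t).card := by
      intro x y hx hy hxy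
      apply Finset.card_lt_card
      constructor
      · intro t ht
        simp only [mem_filter] at ht ⊢
        exact ⟨ht.1, by omega⟩
      · intro hsub
        have := hsub (by simp [mem_filter]; exact ⟨hy, hxy⟩)
        simp [mem_filter] at this
    rcases lt_or_gt_of_ne hne with h | h
    · exact absurd heq (key a b ha hb h).ne'
    · exact absurd heq (key b a hb ha h).ne
  rw [← Finset.sum_image (g := fun j => (D.filter fun t => j < t).card)
    (fun x hx y hy h => hinj hx hy h)]
  congr 1
  apply Finset.eq_of_subset_of_card_le
  · intro t ht
    simp only [mem_image] at ht
    obtain ⟨j, hj, rfl⟩ := ht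
    simp only [mem_range]
    apply Finset.card_lt_card
    constructor
    · exact Finset.filter_subset _ _
    · intro hsub
      have := hsub hj
      simp [mem_filter] at this
  · rw [Finset.card_image_of_injOn hinj, card_range]

lemma sum_K_image {n : ℕ} (D : Finset ℕ) (hD : D ⊆ Ico 1 n) (f : ℕ → M) :
    ∑ j ∈ (range n).filter (· ∉ D), f (j + 1 + (D.filter fun t => j < t).card)
      = ∑ t ∈ Icc (D.card + 1) n, f t := by
  set K := (range n).filter (· ∉ D) with hK
  set g := fun j => j + 1 + (D.filter fun t => j < t).card with hg
  have hdn : D.card ≤ n := by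
    have := Finset.card_le_card hD
    rw [Nat.card_Ico] at this
    omega
  have hmono : ∀ a b, a ∈ K → b ∈ K → a < b → g a < g b := by
    intro a b ha hb hab
    simp only [hK, mem_filter, mem_range] at ha hb
    have hsplit : (D.filter fun t => a < t).card
        = (D.filter fun t => b < t).card + (D.filter fun t => a < t ∧ t ≤ b).card := by
      rw [← Finset.card_union_of_disjoint]
      · congr 1
        ext t
        simp only [mem_union, mem_filter]
        constructor
        · rintro ⟨ht, h2⟩
          rcases le_or_gt t b with h | h
          · exact Or.inr ⟨ht, h2, h⟩
          · exact Or.inl ⟨ht, h⟩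
        · rintro (⟨ht, h2⟩ | ⟨ht, h2, h3⟩) <;> exact ⟨ht, by omega⟩
      · exact Finset.disjoint_left.mpr (by
          intro t ht h2
          simp only [mem_filter] at ht h2
          omega)
    have hbound : (D.filter fun t => a < t ∧ t ≤ b).card ≤ b - a - 1 := by
      have hsub : (D.filter fun t => a < t ∧ t ≤ b) ⊆ Ioo a b := by
        intro t ht
        simp only [mem_filter] at ht
        have : t ≠ b := fun h => hb.2 (h ▸ ht.1)
        simp only [mem_Ioo]
        omega
      have := Finset.card_le_card hsub
      rwa [Nat.card_Ioo] at this
    simp only [hg]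
    omega
  have hinj : Set.InjOn g K := by
    intro a ha b hb heq
    by_contra hne
    rcases lt_or_gt_of_ne hne with h | h
    · exact absurd heq (hmono a b ha hb h).ne
    · exact absurd heq (hmono b a hb ha h).ne'
  rw [← Finset.sum_image (g := g) (fun x hx y hy h => hinj hx hy h)]
  congr 1
  apply Finset.eq_of_subset_of_card_le
  · intro t ht
    simp only [mem_image] at ht
    obtain ⟨j, hj, rfl⟩ := ht
    simp only [hK, mem_filter, mem_range] at hj
    have hup : (D.filter fun t => j < t).card ≤ n - 1 - j := by
      have hsub : (D.filter fun t => j < t) ⊆ Ico (j+1) n := by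
        intro t ht
        simp only [mem_filter] at ht
        have := hD ht.1
        simp only [mem_Ico] at this ⊢
        omega
      have := Finset.card_le_card hsub
      rw [Nat.card_Ico] at this
      omega
    have hlow : (D.filter fun t => ¬ j < t).card ≤ j := by
      have hsub : (D.filter fun t => ¬ j < t) ⊆ Ico 1 (j+1) := by
        intro t ht
        simp only [mem_filter] at ht
        have := hD ht.1
        simp only [mem_Ico] at this ⊢
        omega
      have := Finset.card_le_card hsub
      rwa [Nat.card_Ico] at this
    have hdec := Finset.card_filter_add_card_filter_not (s := D)
      (p := fun t => j < t)
    simp only [mem_Icc, hg]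
    omega
  · rw [Finset.card_image_of_injOn hinj, Nat.card_Icc]
    have hKcard : K.card + D.card = n := by
      have hdec := Finset.card_filter_add_card_filter_not (s := range n)
        (p := fun t => t ∈ D)
      have : (range n).filter (· ∈ D) = D := by
        rw [Finset.filter_mem_eq_inter, Finset.inter_eq_right]
        intro t ht
        have := hD ht
        simp only [mem_Ico] at this
        simp only [mem_range]
        omega
      rw [this] at hdec
      simp only [card_range] at hdec
      simp only [hK]
      omega
    omega

lemma desSet_subset {α : Type*} [LinearOrder α] {n : ℕ} (w : Fin n → α) :
    desSet w ⊆ Ico 1 n := Finset.filter_subset _ _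

lemma desSet_mk2 {n : ℕ} (k : Fin (n+1)) (e : Perm (Fin n)) :
    desSet (fun j => mk2 k e j) =
      ((desSet fun j => e j).filter fun j => j < (k : ℕ)) ∪
        (if (k : ℕ) < n then {(k : ℕ) + 1} else ∅) ∪
        ((desSet fun j => e j).filter fun j => (k : ℕ) < j).image (· + 1) := by
  ext i
  rw [mem_desSet_mk2]
  simp only [mem_union, mem_filter, mem_image]
  constructor
  · rintro (⟨hD, hik⟩ | ⟨hkn, rfl⟩ | ⟨hki, hD⟩)
    · exact Or.inl (Or.inl ⟨hD, hik⟩)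
    · exact Or.inl (Or.inr (by simp [hkn]))
    · refine Or.inr ⟨i - 1, ⟨hD, by omega⟩, ?_⟩
      have := desSet_subset _ hD
      simp only [mem_Ico] at this
      omega
  · rintro ((⟨hD, hik⟩ | hB) | ⟨j, ⟨hD, hj⟩, rfl⟩)
    · exact Or.inl ⟨hD, hik⟩
    · by_cases hkn : (k : ℕ) < n
      · simp only [if_pos hkn, mem_singleton] at hB
        exact Or.inr (Or.inl ⟨hkn, hB⟩)
      · simp [if_neg hkn] at hB
    · exact Or.inr (Or.inr ⟨by omega, by simpa using hD⟩)

lemma stat_mk2 {n : ℕ} (k : Fin (n+1)) (e : Perm (Fin n)) :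
    desStat (fun j => mk2 k e j) =
      (if (k : ℕ) ∈ desSet (fun j => e j) then desStat (fun j => e j)
        else if (k : ℕ) < n then desStat (fun j => e j) + 1 else desStat (fun j => e j)) ∧
    majStat (fun j => mk2 k e j) =
      (if (k : ℕ) ∈ desSet (fun j => e j) then
          majStat (fun j => e j) + 1 + ((desSet fun j => e j).filter fun t => (k : ℕ) < t).card
        else if (k : ℕ) < n then
          majStat (fun j => e j) + (k : ℕ) + 1 + ((desSet fun j => e j).filter fun t => (k : ℕ) < t).card
        else majStat (fun j => e j)) := by
  set D := desSet (fun j => e j) with hD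
  set A := D.filter fun j => j < (k : ℕ) with hA
  set B : Finset ℕ := if (k : ℕ) < n then {(k : ℕ) + 1} else ∅ with hB
  set C := (D.filter fun j => (k : ℕ) < j) with hC
  have hsub : D ⊆ Ico 1 n := desSet_subset _
  have hdisj1 : Disjoint A B := by
    rw [Finset.disjoint_left]
    intro a ha hb
    simp only [hA, mem_filter] at ha
    rcases lt_or_ge (k : ℕ) n with h | h
    · simp only [hB, if_pos h, mem_singleton] at hb
      omega
    · rw [hB, if_neg (not_lt.mpr h)] at hb
      exact absurd hb (Finset.notMem_empty _)
  have hdisj2 : Disjoint (A ∪ B) (C.image (· + 1)) := by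
    rw [Finset.disjoint_left]
    intro a ha hb
    simp only [mem_image, hC, mem_filter] at hb
    obtain ⟨j, ⟨hj, hjk⟩, rfl⟩ := hb
    simp only [mem_union, hA, mem_filter] at ha
    rcases ha with ⟨-, h⟩ | h
    · omega
    · rcases lt_or_ge (k : ℕ) n with h2 | h2
      · simp only [hB, if_pos h2, mem_singleton] at h
        omega
      · rw [hB, if_neg (not_lt.mpr h2)] at h
        exact absurd h (Finset.notMem_empty _)
  have himgcard : (C.image (· + 1)).card = C.card :=
    Finset.card_image_of_injective _ (fun a b h => by omega)
  have himgsum : ∑ t ∈ C.image (· + 1), t = (∑ t ∈ C, t) + C.card := by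
    rw [Finset.sum_image (fun a _ b _ h => by omega : ∀ a ∈ C, ∀ b ∈ C, a + 1 = b + 1 → a = b)]
    rw [Finset.sum_add_distrib]
    simp
  -- decomposition of D itself
  have hDdec : D = A ∪ (D.filter fun j => j = (k : ℕ)) ∪ C := by
    ext t
    simp only [mem_union, hA, hC, mem_filter]
    constructor
    · intro ht
      rcases lt_trichotomy t (k : ℕ) with h | h | h
      · exact Or.inl (Or.inl ⟨ht, h⟩)
      · exact Or.inl (Or.inr ⟨ht, h⟩)
      · exact Or.inr ⟨ht, h⟩
    · rintro ((⟨ht, -⟩ | ⟨ht, -⟩) | ⟨ht, -⟩) <;> exact ht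
  have hdisjD1 : Disjoint A (D.filter fun j => j = (k : ℕ)) := by
    rw [Finset.disjoint_left]
    intro a ha hb
    simp only [hA, mem_filter] at ha hb
    omega
  have hdisjD2 : Disjoint (A ∪ (D.filter fun j => j = (k : ℕ))) C := by
    rw [Finset.disjoint_left]
    intro a ha hb
    simp only [mem_union, hA, mem_filter] at ha
    simp only [hC, mem_filter] at hb
    rcases ha with ⟨-, h⟩ | ⟨-, h⟩ <;> omega
  have hfk : (D.filter fun j => j = (k : ℕ)) = if (k : ℕ) ∈ D then {(k : ℕ)} else ∅ :=
    Finset.filter_eq' D (k : ℕ)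
  -- cards
  have hcardD : D.card = A.card + (if (k : ℕ) ∈ D then 1 else 0) + C.card := by
    conv_lhs => rw [hDdec]
    rw [Finset.card_union_of_disjoint hdisjD2, Finset.card_union_of_disjoint hdisjD1, hfk]
    split <;> simp
  have hsumD : ∑ t ∈ D, t = (∑ t ∈ A, t) + (if (k : ℕ) ∈ D then (k : ℕ) else 0) + ∑ t ∈ C, t := by
    conv_lhs => rw [hDdec]
    rw [Finset.sum_union hdisjD2, Finset.sum_union hdisjD1, hfk]
    split <;> simp
  have hnew : desSet (fun j => mk2 k e j) = A ∪ B ∪ C.image (· + 1) := desSet_mk2 k e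
  have hcard : desStat (fun j => mk2 k e j)
      = A.card + (if (k : ℕ) < n then 1 else 0) + C.card := by
    rw [desStat, hnew, Finset.card_union_of_disjoint hdisj2,
      Finset.card_union_of_disjoint hdisj1, himgcard, hB]
    split <;> simp
  have hsum : majStat (fun j => mk2 k e j)
      = (∑ t ∈ A, t) + (if (k : ℕ) < n then (k : ℕ) + 1 else 0) + ((∑ t ∈ C, t) + C.card) := by
    rw [majStat, hnew, Finset.sum_union hdisj2, Finset.sum_union hdisj1, himgsum, hB]
    split <;> simp
  have hkD : (k : ℕ) ∈ D → (k : ℕ) < n := fun h => by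
    have := hsub h; simp only [mem_Ico] at this; omega
  constructor
  · rw [hcard, desStat, ← hD]
    by_cases h1 : (k : ℕ) ∈ D
    · simp only [if_pos h1, if_pos (hkD h1)] at hcardD ⊢
      omega
    · simp only [if_neg h1] at hcardD ⊢
      split <;> omega
  · rw [hsum, majStat, ← hD]
    by_cases h1 : (k : ℕ) ∈ D
    · simp only [if_pos h1, if_pos (hkD h1)] at hsumD hcardD ⊢
      omega
    · simp only [if_neg h1] at hsumD ⊢
      by_cases hkn : (k : ℕ) < n
      · simp only [if_pos hkn]
        omega
      · have hC0 : C = ∅ := Finset.filter_false_of_mem fun t ht => by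
          have := hsub ht; simp only [mem_Ico] at this; omega
        simp only [if_neg hkn, hC0, Finset.sum_empty, Finset.card_empty] at hsumD ⊢
        omega

noncomputable def Pfac (n a : ℕ) : PP :=
  (∑ j ∈ range (a+1), qP ^ j) + xP * ∑ j ∈ Icc (a+1) n, qP ^ j

noncomputable def gA (n : ℕ) (e : Equiv.Perm (Fin n)) (j : ℕ) : PP :=
  if j ∈ desSet (fun i => e i) then
    xP ^ desStat (fun i => e i)
      * qP ^ (majStat (fun i => e i) + 1 + ((desSet fun i => e i).filter fun t => j < t).card)
  else if j < n then
    xP ^ (desStat (fun i => e i) + 1)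
      * qP ^ (majStat (fun i => e i) + j + 1 + ((desSet fun i => e i).filter fun t => j < t).card)
  else xP ^ desStat (fun i => e i) * qP ^ majStat (fun i => e i)

lemma lemA {n : ℕ} (e : Equiv.Perm (Fin n)) :
    ∑ k : Fin (n+1), xP ^ desStat (fun j => mk2 k e j) * qP ^ majStat (fun j => mk2 k e j)
      = xP ^ desStat (fun j => e j) * qP ^ majStat (fun j => e j)
          * Pfac n (desStat (fun j => e j)) := by
  have hsub : desSet (fun j => e j) ⊆ Ico 1 n := desSet_subset _
  have hstep : ∀ k : Fin (n+1),
      xP ^ desStat (fun j => mk2 k e j) * qP ^ majStat (fun j => mk2 k e j) = gA n e (k : ℕ) := by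
    intro k
    obtain ⟨h1, h2⟩ := stat_mk2 k e
    rw [h1, h2, gA]
    by_cases hkD : (k : ℕ) ∈ desSet (fun j => e j)
    · simp only [hkD, if_pos]
    · by_cases hkn : (k : ℕ) < n <;> simp only [hkD, if_neg, if_pos, hkn, if_true, if_false]
  rw [Finset.sum_congr rfl (fun k _ => hstep k), Fin.sum_univ_eq_sum_range (gA n e) (n+1)]
  rw [Finset.sum_range_succ]
  have hlast : gA n e n = xP ^ desStat (fun j => e j) * qP ^ majStat (fun j => e j) := by
    rw [gA, if_neg (fun h => by have := hsub h; simp only [mem_Ico] at this; omega),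
      if_neg (lt_irrefl n)]
  rw [hlast]
  rw [← Finset.sum_filter_add_sum_filter_not (range n) (· ∈ desSet (fun j => e j))]
  have hfilter : (range n).filter (· ∈ desSet (fun j => e j)) = desSet (fun j => e j) := by
    rw [Finset.filter_mem_eq_inter, Finset.inter_eq_right]
    intro t ht
    have := hsub ht
    simp only [mem_Ico] at this
    simp only [mem_range]
    omega
  rw [hfilter]
  have hsum1 : ∑ j ∈ desSet (fun j => e j), gA n e j
      = ∑ t ∈ range (desSet (fun j => e j)).card,
          xP ^ desStat (fun j => e j) * qP ^ (majStat (fun j => e j) + 1 + t) := by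
    rw [Finset.sum_congr rfl (fun j hj => by rw [gA, if_pos hj])]
    exact sum_dgt_image _ hsub
      (fun t => xP ^ desStat (fun j => e j) * qP ^ (majStat (fun j => e j) + 1 + t))
  have hsum2 : ∑ j ∈ (range n).filter (· ∉ desSet (fun j => e j)), gA n e j
      = ∑ t ∈ Icc ((desSet (fun j => e j)).card + 1) n,
          xP ^ (desStat (fun j => e j) + 1) * qP ^ (majStat (fun j => e j) + t) := by
    rw [Finset.sum_congr rfl (fun j hj => ?_)]
    · exact sum_K_image _ hsub
        (fun t => xP ^ (desStat (fun j => e j) + 1) * qP ^ (majStat (fun j => e j) + t))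
    · simp only [mem_filter, mem_range] at hj
      rw [gA, if_neg hj.2, if_pos hj.1,
        show majStat (fun j => e j) + j + 1 + ((desSet fun j => e j).filter fun t => j < t).card
          = majStat (fun j => e j) + (j + 1 + ((desSet fun j => e j).filter fun t => j < t).card) by omega]
  rw [hsum1, hsum2]
  rw [Pfac, desStat]
  rw [Finset.sum_range_succ']
  have e1 : ∀ t : ℕ, xP ^ (desSet fun j => e j).card * qP ^ (majStat (fun j => e j) + 1 + t)
      = xP ^ (desSet fun j => e j).card * qP ^ majStat (fun j => e j) * qP ^ (t + 1) := by
    intro t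
    rw [show majStat (fun j => e j) + 1 + t = majStat (fun j => e j) + (t + 1) by omega, pow_add]
    ring
  have e2 : ∀ t : ℕ, xP ^ ((desSet fun j => e j).card + 1) * qP ^ (majStat (fun j => e j) + t)
      = xP ^ (desSet fun j => e j).card * qP ^ majStat (fun j => e j) * (xP * qP ^ t) := by
    intro t
    rw [pow_add, pow_add]
    ring
  rw [Finset.sum_congr rfl (fun t _ => e1 t), Finset.sum_congr rfl (fun t _ => e2 t)]
  rw [← Finset.mul_sum, ← Finset.mul_sum]
  rw [← Finset.mul_sum, pow_zero]
  ring

lemma stc_mk1 {n : ℕ} (p : Fin (n+1)) (e : Equiv.Perm (Fin n)) :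
    stcStat (fun j => mk1 p e j)
      = stcStat (fun j => e j) + (if stcStat (fun j => e j) < (p : ℕ) then 1 else 0) := by
  have hl : (lehmer fun j => mk1 p e j)
      = fun i => Fin.cases (motive := fun _ => ℕ) (p : ℕ) (lehmer fun j => e j) i := by
    funext i
    induction i using Fin.cases with
    | zero => simpa using lehmer_mk1_zero p e
    | succ j => simpa using lehmer_mk1_succ p e j
  rw [stcStat, hl, stcWord_cases, stcStat]

lemma inv_mk1 {n : ℕ} (p : Fin (n+1)) (e : Equiv.Perm (Fin n)) :
    invStat (fun j => mk1 p e j) = invStat (fun j => e j) + (p : ℕ) := by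
  rw [invStat_eq_sum_lehmer, Fin.sum_univ_succ, lehmer_mk1_zero,
    Finset.sum_congr rfl (fun i _ => lehmer_mk1_succ p e i), ← invStat_eq_sum_lehmer]
  omega

noncomputable def gB (n : ℕ) (e : Equiv.Perm (Fin n)) (j : ℕ) : PP :=
  xP ^ (stcStat (fun i => e i) + if stcStat (fun i => e i) < j then 1 else 0)
    * qP ^ (invStat (fun i => e i) + j)

lemma lemB {n : ℕ} (e : Equiv.Perm (Fin n)) :
    ∑ p : Fin (n+1), xP ^ stcStat (fun j => mk1 p e j) * qP ^ invStat (fun j => mk1 p e j)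
      = xP ^ stcStat (fun j => e j) * qP ^ invStat (fun j => e j)
          * Pfac n (stcStat (fun j => e j)) := by
  have hs : stcStat (fun j => e j) ≤ n := stcWord_le _
  have hstep : ∀ p : Fin (n+1),
      xP ^ stcStat (fun j => mk1 p e j) * qP ^ invStat (fun j => mk1 p e j) = gB n e (p : ℕ) := by
    intro p
    rw [stc_mk1, inv_mk1, gB]
  rw [Finset.sum_congr rfl (fun p _ => hstep p), Fin.sum_univ_eq_sum_range (gB n e) (n+1)]
  rw [Finset.range_eq_Ico,
    ← Finset.sum_Ico_consecutive _ (Nat.zero_le (stcStat (fun j => e j) + 1))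
      (by omega : stcStat (fun j => e j) + 1 ≤ n + 1)]
  have h1 : ∑ j ∈ Ico 0 (stcStat (fun j => e j) + 1), gB n e j
      = ∑ j ∈ range (stcStat (fun j => e j) + 1),
          xP ^ stcStat (fun j => e j) * qP ^ (invStat (fun j => e j) + j) := by
    rw [← Finset.range_eq_Ico]
    refine Finset.sum_congr rfl fun j hj => ?_
    simp only [mem_range] at hj
    rw [gB, if_neg (by omega), add_zero]
  have h2 : ∑ j ∈ Ico (stcStat (fun j => e j) + 1) (n+1), gB n e j
      = ∑ j ∈ Icc (stcStat (fun j => e j) + 1) n,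
          xP ^ (stcStat (fun j => e j) + 1) * qP ^ (invStat (fun j => e j) + j) := by
    rw [Finset.Ico_add_one_right_eq_Icc]
    refine Finset.sum_congr rfl fun j hj => ?_
    simp only [mem_Icc] at hj
    rw [gB, if_pos (by omega)]
  rw [h1, h2, Pfac]
  have e1 : ∀ j : ℕ, xP ^ stcStat (fun j => e j) * qP ^ (invStat (fun j => e j) + j)
      = xP ^ stcStat (fun j => e j) * qP ^ invStat (fun j => e j) * qP ^ j := by
    intro j; rw [pow_add]; ring
  have e2 : ∀ j : ℕ, xP ^ (stcStat (fun j => e j) + 1) * qP ^ (invStat (fun j => e j) + j)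
      = xP ^ stcStat (fun j => e j) * qP ^ invStat (fun j => e j) * (xP * qP ^ j) := by
    intro j; rw [pow_add, pow_add]; ring
  rw [Finset.sum_congr rfl (fun j _ => e1 j), Finset.sum_congr rfl (fun j _ => e2 j)]
  rw [← Finset.mul_sum, ← Finset.mul_sum, ← Finset.mul_sum]
  ring

noncomputable def Lmap (P : ℕ → PP) : PP →+ PP where
  toFun f := f.sum fun a g => Polynomial.C g * Polynomial.X ^ a * P a
  map_zero' := Polynomial.sum_zero_index _
  map_add' f g := Polynomial.sum_add_index f g
    (fun a c => Polynomial.C c * Polynomial.X ^ a * P a)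
    (fun a => by simp) (fun a b₁ b₂ => by rw [map_add, add_mul, add_mul])

lemma Lmap_apply (P : ℕ → PP) (f : PP) :
    Lmap P f = f.sum fun a g => Polynomial.C g * Polynomial.X ^ a * P a := rfl

lemma Lmap_monomial (P : ℕ → PP) (a b : ℕ) :
    Lmap P (xP ^ a * qP ^ b) = xP ^ a * qP ^ b * P a := by
  have h : xP ^ a * qP ^ b = Polynomial.monomial a (Polynomial.X ^ b : Polynomial ℤ) := by
    rw [xP, qP, ← Polynomial.C_pow, mul_comm, Polynomial.C_mul_X_pow_eq_monomial]
  rw [h, Lmap_apply, Polynomial.sum_monomial_index _ _ (by simp),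
    ← Polynomial.C_mul_X_pow_eq_monomial]

theorem main (n : ℕ) :
    (∑ σ : Equiv.Perm (Fin n), xP ^ desStat (fun i => σ i) * qP ^ majStat (fun i => σ i))
      = ∑ σ : Equiv.Perm (Fin n), xP ^ stcStat (fun i => σ i) * qP ^ invStat (fun i => σ i) := by
  induction n with
  | zero =>
    refine Finset.sum_congr rfl fun σ _ => ?_
    have h1 : desSet (fun i : Fin 0 => σ i) = ∅ := by
      rw [desSet, Finset.Ico_eq_empty (by omega), Finset.filter_empty]
    have h2 : invStat (fun i : Fin 0 => σ i) = 0 := by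
      rw [invStat, Finset.card_eq_zero]
      apply Finset.eq_empty_of_forall_notMem
      rintro ⟨a, b⟩ -
      exact a.elim0
    have h3 : stcStat (fun i : Fin 0 => σ i) = 0 := Nat.le_zero.mp (stcWord_le _)
    rw [desStat, majStat, h1, h2, h3]
    simp
  | succ n ih =>
    rw [← Fintype.sum_bijective _ mk2_bijective
        (fun ke : Fin (n+1) × Equiv.Perm (Fin n) =>
          xP ^ desStat (fun i => mk2 ke.1 ke.2 i) * qP ^ majStat (fun i => mk2 ke.1 ke.2 i))
        _ (fun ke => rfl),
      ← Fintype.sum_bijective _ mk1_bijective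
        (fun pe : Fin (n+1) × Equiv.Perm (Fin n) =>
          xP ^ stcStat (fun i => mk1 pe.1 pe.2 i) * qP ^ invStat (fun i => mk1 pe.1 pe.2 i))
        _ (fun pe => rfl)]
    rw [Fintype.sum_prod_type_right, Fintype.sum_prod_type_right]
    dsimp only
    rw [Finset.sum_congr rfl (fun e _ => lemA e), Finset.sum_congr rfl (fun e _ => lemB e)]
    have h1 : ∑ e : Equiv.Perm (Fin n),
        xP ^ desStat (fun j => e j) * qP ^ majStat (fun j => e j) * Pfac n (desStat (fun j => e j))
        = Lmap (Pfac n) (∑ e : Equiv.Perm (Fin n),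
            xP ^ desStat (fun j => e j) * qP ^ majStat (fun j => e j)) := by
      rw [map_sum]
      exact Finset.sum_congr rfl fun e _ => (Lmap_monomial _ _ _).symm
    have h2 : ∑ e : Equiv.Perm (Fin n),
        xP ^ stcStat (fun j => e j) * qP ^ invStat (fun j => e j) * Pfac n (stcStat (fun j => e j))
        = Lmap (Pfac n) (∑ e : Equiv.Perm (Fin n),
            xP ^ stcStat (fun j => e j) * qP ^ invStat (fun j => e j)) := by
      rw [map_sum]
      exact Finset.sum_congr rfl fun e _ => (Lmap_monomial _ _ _).symm
    rw [h1, h2, ih]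

end Skandera

/-- Skandera: `(des, maj)` and `(stc, inv)` are equidistributed on `S_n`. -/
theorem stc_inv_equidistributed_des_maj (n : ℕ) (hn : 0 < n) :
    ∑ σ : Equiv.Perm (Fin n),
        xP ^ desStat (fun i => σ i) * qP ^ majStat (fun i => σ i) =
      ∑ σ : Equiv.Perm (Fin n),
        xP ^ stcStat (fun i => σ i) * qP ^ invStat (fun i => σ i) :=
  Skandera.main n
end

section
/- Let rho = (rho_1, rho_2) be a composition of N and R = {rho_1}. For every permutation w in the quotient S_N^R = {w in S_N : Des(w) ⊆ {rho_1}}, the statistic stc(w) equals the number of positions i in [rho_1] with w(i) > rho_1, i.e., the number of elements from [rho_1+1, N] appearing among the first rho_1 values. -/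
open Finset

/-- Permutations of the multiset `{1^{ρ_1}, …, m^{ρ_m}}`, as words of length `N`
in the alphabet `Fin m` with `ρ_j` occurrences of the letter `j`. -/
def multisetPerms (m N : ℕ) (rho : Fin m → ℕ) : Finset (Fin N → Fin m) :=
  Finset.univ.filter fun w => ∀ j : Fin m, (Finset.univ.filter fun i => w i = j).card = rho j

/-- The set `R = {r_1, …, r_{m-1}}` of partial sums `r_i = ρ_1 + ⋯ + ρ_i` of a composition. -/
def partialSums (m : ℕ) (rho : Fin m → ℕ) : Finset ℕ :=
  (Finset.range (m - 1)).image fun k =>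
    ∑ j ∈ Finset.univ.filter (fun j : Fin m => (j : ℕ) ≤ k), rho j

/-- The quotient `S_N^R = {σ ∈ S_N : Des σ ⊆ R}`. -/
def quotientByR (N : ℕ) (R : Finset ℕ) : Finset (Equiv.Perm (Fin N)) :=
  Finset.univ.filter fun σ => desSet (fun i => σ i) ⊆ R

/-- Standardisation of a multiset word: position `i` receives the rank of
the pair `(w i, i)` in lexicographic order; equivalently, the `ρ_1` letters `1` are
replaced, left to right, by `1, …, ρ_1`, the `ρ_2` letters `2` by `ρ_1 + 1, …, ρ_1 + ρ_2`,
and so on.  It is the inverse of the permutation sorting the (injective) key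
`i ↦ (w i, i)`. -/
def stdPerm {m N : ℕ} (w : Fin N → Fin m) : Equiv.Perm (Fin N) :=
  (Tuple.sort fun i => toLex (w i, i))⁻¹

section StcAux

open Finset

variable {N rho1 : ℕ} (σ : Equiv.Perm (Fin N))

lemma adj_step (hσ : desSet (fun i => σ i) ⊆ {rho1})
    (p : ℕ) (hp : p + 1 < N) (hne : p + 1 ≠ rho1) :
    σ ⟨p, by omega⟩ < σ ⟨p + 1, hp⟩ := by
  by_contra h
  push_neg at h
  have hne' : σ ⟨p + 1, hp⟩ ≠ σ ⟨p, by omega⟩ := by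
    intro he
    have := σ.injective he
    simp [Fin.ext_iff] at this
  have hlt : σ ⟨p + 1, hp⟩ < σ ⟨p, by omega⟩ := lt_of_le_of_ne h hne'
  have hmem : p + 1 ∈ desSet (fun i => σ i) := by
    simp only [desSet, mem_filter, mem_Ico]
    exact ⟨⟨by omega, hp⟩, hp, hlt⟩
  have := hσ hmem
  simp only [Finset.mem_singleton] at this
  exact hne this

lemma mono_seg (hσ : desSet (fun i => σ i) ⊆ {rho1}) :
    ∀ (b : ℕ) (hb : b < N) (a : ℕ) (ha : a < N), a < b →
      (∀ p, a < p → p ≤ b → p ≠ rho1) → σ ⟨a, ha⟩ < σ ⟨b, hb⟩ := by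
  intro b
  induction b with
  | zero => omega
  | succ u ih =>
    intro hb a ha hab hav
    have hstep : σ ⟨u, by omega⟩ < σ ⟨u + 1, hb⟩ :=
      adj_step σ hσ u hb (hav (u + 1) (by omega) le_rfl)
    rcases Nat.lt_or_ge a u with h | h
    · exact (ih (by omega) a ha h (fun p hp hp' => hav p hp (by omega))).trans hstep
    · have : a = u := by omega
      subst this
      exact hstep

lemma mono_first (hσ : desSet (fun i => σ i) ⊆ {rho1}) (i j : Fin N)
    (hij : i < j) (hj : (j : ℕ) < rho1) : σ i < σ j := by
  have := mono_seg σ hσ j j.isLt i i.isLt hij (fun p hp hp' => by omega)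
  simpa using this

lemma mono_second (hσ : desSet (fun i => σ i) ⊆ {rho1}) (i j : Fin N)
    (hij : i < j) (hi : rho1 ≤ (i : ℕ)) : σ i < σ j := by
  have := mono_seg σ hσ j j.isLt i i.isLt hij (fun p hp hp' => by omega)
  simpa using this

lemma lehmer_second (hσ : desSet (fun i => σ i) ⊆ {rho1}) (i : Fin N)
    (hi : rho1 ≤ (i : ℕ)) : lehmer (fun i => σ i) i = 0 := by
  rw [lehmer, Finset.card_eq_zero, Finset.filter_eq_empty_iff]
  intro j _
  rintro ⟨hij, hlt⟩
  exact absurd hlt (not_lt.2 (le_of_lt (mono_second σ hσ i j hij hi)))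

lemma lehmer_first (hσ : desSet (fun i => σ i) ⊆ {rho1}) (i : Fin N)
    (hi : (i : ℕ) < rho1) : (σ i : ℕ) = (i : ℕ) + lehmer (fun i => σ i) i := by
  classical
  have hT : (Finset.univ.filter fun j : Fin N => σ j < σ i).card = (σ i : ℕ) := by
    rw [show (Finset.univ.filter fun j : Fin N => σ j < σ i)
        = (Finset.Iio (σ i)).map σ.symm.toEmbedding from by
      ext j; simp [Finset.mem_map, Equiv.symm_apply_eq]]
    rw [Finset.card_map, Fin.card_Iio]
  have hsplit : (Finset.univ.filter fun j : Fin N => σ j < σ i)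
      = (Finset.univ.filter fun j : Fin N => j < i)
        ∪ (Finset.univ.filter fun j : Fin N => i < j ∧ σ j < σ i) := by
    ext j
    simp only [mem_filter, mem_union, mem_univ, true_and]
    constructor
    · intro h
      rcases lt_trichotomy j i with hj | rfl | hj
      · exact Or.inl hj
      · exact absurd h (lt_irrefl _)
      · exact Or.inr ⟨hj, h⟩
    · rintro (hj | ⟨_, h⟩)
      · exact mono_first σ hσ j i hj hi
      · exact h
  have hdis : Disjoint (Finset.univ.filter fun j : Fin N => j < i)
      (Finset.univ.filter fun j : Fin N => i < j ∧ σ j < σ i) := by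
    rw [Finset.disjoint_left]
    intro j hj hj'
    simp only [mem_filter, mem_univ, true_and] at hj hj'
    exact absurd hj'.1 (not_lt.2 hj.le)
  have hT1 : (Finset.univ.filter fun j : Fin N => j < i).card = (i : ℕ) := by
    rw [show (Finset.univ.filter fun j : Fin N => j < i) = Finset.Iio i from by ext j; simp]
    exact Fin.card_Iio i
  rw [hsplit, Finset.card_union_of_disjoint hdis, hT1] at hT
  rw [lehmer]
  omega

lemma sm_add {k : ℕ} (h : Fin k → ℕ) (hm : StrictMono h) :
    ∀ (t : ℕ) (ht : t < k) (s : ℕ) (hs : s < k), s ≤ t →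
      h ⟨s, hs⟩ + (t - s) ≤ h ⟨t, ht⟩ := by
  intro t
  induction t with
  | zero =>
    intro ht s hs hst
    have : s = 0 := by omega
    subst this
    simp
  | succ u ih =>
    intro ht s hs hst
    rcases Nat.lt_or_ge s (u + 1) with h' | h'
    · have hih := ih (by omega) s hs (by omega)
      have hlt : h ⟨u, by omega⟩ < h ⟨u + 1, ht⟩ := hm (by simp [Fin.lt_def])
      omega
    · have : s = u + 1 := by omega
      subst this
      simp

end StcAux

/-- For `ρ = (ρ_1, ρ_2)` and `σ` in the quotient `S_N^{{ρ_1}}`, the statistic `stc σ`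
equals the number of positions `i` among the first `ρ_1` (i.e. `(i:ℕ) < ρ_1`) whose value
exceeds `ρ_1` (with `0`-based values: `ρ_1 ≤ σ i`). -/
theorem stc_on_two_block_quotient_eq_card
    (rho1 rho2 N : ℕ) (h1 : 0 < rho1) (h2 : 0 < rho2) (hN : rho1 + rho2 = N)
    (σ : Equiv.Perm (Fin N)) (hσ : desSet (fun i => σ i) ⊆ {rho1}) :
    stcStat (fun i => σ i) =
      (Finset.univ.filter fun i : Fin N => (i : ℕ) < rho1 ∧ rho1 ≤ (σ i : ℕ)).card := by
  classical
  set c : Fin N → ℕ := lehmer (fun i => σ i) with hc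
  set B : Finset (Fin N) :=
    Finset.univ.filter (fun i : Fin N => (i : ℕ) < rho1 ∧ rho1 ≤ (σ i : ℕ)) with hB
  -- upper bound
  have upper : ∀ r, hasStaircase c r → r ≤ B.card := by
    intro r hr
    obtain ⟨f, hf, hst⟩ := hr
    rcases Nat.eq_zero_or_pos r with rfl | hrpos
    · exact Nat.zero_le _
    have hblock : ∀ t : Fin r, (f t : ℕ) < rho1 := by
      intro t
      by_contra hcon
      push_neg at hcon
      have hz : c (f t) = 0 := lehmer_second σ hσ (f t) hcon
      have := hst t
      rw [hz] at this
      have := t.isLt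
      omega
    have h0 : r ≤ c (f ⟨0, hrpos⟩) := by
      have := hst ⟨0, hrpos⟩
      simp only [Fin.val_mk] at this
      omega
    by_cases hbig : rho1 ≤ (σ (f ⟨0, hrpos⟩) : ℕ)
    · have hmem : ∀ t : Fin r, f t ∈ B := by
        intro t
        simp only [hB, Finset.mem_filter, Finset.mem_univ, true_and]
        refine ⟨hblock t, ?_⟩
        rcases eq_or_lt_of_le (hf.monotone
            (show (⟨0, hrpos⟩ : Fin r) ≤ t from Fin.le_def.mpr (Nat.zero_le _))) with he | hlt
        · rw [← he]; exact hbig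
        · exact le_trans hbig (le_of_lt (mono_first σ hσ _ _ hlt (hblock t)))
      calc r = (Finset.univ : Finset (Fin r)).card := by simp
        _ ≤ B.card := Finset.card_le_card_of_injOn f (fun t _ => hmem t)
            (hf.injective.injOn)
    · push_neg at hbig
      set f0 : Fin N := f ⟨0, hrpos⟩ with hf0def
      have hf0 : (f0 : ℕ) < rho1 := hblock _
      have hval : (σ f0 : ℕ) = (f0 : ℕ) + c f0 := lehmer_first σ hσ f0 hf0
      set R1 : Fin N := ⟨rho1, by omega⟩ with hR1
      have hA : (Finset.Ico f0 R1).card = rho1 - (f0 : ℕ) := by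
        rw [Fin.card_Ico]
      have hsplit := Finset.card_filter_add_card_filter_not
        (s := Finset.Ico f0 R1) (p := fun j => rho1 ≤ (σ j : ℕ))
      have hBsub : ((Finset.Ico f0 R1).filter fun j => rho1 ≤ (σ j : ℕ)) ⊆ B := by
        intro j hj
        simp only [Finset.mem_filter, Finset.mem_Ico] at hj
        simp only [hB, Finset.mem_filter, Finset.mem_univ, true_and]
        exact ⟨hj.1.2, hj.2⟩
      have hVcard : ((Finset.Ico f0 R1).filter fun j => ¬ rho1 ≤ (σ j : ℕ)).card
          ≤ rho1 - (σ f0 : ℕ) := by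
        have := Finset.card_le_card_of_injOn (f := fun j : Fin N => (σ j : ℕ))
          (s := (Finset.Ico f0 R1).filter fun j => ¬ rho1 ≤ (σ j : ℕ))
          (t := Finset.Ico (σ f0 : ℕ) rho1) ?_ ?_
        · simpa [Nat.card_Ico] using this
        · intro j hj
          simp only [Finset.mem_coe, Finset.mem_filter, Finset.mem_Ico, not_le] at hj
          simp only [Finset.mem_coe, Finset.mem_Ico]
          refine ⟨?_, hj.2⟩
          rcases eq_or_lt_of_le hj.1.1 with he | hlt
          · rw [he]
          · exact le_of_lt (mono_first σ hσ f0 j hlt (by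
              have := hj.1.2
              simpa [Fin.lt_def, hR1] using this))
        · intro a _ b _ hab
          exact σ.injective (Fin.val_injective hab)
      have hle : (f0 : ℕ) < R1 := hf0
      have hk := Finset.card_le_card hBsub
      -- combine
      have : rho1 - (f0 : ℕ) ≤ B.card + (rho1 - (σ f0 : ℕ)) := by omega
      omega
  -- lower bound
  have lower : hasStaircase c B.card := by
    set k := B.card with hk
    let g : Fin k ≃o {x // x ∈ B} := B.orderIsoOfFin hk.symm
    refine ⟨fun t => (g t : Fin N), ?_, ?_⟩
    · intro a b hab
      exact Subtype.coe_lt_coe.mpr (g.strictMono hab)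
    · intro t
      have hkpos : 0 < k := lt_of_le_of_lt (Nat.zero_le _) t.isLt
      have hmem : ∀ s : Fin k, ((g s : Fin N) : ℕ) < rho1 ∧ rho1 ≤ ((σ (g s : Fin N)) : ℕ) := by
        intro s
        exact (Finset.mem_filter.mp (g s).2).2
      have hgmono : StrictMono (fun s : Fin k => ((g s : Fin N) : ℕ)) := by
        intro a b hab
        exact Fin.lt_def.mp (Subtype.coe_lt_coe.mpr (g.strictMono hab))
      have hsmono : StrictMono (fun s : Fin k => ((σ (g s : Fin N)) : ℕ)) := by
        intro a b hab
        exact Fin.lt_def.mp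
          (mono_first σ hσ _ _ (Subtype.coe_lt_coe.mpr (g.strictMono hab)) (hmem b).1)
      have e1 := sm_add _ hsmono (t : ℕ) t.isLt 0 hkpos (Nat.zero_le _)
      have e2 := sm_add _ hgmono (k - 1) (by omega) (t : ℕ) t.isLt (by omega)
      have e3 : ((σ (g ⟨0, hkpos⟩ : Fin N)) : ℕ) ≥ rho1 := (hmem ⟨0, hkpos⟩).2
      have e4 : ((g ⟨k - 1, by omega⟩ : Fin N) : ℕ) < rho1 := (hmem ⟨k - 1, by omega⟩).1
      have hval : ((σ (g t : Fin N)) : ℕ) = ((g t : Fin N) : ℕ) + c (g t : Fin N) :=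
        lehmer_first σ hσ _ (hmem t).1
      have ht : (t : ℕ) < k := t.isLt
      simp only [Fin.eta] at e1 e2
      show k < c ((g t : Fin N)) + (t : ℕ) + 1
      omega
  have hne : Set.Nonempty {r | hasStaircase c r} := ⟨B.card, lower⟩
  have hbdd : BddAbove {r | hasStaircase c r} := ⟨B.card, fun r hr => upper r hr⟩
  show stcWord c = B.card
  exact le_antisymm (csSup_le hne upper) (le_csSup hbdd lower)
end

section
/- Let r be an odd positive integer, rho = (r,r), N = 2r, and R = {r}. Then the polynomial C_rho(x,q) = sum over w in S_N^R of x^{stc(w)} q^{inv(w)} is divisible by (1 + x q^r) in Z[x,q]. -/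
open Finset

namespace CRho
variable {r : ℕ}

lemma card_compl_eq {A : Finset (Fin (2*r))} (hA : A.card = r) : Aᶜ.card = r := by
  rw [Finset.card_compl, hA]
  simp; omega

def wA (A : Finset (Fin (2*r))) (hA : A.card = r) : Fin (2*r) → Fin (2*r) := fun i =>
  if h : (i:ℕ) < r then A.orderEmbOfFin hA ⟨(i:ℕ), h⟩
  else Aᶜ.orderEmbOfFin (card_compl_eq hA) ⟨(i:ℕ) - r, by have := i.isLt; omega⟩

lemma wA_mem_iff {A : Finset (Fin (2*r))} (hA : A.card = r) (i : Fin (2*r)) :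
    wA A hA i ∈ A ↔ (i:ℕ) < r := by
  unfold wA
  by_cases h : (i:ℕ) < r
  · simp [h]
  · simp only [h, dif_neg, iff_false]
    have h2 : Aᶜ.orderEmbOfFin (card_compl_eq hA) ⟨(i:ℕ) - r, by have := i.isLt; omega⟩ ∈ Aᶜ :=
      Finset.orderEmbOfFin_mem _ _ _
    exact Finset.mem_compl.mp h2

lemma wA_mono1 {A : Finset (Fin (2*r))} (hA : A.card = r) {i j : Fin (2*r)}
    (hij : i < j) (hj : (j:ℕ) < r) : wA A hA i < wA A hA j := by
  have hi : (i:ℕ) < r := lt_trans hij hj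
  unfold wA
  simp only [hi, hj, dif_pos]
  exact (A.orderEmbOfFin hA).strictMono (by exact hij)

lemma wA_mono2 {A : Finset (Fin (2*r))} (hA : A.card = r) {i j : Fin (2*r)}
    (hij : i < j) (hi : r ≤ (i:ℕ)) : wA A hA i < wA A hA j := by
  have hj : r ≤ (j:ℕ) := le_trans hi (le_of_lt hij)
  unfold wA
  simp only [not_lt.2 hi, not_lt.2 hj, dif_neg, not_lt]
  exact (Aᶜ.orderEmbOfFin (card_compl_eq hA)).strictMono (by
    simp only [Fin.mk_lt_mk]
    omega)

lemma wA_inj {A : Finset (Fin (2*r))} (hA : A.card = r) : Function.Injective (wA A hA) := by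
  intro i j hij
  by_contra hne
  rcases Ne.lt_or_gt (fun h : i = j => hne h) with h | h
  · rcases lt_or_ge (j:ℕ) r with hj | hj
    · exact absurd hij (ne_of_lt (wA_mono1 hA h hj))
    · rcases lt_or_ge (i:ℕ) r with hi | hi
      · have h1 : wA A hA i ∈ A := (wA_mem_iff hA i).2 hi
        have h2 : ¬ (wA A hA j ∈ A) := by
          rw [wA_mem_iff hA j]; omega
        rw [hij] at h1; exact h2 h1
      · exact absurd hij (ne_of_lt (wA_mono2 hA h hi))
  · rcases lt_or_ge (i:ℕ) r with hi | hi
    · exact absurd hij.symm (ne_of_lt (wA_mono1 hA h hi))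
    · rcases lt_or_ge (j:ℕ) r with hj | hj
      · have h1 : wA A hA j ∈ A := (wA_mem_iff hA j).2 hj
        have h2 : ¬ (wA A hA i ∈ A) := by
          rw [wA_mem_iff hA i]; omega
        rw [← hij] at h1; exact h2 h1
      · exact absurd hij.symm (ne_of_lt (wA_mono2 hA h hj))

noncomputable def permA (A : Finset (Fin (2*r))) (hA : A.card = r) : Equiv.Perm (Fin (2*r)) :=
  Equiv.ofBijective (wA A hA) (Finite.injective_iff_bijective.mp (wA_inj hA))

lemma permA_apply (A : Finset (Fin (2*r))) (hA : A.card = r) (i : Fin (2*r)) :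
    permA A hA i = wA A hA i := rfl


/-! ### Counting lemmas -/

lemma card_val_lt {n : ℕ} (m : ℕ) (hm : m ≤ n) :
    ((univ : Finset (Fin n)).filter fun v : Fin n => (v:ℕ) < m).card = m := by
  have : ((univ : Finset (Fin n)).filter fun v : Fin n => (v:ℕ) < m)
      = Finset.map (Fin.castLEEmb hm) univ := by
    ext v
    simp only [mem_filter, mem_univ, true_and, Finset.mem_map, Fin.castLEEmb]
    constructor
    · intro hv
      exact ⟨⟨(v:ℕ), hv⟩, by ext; simp [Fin.castLE]⟩
    · rintro ⟨a, rfl⟩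
      simpa using a.isLt
  rw [this, Finset.card_map, Finset.card_univ, Fintype.card_fin]

lemma filter_split {n : ℕ} (A : Finset (Fin n)) (p : Fin n → Prop) [DecidablePred p] :
    (A.filter p).card + (Aᶜ.filter p).card = ((univ : Finset (Fin n)).filter p).card := by
  rw [← Finset.card_union_of_disjoint
    (Finset.disjoint_filter_filter disjoint_compl_right),
    ← Finset.filter_union, Finset.union_compl]

def kA (r : ℕ) (A : Finset (Fin (2*r))) : ℕ := (A.filter fun v : Fin (2*r) => r ≤ (v:ℕ)).card

lemma kA_add_bA {A : Finset (Fin (2*r))} (hA : A.card = r) :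
    kA r A + (A.filter fun v : Fin (2*r) => ¬ r ≤ (v:ℕ)).card = r := by
  rw [kA, Finset.card_filter_add_card_filter_not, hA]

lemma card_top_univ : ((univ : Finset (Fin (2*r))).filter fun v : Fin (2*r) => r ≤ (v:ℕ)).card = r := by
  have h1 : ((univ : Finset (Fin (2*r))).filter fun v : Fin (2*r) => r ≤ (v:ℕ)).card
      + ((univ : Finset (Fin (2*r))).filter fun v : Fin (2*r) => ¬ r ≤ (v:ℕ)).card = 2*r := by
    rw [Finset.card_filter_add_card_filter_not, Finset.card_univ, Fintype.card_fin]
  have h2 : ((univ : Finset (Fin (2*r))).filter fun v : Fin (2*r) => ¬ r ≤ (v:ℕ)).card = r := by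
    have : ((univ : Finset (Fin (2*r))).filter fun v : Fin (2*r) => ¬ r ≤ (v:ℕ))
        = ((univ : Finset (Fin (2*r))).filter fun v : Fin (2*r) => (v:ℕ) < r) := by
      apply Finset.filter_congr; intro v _; simp [Nat.not_le]
    rw [this, card_val_lt r (by omega)]
  omega

lemma compl_bottoms {A : Finset (Fin (2*r))} (hA : A.card = r) :
    (Aᶜ.filter fun v : Fin (2*r) => ¬ r ≤ (v:ℕ)).card = kA r A := by
  have h1 := filter_split A (fun v : Fin (2*r) => ¬ r ≤ (v:ℕ))
  have h2 : ((univ : Finset (Fin (2*r))).filter fun v : Fin (2*r) => ¬ r ≤ (v:ℕ)).card = r := by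
    have : ((univ : Finset (Fin (2*r))).filter fun v : Fin (2*r) => ¬ r ≤ (v:ℕ))
        = ((univ : Finset (Fin (2*r))).filter fun v : Fin (2*r) => (v:ℕ) < r) := by
      apply Finset.filter_congr; intro v _; simp [Nat.not_le]
    rw [this, card_val_lt r (by omega)]
  have h3 := kA_add_bA hA
  omega

/-! ### desSet of `wA` -/

lemma desSet_wA {A : Finset (Fin (2*r))} (hA : A.card = r) :
    desSet (wA A hA) ⊆ {r} := by
  intro i hi
  simp only [desSet, mem_filter, Finset.mem_Ico] at hi
  obtain ⟨⟨h1, h2⟩, h, hlt⟩ := hi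
  simp only [Finset.mem_singleton]
  by_contra hir
  rcases lt_or_ge i r with hiR | hiR
  · have : wA A hA ⟨i - 1, by omega⟩ < wA A hA ⟨i, h⟩ :=
      wA_mono1 hA (by simp only [Fin.mk_lt_mk]; omega) (by simpa using hiR)
    exact absurd hlt (not_lt.2 (le_of_lt this))
  · have hiR' : r ≤ i - 1 := by omega
    have : wA A hA ⟨i - 1, by omega⟩ < wA A hA ⟨i, h⟩ :=
      wA_mono2 hA (by simp only [Fin.mk_lt_mk]; omega) (by simpa using hiR')
    exact absurd hlt (not_lt.2 (le_of_lt this))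

/-! ### invStat of `wA` -/

def invA (r : ℕ) (A : Finset (Fin (2*r))) : ℕ :=
  ((A ×ˢ Aᶜ).filter fun p => p.2 < p.1).card

lemma wA_symm_apply {A : Finset (Fin (2*r))} (hA : A.card = r) (v : Fin (2*r)) :
    wA A hA ((permA A hA).symm v) = v := (permA A hA).apply_symm_apply v

lemma symm_wA_apply {A : Finset (Fin (2*r))} (hA : A.card = r) (i : Fin (2*r)) :
    (permA A hA).symm (wA A hA i) = i := (permA A hA).symm_apply_apply i

lemma inv_pos_block {A : Finset (Fin (2*r))} (hA : A.card = r) {i j : Fin (2*r)}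
    (hij : i < j) (hw : wA A hA j < wA A hA i) : (i:ℕ) < r ∧ r ≤ (j:ℕ) := by
  constructor
  · by_contra h
    exact absurd hw (not_lt.2 (le_of_lt (wA_mono2 hA hij (not_lt.1 h))))
  · by_contra h
    exact absurd hw (asymm (wA_mono1 hA hij (not_le.1 h)))

lemma invStat_wA {A : Finset (Fin (2*r))} (hA : A.card = r) :
    invStat (wA A hA) = invA r A := by
  classical
  rw [invStat, invA]
  apply Finset.card_bij' (fun p _ => (wA A hA p.1, wA A hA p.2))
    (fun q _ => ((permA A hA).symm q.1, (permA A hA).symm q.2))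
  · intro p hp
    simp only [mem_filter, mem_univ, true_and] at hp
    obtain ⟨hij, hw⟩ := hp
    obtain ⟨h1, h2⟩ := inv_pos_block hA hij hw
    simp only [mem_filter, Finset.mem_product, Finset.mem_compl]
    refine ⟨⟨(wA_mem_iff hA p.1).2 h1, ?_⟩, hw⟩
    rw [wA_mem_iff hA p.2]; omega
  · intro q hq
    simp only [mem_filter, Finset.mem_product, Finset.mem_compl] at hq
    obtain ⟨⟨hq1, hq2⟩, hlt⟩ := hq
    simp only [mem_filter, mem_univ, true_and]
    have e1 : wA A hA ((permA A hA).symm q.1) = q.1 := wA_symm_apply hA q.1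
    have e2 : wA A hA ((permA A hA).symm q.2) = q.2 := wA_symm_apply hA q.2
    have h1 : ((permA A hA).symm q.1 : ℕ) < r := by
      rw [← wA_mem_iff hA ((permA A hA).symm q.1), e1]; exact hq1
    have h2 : ¬ ((permA A hA).symm q.2 : ℕ) < r := by
      rw [← wA_mem_iff hA ((permA A hA).symm q.2), e2]; exact hq2
    refine ⟨?_, by rw [e1, e2]; exact hlt⟩
    rw [Fin.lt_def]; omega
  · intro p hp
    rw [symm_wA_apply hA, symm_wA_apply hA]
  · intro q hq
    rw [wA_symm_apply hA, wA_symm_apply hA]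

/-! ### Lehmer code of `wA` -/

lemma lehmer_wA_second {A : Finset (Fin (2*r))} (hA : A.card = r) {i : Fin (2*r)}
    (hi : r ≤ (i:ℕ)) : lehmer (wA A hA) i = 0 := by
  rw [lehmer, Finset.card_eq_zero, Finset.filter_eq_empty_iff]
  intro j _
  intro h
  exact absurd h.2 (not_lt.2 (le_of_lt (wA_mono2 hA h.1 hi)))

lemma lehmer_wA_first {A : Finset (Fin (2*r))} (hA : A.card = r) {i : Fin (2*r)}
    (hi : (i:ℕ) < r) :
    lehmer (wA A hA) i = (Aᶜ.filter fun b => b < wA A hA i).card := by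
  classical
  rw [lehmer]
  apply Finset.card_bij' (fun j _ => wA A hA j) (fun b _ => (permA A hA).symm b)
  · intro j hj
    simp only [mem_filter, mem_univ, true_and] at hj
    obtain ⟨hij, hw⟩ := hj
    obtain ⟨-, h2⟩ := inv_pos_block hA hij hw
    simp only [mem_filter, Finset.mem_compl]
    refine ⟨?_, hw⟩
    rw [wA_mem_iff hA j]; omega
  · intro b hb
    simp only [mem_filter, Finset.mem_compl] at hb
    obtain ⟨hb1, hb2⟩ := hb
    have e : wA A hA ((permA A hA).symm b) = b := wA_symm_apply hA b
    have h2 : ¬ ((permA A hA).symm b : ℕ) < r := by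
      rw [← wA_mem_iff hA ((permA A hA).symm b), e]; exact hb1
    simp only [mem_filter, mem_univ, true_and]
    refine ⟨?_, by rw [e]; exact hb2⟩
    rw [Fin.lt_def]; omega
  · intro j hj; exact symm_wA_apply hA j
  · intro b hb; exact wA_symm_apply hA b

lemma lehmer_wA_bottom_le {A : Finset (Fin (2*r))} (hA : A.card = r) {i : Fin (2*r)}
    (hi : (i:ℕ) < r) (hw : (wA A hA i : ℕ) < r) :
    lehmer (wA A hA) i ≤ kA r A := by
  rw [lehmer_wA_first hA hi, ← compl_bottoms hA]
  apply Finset.card_le_card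
  intro b hb
  simp only [mem_filter] at hb ⊢
  refine ⟨hb.1, ?_⟩
  have := hb.2
  rw [Fin.lt_def] at this
  omega

lemma lehmer_wA_top_ge {A : Finset (Fin (2*r))} (hA : A.card = r) {i : Fin (2*r)}
    (hi : (i:ℕ) < r) (hw : r ≤ (wA A hA i : ℕ)) :
    kA r A ≤ lehmer (wA A hA) i := by
  classical
  rw [lehmer_wA_first hA hi]
  set v := wA A hA i with hv
  have hsplit : (A.filter fun b : Fin (2*r) => b < v).card
      + (Aᶜ.filter fun b : Fin (2*r) => b < v).card = (v:ℕ) := by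
    rw [filter_split]
    have he : ((univ : Finset (Fin (2*r))).filter fun b : Fin (2*r) => b < v)
        = ((univ : Finset (Fin (2*r))).filter fun b : Fin (2*r) => (b:ℕ) < (v:ℕ)) := by
      apply Finset.filter_congr; intro b _; simp only [Fin.lt_def]
    rw [he, card_val_lt _ (le_of_lt v.isLt)]
  have hAside : (A.filter fun b : Fin (2*r) => b < v).card + kA r A ≤ (v:ℕ) := by
    have hsplit2 : (((A.filter fun b : Fin (2*r) => b < v)).filter fun b : Fin (2*r) => r ≤ (b:ℕ)).card
        + (((A.filter fun b : Fin (2*r) => b < v)).filter fun b : Fin (2*r) => ¬ r ≤ (b:ℕ)).card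
        = (A.filter fun b : Fin (2*r) => b < v).card :=
      Finset.card_filter_add_card_filter_not _
    have h1 : (((A.filter fun b : Fin (2*r) => b < v)).filter fun b : Fin (2*r) => ¬ r ≤ (b:ℕ)).card
        ≤ (A.filter fun b : Fin (2*r) => ¬ r ≤ (b:ℕ)).card := by
      apply Finset.card_le_card
      intro b hb
      simp only [mem_filter] at hb ⊢
      exact ⟨hb.1.1, hb.2⟩
    have h2 : (((A.filter fun b : Fin (2*r) => b < v)).filter fun b : Fin (2*r) => r ≤ (b:ℕ)).card
        ≤ (Finset.Ico r (v:ℕ)).card := by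
      apply Finset.card_le_card_of_injOn (fun b : Fin (2*r) => (b:ℕ))
      · intro b hb
        simp only [Finset.mem_coe, mem_filter, Finset.mem_Ico] at hb ⊢
        have := hb.1.2
        rw [Fin.lt_def] at this
        exact ⟨hb.2, this⟩
      · intro b1 _ b2 _ h
        exact Fin.val_injective h
    rw [Nat.card_Ico] at h2
    have h3 := kA_add_bA hA
    omega
  omega

/-! ### stc of `wA` -/

def TP (A : Finset (Fin (2*r))) (hA : A.card = r) : Finset (Fin (2*r)) :=
  univ.filter fun i : Fin (2*r) => (i:ℕ) < r ∧ r ≤ ((wA A hA i : Fin (2*r)) : ℕ)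

lemma card_TP {A : Finset (Fin (2*r))} (hA : A.card = r) :
    (TP A hA).card = kA r A := by
  classical
  apply Finset.card_bij (fun i _ => wA A hA i)
  · intro i hi
    simp only [TP, mem_filter, mem_univ, true_and] at hi
    simp only [kA, mem_filter]
    exact ⟨(wA_mem_iff hA i).2 hi.1, hi.2⟩
  · intro i1 h1 i2 h2 h
    exact wA_inj hA h
  · intro a ha
    simp only [kA, mem_filter] at ha
    refine ⟨(permA A hA).symm a, ?_, wA_symm_apply hA a⟩
    simp only [TP, mem_filter, mem_univ, true_and]
    constructor
    · rw [← wA_mem_iff hA ((permA A hA).symm a), wA_symm_apply hA a]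
      exact ha.1
    · rw [wA_symm_apply hA a]
      exact ha.2

lemma hasStaircase_kA {A : Finset (Fin (2*r))} (hA : A.card = r) :
    hasStaircase (lehmer (wA A hA)) (kA r A) := by
  refine ⟨⇑((TP A hA).orderEmbOfFin (card_TP hA)),
    ((TP A hA).orderEmbOfFin (card_TP hA)).strictMono, ?_⟩
  intro k
  set x := (TP A hA).orderEmbOfFin (card_TP hA) k with hx
  have hmem : x ∈ TP A hA := Finset.orderEmbOfFin_mem _ _ _
  rw [TP, mem_filter] at hmem
  have := lehmer_wA_top_ge hA hmem.2.1 hmem.2.2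
  omega

lemma staircase_le_kA {A : Finset (Fin (2*r))} (hA : A.card = r) (m : ℕ)
    (hm : hasStaircase (lehmer (wA A hA)) m) : m ≤ kA r A := by
  classical
  by_contra hlt
  push_neg at hlt
  obtain ⟨f, hmono, hstair⟩ := hm
  have hm1 : 0 < m := by omega
  obtain ⟨last, hlastv⟩ : ∃ x : Fin m, (x:ℕ) = m - 1 := ⟨⟨m-1, by omega⟩, rfl⟩
  obtain ⟨zero, hzerov⟩ : ∃ x : Fin m, (x:ℕ) = 0 := ⟨⟨0, hm1⟩, rfl⟩
  have h_last_lt_r : (f last : ℕ) < r := by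
    by_contra h
    have h0 := lehmer_wA_second hA (not_lt.1 h)
    have hst := hstair last
    rw [h0] at hst
    omega
  have hall_lt_r : ∀ k : Fin m, (f k : ℕ) < r := by
    intro k
    have hk2 := k.isLt
    have hk : k ≤ last := by
      rw [Fin.le_def, hlastv]; omega
    have := hmono.monotone hk
    rw [Fin.le_def] at this
    omega
  have hzero_top : r ≤ (wA A hA (f zero) : ℕ) := by
    by_contra h
    have hb := lehmer_wA_bottom_le hA (hall_lt_r zero) (not_le.1 h)
    have hst := hstair zero
    rw [hzerov] at hst
    omega
  have hmem_TP : ∀ k : Fin m, f k ∈ TP A hA := by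
    intro k
    simp only [TP, mem_filter, mem_univ, true_and]
    refine ⟨hall_lt_r k, ?_⟩
    rcases eq_or_lt_of_le (show zero ≤ k by rw [Fin.le_def, hzerov]; omega) with h | h
    · rw [← h]; exact hzero_top
    · have hlt2 : wA A hA (f zero) < wA A hA (f k) :=
        wA_mono1 hA (hmono h) (hall_lt_r k)
      rw [Fin.lt_def] at hlt2
      omega
  have hcard : (univ : Finset (Fin m)).card ≤ (TP A hA).card := by
    apply Finset.card_le_card_of_injOn f (fun k _ => hmem_TP k)
    exact fun a _ b _ h => hmono.injective h
  rw [Finset.card_univ, Fintype.card_fin, card_TP hA] at hcard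
  omega

lemma stc_wA {A : Finset (Fin (2*r))} (hA : A.card = r) :
    stcStat (wA A hA) = kA r A := by
  rw [stcStat, stcWord]
  apply le_antisymm
  · exact csSup_le ⟨_, hasStaircase_kA hA⟩ (fun m hm => staircase_le_kA hA m hm)
  · exact le_csSup ⟨kA r A, fun m hm => staircase_le_kA hA m hm⟩ (hasStaircase_kA hA)


/-! ### Permutations with descent set contained in {r} -/

lemma adj_lt {σ : Equiv.Perm (Fin (2*r))} (hdes : desSet (fun i => σ i) ⊆ {r})
    {i j : Fin (2*r)} (hij : (j:ℕ) = (i:ℕ) + 1) (hjr : (j:ℕ) ≠ r) : σ i < σ j := by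
  have hnot : (j:ℕ) ∉ desSet (fun i => σ i) := by
    intro h
    exact hjr (by simpa using hdes h)
  simp only [desSet, mem_filter, Finset.mem_Ico, not_and, not_exists, not_lt] at hnot
  have hle := hnot ⟨by omega, j.isLt⟩ j.isLt
  have e1 : (⟨(j:ℕ), j.isLt⟩ : Fin (2*r)) = j := by ext; rfl
  have e2 : (⟨(j:ℕ) - 1, Nat.lt_of_le_of_lt (Nat.sub_le (j:ℕ) 1) j.isLt⟩ : Fin (2*r)) = i := by
    ext; simp; omega
  rw [e1, e2] at hle
  rcases lt_or_eq_of_le hle with h | h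
  · exact h
  · exfalso
    have : i = j := σ.injective h
    rw [this] at hij
    omega

lemma block_lt {σ : Equiv.Perm (Fin (2*r))} (hdes : desSet (fun i => σ i) ⊆ {r})
    {i j : Fin (2*r)} (hij : i < j) (hcond : (j:ℕ) < r ∨ r ≤ (i:ℕ)) : σ i < σ j := by
  have key : ∀ d (i j : Fin (2*r)), (j:ℕ) = (i:ℕ) + d + 1 →
      ((j:ℕ) < r ∨ r ≤ (i:ℕ)) → σ i < σ j := by
    intro d
    induction d with
    | zero =>
      intro i j hij hcond
      exact adj_lt hdes (by omega) (by omega)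
    | succ d ih =>
      intro i j hij hcond
      have hmid : ((i:ℕ) + d + 1) < 2*r := by have := j.isLt; omega
      have h1 : σ i < σ ⟨(i:ℕ)+d+1, hmid⟩ := by
        apply ih i ⟨(i:ℕ)+d+1, hmid⟩ rfl
        show (i:ℕ)+d+1 < r ∨ r ≤ (i:ℕ)
        omega
      have h2 : σ ⟨(i:ℕ)+d+1, hmid⟩ < σ j := by
        apply adj_lt hdes
        · show (j:ℕ) = (i:ℕ)+d+1 + 1
          omega
        · omega
      exact lt_trans h1 h2
  rw [Fin.lt_def] at hij
  exact key ((j:ℕ) - (i:ℕ) - 1) i j (by omega) hcond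

def Aperm (σ : Equiv.Perm (Fin (2*r))) : Finset (Fin (2*r)) :=
  (univ.filter fun i : Fin (2*r) => (i:ℕ) < r).image σ

lemma card_Aperm (σ : Equiv.Perm (Fin (2*r))) : (Aperm σ).card = r := by
  rw [Aperm, Finset.card_image_of_injective _ σ.injective, card_val_lt r (by omega)]

lemma mem_Aperm (σ : Equiv.Perm (Fin (2*r))) (i : Fin (2*r)) :
    σ i ∈ Aperm σ ↔ (i:ℕ) < r := by
  rw [Aperm, Finset.mem_image]
  constructor
  · rintro ⟨j, hj, hji⟩
    rw [mem_filter] at hj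
    have : j = i := σ.injective hji
    rw [← this]; exact hj.2
  · intro h
    exact ⟨i, by simp [h], rfl⟩

lemma permA_Aperm {σ : Equiv.Perm (Fin (2*r))} (hdes : desSet (fun i => σ i) ⊆ {r}) :
    permA (Aperm σ) (card_Aperm σ) = σ := by
  have hr2 : r ≤ 2*r := by omega
  apply Equiv.ext
  intro i
  rw [permA_apply, wA]
  by_cases h : (i:ℕ) < r
  · rw [dif_pos h]
    have hg : (fun m : Fin r => σ ⟨(m:ℕ), by omega⟩) = (Aperm σ).orderEmbOfFin (card_Aperm σ) := by
      apply Finset.orderEmbOfFin_unique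
      · intro x
        rw [show σ ⟨(x:ℕ), by omega⟩ ∈ Aperm σ ↔ ((⟨(x:ℕ), by omega⟩ : Fin (2*r)):ℕ) < r from
          mem_Aperm σ _]
        exact x.isLt
      · intro a b hab
        apply block_lt hdes
        · rw [Fin.lt_def]; exact hab
        · left; exact b.isLt
    have := congrFun hg ⟨(i:ℕ), h⟩
    simp only at this
    rw [← this]
  · rw [dif_neg h]
    have hg : (fun m : Fin r => σ ⟨r + (m:ℕ), by have := m.isLt; omega⟩)
        = (Aperm σ)ᶜ.orderEmbOfFin (card_compl_eq (card_Aperm σ)) := by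
      apply Finset.orderEmbOfFin_unique
      · intro x
        rw [Finset.mem_compl,
          show σ ⟨r + (x:ℕ), by have := x.isLt; omega⟩ ∈ Aperm σ ↔
            ((⟨r + (x:ℕ), by have := x.isLt; omega⟩ : Fin (2*r)):ℕ) < r from mem_Aperm σ _]
        simp
      · intro a b hab
        apply block_lt hdes
        · rw [Fin.lt_def]
          show r + (a:ℕ) < r + (b:ℕ)
          omega
        · right
          show r ≤ r + (a:ℕ)
          omega
    have := congrFun hg ⟨(i:ℕ) - r, by have := i.isLt; omega⟩
    simp only at this
    rw [← this]
    apply congrArg σ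
    ext
    show r + ((i:ℕ) - r) = (i:ℕ)
    omega

lemma permA_congr {A B : Finset (Fin (2*r))} (hA : A.card = r) (hB : B.card = r)
    (h : A = B) : permA A hA = permA B hB := by
  subst h; rfl

lemma Aperm_permA {A : Finset (Fin (2*r))} (hA : A.card = r) :
    Aperm (permA A hA) = A := by
  apply Finset.eq_of_subset_of_card_le
  · intro v hv
    rw [Aperm, Finset.mem_image] at hv
    obtain ⟨i, hi, rfl⟩ := hv
    rw [mem_filter] at hi
    exact (wA_mem_iff hA i).2 hi.2
  · rw [hA, card_Aperm]

lemma mem_quotient_iff (σ : Equiv.Perm (Fin (2*r))) :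
    σ ∈ quotientByR (2*r) {r} ↔ desSet (fun i => σ i) ⊆ ({r} : Finset ℕ) := by
  rw [quotientByR, mem_filter]
  simp

lemma sum_C_eq :
    (∑ σ ∈ quotientByR (2 * r) {r},
        xP ^ stcStat (fun i => σ i) * qP ^ invStat (fun i => σ i))
      = ∑ A ∈ Finset.powersetCard r (univ : Finset (Fin (2*r))),
          xP ^ kA r A * qP ^ invA r A := by
  apply Finset.sum_bij (fun σ _ => Aperm σ)
  · intro σ hσ
    rw [Finset.mem_powersetCard]
    exact ⟨Finset.subset_univ _, card_Aperm σ⟩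
  · intro σ1 h1 σ2 h2 heq
    have d1 : desSet (fun i => σ1 i) ⊆ ({r} : Finset ℕ) := (mem_quotient_iff σ1).1 h1
    have d2 : desSet (fun i => σ2 i) ⊆ ({r} : Finset ℕ) := (mem_quotient_iff σ2).1 h2
    rw [← permA_Aperm d1, ← permA_Aperm d2]
    exact permA_congr _ _ heq
  · intro A hA
    rw [Finset.mem_powersetCard] at hA
    refine ⟨permA A hA.2, ?_, Aperm_permA hA.2⟩
    rw [mem_quotient_iff]
    exact desSet_wA hA.2
  · intro σ hσ
    have d : desSet (fun i => σ i) ⊆ ({r} : Finset ℕ) := (mem_quotient_iff σ).1 hσ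
    have e2 := permA_Aperm d
    have e : (fun i => σ i) = wA (Aperm σ) (card_Aperm σ) := by
      funext i
      have : (permA (Aperm σ) (card_Aperm σ)) i = σ i := by rw [e2]
      exact this.symm
    rw [e, stc_wA (card_Aperm σ), invStat_wA (card_Aperm σ)]


/-! ### The involution `A ↦ A + r` -/

def opp (hr : 0 < r) (v : Fin (2*r)) : Fin (2*r) := v + ⟨r, by omega⟩

lemma opp_val (hr : 0 < r) (v : Fin (2*r)) :
    ((opp hr v : Fin (2*r)) : ℕ) = if (v:ℕ) < r then (v:ℕ) + r else (v:ℕ) - r := by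
  have hv := v.isLt
  rw [opp, Fin.add_def]
  simp only
  split
  · exact Nat.mod_eq_of_lt (by omega)
  · rw [Nat.mod_eq_sub_mod (by omega), Nat.mod_eq_of_lt (by omega)]
    omega

lemma opp_opp (hr : 0 < r) (v : Fin (2*r)) : opp hr (opp hr v) = v := by
  have hv := v.isLt
  ext
  rw [opp_val hr, opp_val hr]
  split_ifs with h1 h2 h3 <;> omega

lemma opp_inj (hr : 0 < r) : Function.Injective (opp hr) :=
  Function.Involutive.injective (opp_opp hr)

lemma mem_image_opp (hr : 0 < r) {A : Finset (Fin (2*r))} {v : Fin (2*r)} :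
    v ∈ A.image (opp hr) ↔ opp hr v ∈ A := by
  rw [Finset.mem_image]
  constructor
  · rintro ⟨a, ha, rfl⟩
    rw [opp_opp hr]
    exact ha
  · intro h
    exact ⟨opp hr v, h, opp_opp hr v⟩

lemma image_opp_compl (hr : 0 < r) (A : Finset (Fin (2*r))) :
    (A.image (opp hr))ᶜ = Aᶜ.image (opp hr) := by
  ext v
  rw [Finset.mem_compl, mem_image_opp hr, mem_image_opp hr, Finset.mem_compl]

lemma image_opp_opp (hr : 0 < r) (A : Finset (Fin (2*r))) :
    (A.image (opp hr)).image (opp hr) = A := by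
  rw [Finset.image_image]
  have he : (opp hr ∘ opp hr) = id := funext (opp_opp hr)
  rw [he, Finset.image_id]

lemma card_image_opp (hr : 0 < r) {A : Finset (Fin (2*r))} (hA : A.card = r) :
    (A.image (opp hr)).card = r := by
  rw [Finset.card_image_of_injective _ (opp_inj hr), hA]

lemma kA_image_opp (hr : 0 < r) {A : Finset (Fin (2*r))} (hA : A.card = r) :
    kA r (A.image (opp hr)) + kA r A = r := by
  have hkk : kA r (A.image (opp hr)) = (A.filter fun v : Fin (2*r) => ¬ r ≤ (v:ℕ)).card := by
    rw [kA]
    symm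
    apply Finset.card_bij (fun a _ => opp hr a)
    · intro a ha
      rw [mem_filter] at ha
      rw [mem_filter]
      refine ⟨Finset.mem_image_of_mem _ ha.1, ?_⟩
      rw [opp_val hr]
      have := ha.2
      split <;> omega
    · intro a1 _ a2 _ h
      exact opp_inj hr h
    · intro v hv
      rw [mem_filter] at hv
      obtain ⟨hv1, hv2⟩ := hv
      refine ⟨opp hr v, ?_, opp_opp hr v⟩
      rw [mem_filter]
      refine ⟨(mem_image_opp hr).1 hv1, ?_⟩
      rw [opp_val hr]
      have := v.isLt
      split <;> omega
  have := kA_add_bA hA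
  omega

def SD (A : Finset (Fin (2*r))) : ℕ :=
  (((A ×ˢ Aᶜ).filter fun p => p.2 < p.1).filter
    fun p => ((p.1:ℕ) < r ↔ (p.2:ℕ) < r)).card

lemma invA_split {A : Finset (Fin (2*r))} (hA : A.card = r) :
    invA r A = SD A + kA r A * kA r A := by
  classical
  rw [invA, ← Finset.card_filter_add_card_filter_not
    (p := fun p : Fin (2*r) × Fin (2*r) => ((p.1:ℕ) < r ↔ (p.2:ℕ) < r)), ← SD]
  congr 1
  have he : (((A ×ˢ Aᶜ).filter fun p => p.2 < p.1).filter
      (fun p : Fin (2*r) × Fin (2*r) => ¬(((p.1:ℕ) < r) ↔ ((p.2:ℕ) < r))))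
      = (A.filter fun v : Fin (2*r) => r ≤ (v:ℕ)) ×ˢ (Aᶜ.filter fun v : Fin (2*r) => ¬ r ≤ (v:ℕ)) := by
    ext p
    simp only [mem_filter, Finset.mem_product, Fin.lt_def]
    constructor
    · rintro ⟨⟨⟨h1, h2⟩, hlt⟩, hni⟩
      by_cases c1 : (p.1:ℕ) < r <;> by_cases c2 : (p.2:ℕ) < r <;>
        [skip; skip; skip; skip] <;> first
        | (exfalso; apply hni; constructor <;> intro <;> first | assumption | omega)
        | (refine ⟨⟨h1, by omega⟩, h2, by omega⟩)
    · rintro ⟨⟨h1, h1t⟩, h2, h2b⟩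
      refine ⟨⟨⟨h1, h2⟩, by omega⟩, by intro hiff; omega⟩
  rw [he, Finset.card_product, compl_bottoms hA]
  rfl

lemma SD_le (hr : 0 < r) (A : Finset (Fin (2*r))) : SD A ≤ SD (A.image (opp hr)) := by
  classical
  apply Finset.card_le_card_of_injOn (fun p => (opp hr p.1, opp hr p.2))
  · intro p hp
    simp only [Finset.mem_coe, mem_filter, Finset.mem_product, Fin.lt_def] at hp ⊢
    obtain ⟨⟨⟨h1, h2⟩, hlt⟩, hiff⟩ := hp
    have hv1 := p.1.isLt
    have hv2 := p.2.isLt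
    refine ⟨⟨⟨Finset.mem_image_of_mem _ h1, ?_⟩, ?_⟩, ?_⟩
    · rw [image_opp_compl hr]
      rw [Finset.mem_compl] at h2
      rw [mem_image_opp hr, opp_opp hr, Finset.mem_compl]
      exact h2
    · have hiff' : ((p.1:ℕ) < r ∧ (p.2:ℕ) < r) ∨ (¬ (p.1:ℕ) < r ∧ ¬ (p.2:ℕ) < r) := by
        tauto
      rw [opp_val hr, opp_val hr]
      split_ifs <;> omega
    · have hiff' : ((p.1:ℕ) < r ∧ (p.2:ℕ) < r) ∨ (¬ (p.1:ℕ) < r ∧ ¬ (p.2:ℕ) < r) := by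
        tauto
      rw [opp_val hr, opp_val hr]
      split_ifs <;> (constructor <;> intro <;> omega)
  · intro p _ q _ h
    have h1 := congrArg Prod.fst h
    have h2 := congrArg Prod.snd h
    simp only at h1 h2
    exact Prod.ext (opp_inj hr h1) (opp_inj hr h2)

lemma SD_opp (hr : 0 < r) (A : Finset (Fin (2*r))) : SD (A.image (opp hr)) = SD A := by
  apply le_antisymm
  · have := SD_le hr (A.image (opp hr))
    rw [image_opp_opp hr] at this
    exact this
  · exact SD_le hr A

lemma invA_opp (hr : 0 < r) {A : Finset (Fin (2*r))} (hA : A.card = r) :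
    invA r (A.image (opp hr)) + kA r A * kA r A
      = invA r A + kA r (A.image (opp hr)) * kA r (A.image (opp hr)) := by
  rw [invA_split hA, invA_split (card_image_opp hr hA), SD_opp hr]
  omega

lemma pair_dvd (hodd : Odd r) {k k' i i' : ℕ} (hkk : k + k' = r) (hlt : k < k')
    (hinv : i' + k * k = i + k' * k') :
    (1 + xP * qP ^ r) ∣ (xP ^ k * qP ^ i + xP ^ k' * qP ^ i') := by
  set d := k' - k with hd
  have hdo : Odd d := by
    rw [Nat.odd_iff] at hodd ⊢
    omega
  have hk' : k' = k + d := by omega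
  have hi' : i' = i + d * r := by
    have e1 : k' * k' = k*k + 2*(k*d) + d*d := by rw [hk']; ring
    have e2 : d * r = 2*(k*d) + d*d := by
      rw [← hkk, hk']; ring
    omega
  have hterm : xP ^ k * qP ^ i + xP ^ k' * qP ^ i'
      = xP ^ k * qP ^ i * (1 + (xP * qP ^ r) ^ d) := by
    rw [hi', hk']
    rw [mul_pow, ← pow_mul, pow_add, pow_add]
    ring
  rw [hterm]
  have h1 : (1 + xP * qP ^ r) ∣ (1 + (xP * qP ^ r) ^ d) := by
    have h0 := Odd.add_dvd_pow_add_pow (xP * qP ^ r) 1 hdo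
    rw [one_pow] at h0
    rw [add_comm 1 (xP * qP ^ r), add_comm 1 ((xP * qP ^ r) ^ d)]
    exact h0
  exact Dvd.dvd.mul_left h1 _

end CRho

/-- For odd `r` and `ρ = (r, r)`, the polynomial
`C_ρ(x,q) = ∑_{σ ∈ S_{2r}^{{r}}} x^{stc σ} q^{inv σ}` is divisible by `1 + x qʳ`. -/
theorem one_add_x_q_pow_r_dvd_C_rho (r : ℕ) (hr : Odd r) :
    ∃ g : PP,
      (∑ σ ∈ quotientByR (2 * r) {r},
          xP ^ stcStat (fun i => σ i) * qP ^ invStat (fun i => σ i)) =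
        (1 + xP * qP ^ r) * g := by
  classical
  have hr0 : 0 < r := hr.pos
  have hdvd : (1 + xP * qP ^ r) ∣
      (∑ σ ∈ quotientByR (2 * r) {r},
        xP ^ stcStat (fun i => σ i) * qP ^ invStat (fun i => σ i)) := by
    rw [CRho.sum_C_eq]
    rw [← Ideal.Quotient.eq_zero_iff_dvd]
    rw [map_sum]
    apply Finset.sum_involution (g := fun A _ => A.image (CRho.opp hr0))
    · intro A hA
      rw [Finset.mem_powersetCard] at hA
      have hAc : A.card = r := hA.2
      rw [← map_add, Ideal.Quotient.eq_zero_iff_dvd]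
      have hka := CRho.kA_image_opp hr0 hAc
      have hinv := CRho.invA_opp hr0 hAc
      have hne : CRho.kA r A ≠ CRho.kA r (A.image (CRho.opp hr0)) := by
        rw [Nat.odd_iff] at hr
        omega
      rcases lt_or_gt_of_ne hne with h | h
      · exact CRho.pair_dvd hr (by omega) h (by omega)
      · have := CRho.pair_dvd hr (k := CRho.kA r (A.image (CRho.opp hr0))) (k' := CRho.kA r A)
          (i := CRho.invA r (A.image (CRho.opp hr0))) (i' := CRho.invA r A) (by omega) h (by omega)
        rw [add_comm (xP ^ CRho.kA r A * qP ^ CRho.invA r A)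
          (xP ^ CRho.kA r (A.image (CRho.opp hr0)) * qP ^ CRho.invA r (A.image (CRho.opp hr0)))]
        exact this
    · intro A hA h0
      intro hEq
      rw [Finset.mem_powersetCard] at hA
      have hka := CRho.kA_image_opp hr0 hA.2
      rw [hEq] at hka
      rw [Nat.odd_iff] at hr
      omega
    · intro A hA
      exact CRho.image_opp_opp hr0 A
    · intro A hA
      rw [Finset.mem_powersetCard] at hA ⊢
      exact ⟨Finset.subset_univ _, CRho.card_image_opp hr0 hA.2⟩
  obtain ⟨g, hg⟩ := hdvd
  exact ⟨g, hg⟩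
end

section
/- The decomposition identity: sum over sigma in B_n of x^{nstc(sigma)} q^{ell(sigma)} = A_n(x,q) * product over i = 1 to n of (1 + x q^i), where A_n(x,q) = sum over tau in S_n of x^{stc(tau)} q^{inv(tau)}. -/
open Finset

/-- Number of negative entries of a word. -/
def negStat {n : ℕ} (w : Fin n → ℤ) : ℕ := (Finset.univ.filter fun i => w i < 0).card

/-- Number of negative sum pairs of a word. -/
def nspStat {n : ℕ} (w : Fin n → ℤ) : ℕ :=
  ((Finset.univ : Finset (Fin n × Fin n)).filter fun p => p.1 < p.2 ∧ w p.1 + w p.2 < 0).card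

/-- The hyperoctahedral group `B_n`, encoded as pairs (permutation, signs). -/
abbrev SignedPerm (n : ℕ) := Equiv.Perm (Fin n) × (Fin n → Bool)

/-- The window `σ(1) ⋯ σ(n) ∈ {±1, …, ±n}ⁿ` of a signed permutation. -/
def sgnWord {n : ℕ} (σ : SignedPerm n) : Fin n → ℤ :=
  fun i => if σ.2 i then -((σ.1 i : ℤ) + 1) else (σ.1 i : ℤ) + 1

/-- The type `B` Coxeter length, via its combinatorial description
`ℓ(σ) = inv(σ) + neg(σ) + nsp(σ)`. -/
def lenB {n : ℕ} (σ : SignedPerm n) : ℕ :=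
  invStat (sgnWord σ) + negStat (sgnWord σ) + nspStat (sgnWord σ)

/-- `nstc(σ) = stc(σ) + neg(σ)`; here `stc` of a signed permutation is Skandera's
statistic of its window (equivalently, of the ordinary permutation with the same
relative order of values, since the Lehmer code only depends on relative order). -/
noncomputable def nstc {n : ℕ} (σ : SignedPerm n) : ℕ :=
  stcStat (sgnWord σ) + negStat (sgnWord σ)

/-- `ndes(σ) = des(σ) + neg(σ)`. -/
def ndes {n : ℕ} (σ : SignedPerm n) : ℕ := desStat (sgnWord σ) + negStat (sgnWord σ)

/-- `nmaj(σ) = maj(σ) - ∑_{i ∈ Neg σ} σ(i)`. -/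
def nmaj {n : ℕ} (σ : SignedPerm n) : ℕ :=
  majStat (sgnWord σ) +
    ∑ i ∈ Finset.univ.filter (fun i : Fin n => sgnWord σ i < 0), (sgnWord σ i).natAbs

namespace NstcAux

open Finset

variable {n : ℕ}

def hfun (b : Fin n → Bool) (j : Fin n) : ℤ :=
  if b j then -((j : ℤ) + 1) else (j : ℤ) + 1

lemma natAbs_hfun (b : Fin n → Bool) (j : Fin n) : (hfun b j).natAbs = (j : ℕ) + 1 := by
  unfold hfun; split <;> omega

lemma hfun_neg_iff (b : Fin n → Bool) (j : Fin n) : hfun b j < 0 ↔ b j = true := by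
  unfold hfun; split <;> simp_all <;> omega

lemma hfun_injective (b : Fin n → Bool) : Function.Injective (hfun b) := by
  intro j j' h
  have h2 := congrArg Int.natAbs h
  rw [natAbs_hfun, natAbs_hfun] at h2
  exact Fin.ext (by omega)

def Vset (b : Fin n → Bool) : Finset ℤ := univ.image (hfun b)

lemma card_Vset (b : Fin n → Bool) : (Vset b).card = n := by
  rw [Vset, card_image_of_injective _ (hfun_injective b), card_univ, Fintype.card_fin]

def gval (b : Fin n → Bool) (k : Fin n) : ℤ := ((Vset b).orderIsoOfFin (card_Vset b) k : ℤ)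

lemma gval_mem (b : Fin n → Bool) (k : Fin n) : gval b k ∈ Vset b :=
  ((Vset b).orderIsoOfFin (card_Vset b) k).2

lemma gval_lt_iff {b : Fin n → Bool} {k k' : Fin n} : gval b k < gval b k' ↔ k < k' := by
  rw [gval, gval, Subtype.coe_lt_coe, OrderIso.lt_iff_lt]

lemma gval_injective (b : Fin n → Bool) : Function.Injective (gval b) := by
  intro k k' h
  rcases lt_trichotomy k k' with hlt | he | hlt
  · exact absurd (gval_lt_iff.mpr hlt) (by rw [h]; exact lt_irrefl _)
  · exact he
  · exact absurd (gval_lt_iff.mpr hlt) (by rw [h]; exact lt_irrefl _)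

lemma exists_hfun_eq {b : Fin n → Bool} {v : ℤ} (hv : v ∈ Vset b) : ∃ j, hfun b j = v := by
  simpa [Vset] using hv

lemma gval_surj {b : Fin n → Bool} {v : ℤ} (hv : v ∈ Vset b) : ∃ k, gval b k = v :=
  ⟨((Vset b).orderIsoOfFin (card_Vset b)).symm ⟨v, hv⟩, by simp [gval]⟩

lemma natAbs_gval_bounds (b : Fin n → Bool) (k : Fin n) :
    1 ≤ (gval b k).natAbs ∧ (gval b k).natAbs ≤ n := by
  obtain ⟨j, hj⟩ := exists_hfun_eq (gval_mem b k)
  rw [← hj, natAbs_hfun]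
  have := j.isLt
  omega

def absmap (b : Fin n → Bool) (k : Fin n) : Fin n :=
  ⟨(gval b k).natAbs - 1, by have := natAbs_gval_bounds b k; omega⟩

lemma hfun_absmap (b : Fin n → Bool) (k : Fin n) : hfun b (absmap b k) = gval b k := by
  obtain ⟨j, hj⟩ := exists_hfun_eq (gval_mem b k)
  have hj' : absmap b k = j := by
    apply Fin.ext
    have : (gval b k).natAbs = (j : ℕ) + 1 := by rw [← hj, natAbs_hfun]
    simp [absmap, this]
  rw [hj', hj]

lemma natAbs_gval_eq (b : Fin n → Bool) (k : Fin n) :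
    (gval b k).natAbs = (absmap b k : ℕ) + 1 := by
  rw [← hfun_absmap b k, natAbs_hfun]

lemma absmap_injective (b : Fin n → Bool) : Function.Injective (absmap b) := by
  intro k k' h
  apply gval_injective b
  rw [← hfun_absmap b k, ← hfun_absmap b k', h]

noncomputable def absPerm (b : Fin n → Bool) : Equiv.Perm (Fin n) :=
  Equiv.ofBijective (absmap b) (Finite.injective_iff_bijective.mp (absmap_injective b))

lemma absPerm_apply (b : Fin n → Bool) (k : Fin n) : absPerm b k = absmap b k := rfl

noncomputable def Phi (p : Equiv.Perm (Fin n) × (Fin n → Bool)) : SignedPerm n :=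
  (p.1.trans (absPerm p.2), fun i => decide (gval p.2 (p.1 i) < 0))

lemma Phi_fst_apply (τ : Equiv.Perm (Fin n)) (b : Fin n → Bool) (i : Fin n) :
    (Phi (τ, b)).1 i = absmap b (τ i) := rfl

lemma sgnWord_Phi (τ : Equiv.Perm (Fin n)) (b : Fin n → Bool) (i : Fin n) :
    sgnWord (Phi (τ, b)) i = gval b (τ i) := by
  have h1 : ((Phi (τ, b)).1 i : ℕ) + 1 = (gval b (τ i)).natAbs := by
    rw [Phi_fst_apply, natAbs_gval_eq]
  have h0 := natAbs_gval_bounds b (τ i)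
  unfold sgnWord
  by_cases hv : gval b (τ i) < 0
  · rw [show (Phi (τ, b)).2 i = true by simp [Phi, hv]]
    simp only [if_true]
    omega
  · rw [show (Phi (τ, b)).2 i = false by simp [Phi, hv]]
    rw [if_neg (by simp)]
    omega

lemma w_eq_hfun (τ : Equiv.Perm (Fin n)) (b : Fin n → Bool) (i : Fin n) :
    sgnWord (Phi (τ, b)) i = hfun b ((Phi (τ, b)).1 i) := by
  rw [sgnWord_Phi, Phi_fst_apply, hfun_absmap]

lemma natAbs_w (τ : Equiv.Perm (Fin n)) (b : Fin n → Bool) (i : Fin n) :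
    (sgnWord (Phi (τ, b)) i).natAbs = (((Phi (τ, b)).1 i : Fin n) : ℕ) + 1 := by
  rw [sgnWord_Phi, natAbs_gval_eq, Phi_fst_apply]

lemma w_neg_iff (τ : Equiv.Perm (Fin n)) (b : Fin n → Bool) (i : Fin n) :
    sgnWord (Phi (τ, b)) i < 0 ↔ b ((Phi (τ, b)).1 i) = true := by
  rw [w_eq_hfun, hfun_neg_iff]

lemma w_lt_iff (τ : Equiv.Perm (Fin n)) (b : Fin n → Bool) (i i' : Fin n) :
    sgnWord (Phi (τ, b)) i < sgnWord (Phi (τ, b)) i' ↔ τ i < τ i' := by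
  rw [sgnWord_Phi, sgnWord_Phi, gval_lt_iff]

lemma invStat_Phi (τ : Equiv.Perm (Fin n)) (b : Fin n → Bool) :
    invStat (sgnWord (Phi (τ, b))) = invStat (fun i => τ i) := by
  unfold invStat
  congr 1
  apply filter_congr
  intro p _
  rw [w_lt_iff]

lemma stcStat_Phi (τ : Equiv.Perm (Fin n)) (b : Fin n → Bool) :
    stcStat (sgnWord (Phi (τ, b))) = stcStat (fun i => τ i) := by
  unfold stcStat
  congr 1
  funext i
  unfold lehmer
  congr 1
  apply filter_congr
  intro j _
  rw [w_lt_iff]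

lemma negStat_Phi (τ : Equiv.Perm (Fin n)) (b : Fin n → Bool) :
    negStat (sgnWord (Phi (τ, b))) = (univ.filter fun j => b j = true).card := by
  unfold negStat
  apply Finset.card_nbij' (fun i => (Phi (τ, b)).1 i) (fun j => ((Phi (τ, b)).1).symm j)
  · intro i hi
    simp only [Finset.mem_coe, mem_filter, mem_univ, true_and] at hi ⊢
    exact (w_neg_iff τ b i).mp hi
  · intro j hj
    simp only [Finset.mem_coe, mem_filter, mem_univ, true_and] at hj ⊢
    rw [w_neg_iff]
    simpa using hj
  · intro i _; simp
  · intro j _; simp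

lemma nspStat_Phi (τ : Equiv.Perm (Fin n)) (b : Fin n → Bool) :
    nspStat (sgnWord (Phi (τ, b))) =
      ∑ i ∈ univ.filter (fun i => sgnWord (Phi (τ, b)) i < 0),
        ((sgnWord (Phi (τ, b)) i).natAbs - 1) := by
  have habs : ∀ i i' : Fin n,
      (sgnWord (Phi (τ, b)) i).natAbs = (sgnWord (Phi (τ, b)) i').natAbs → i = i' := by
    intro i i' h
    have h1 := natAbs_w τ b i
    have h2 := natAbs_w τ b i'
    exact ((Phi (τ, b)).1).injective (Fin.ext (by omega))
  have step1 : nspStat (sgnWord (Phi (τ, b))) =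
      ((univ.filter (fun i => sgnWord (Phi (τ, b)) i < 0)).sigma
        (fun i => univ.filter (fun k =>
          (sgnWord (Phi (τ, b)) k).natAbs < (sgnWord (Phi (τ, b)) i).natAbs))).card := by
    unfold nspStat
    apply Finset.card_nbij'
      (fun p => if (sgnWord (Phi (τ, b)) p.1).natAbs < (sgnWord (Phi (τ, b)) p.2).natAbs
        then ⟨p.2, p.1⟩ else ⟨p.1, p.2⟩)
      (fun s => if s.1 < s.2 then (s.1, s.2) else (s.2, s.1))
    · intro p hp
      simp only [Finset.mem_coe, mem_filter, mem_univ, true_and] at hp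
      obtain ⟨hlt, hsum⟩ := hp
      have hne : (sgnWord (Phi (τ, b)) p.1).natAbs ≠ (sgnWord (Phi (τ, b)) p.2).natAbs :=
        fun h => absurd (habs _ _ h) (ne_of_lt hlt)
      by_cases hc : (sgnWord (Phi (τ, b)) p.1).natAbs < (sgnWord (Phi (τ, b)) p.2).natAbs
      · simp only [if_pos hc]
        simp only [Finset.mem_coe, Finset.mem_sigma, mem_filter, mem_univ, true_and]
        exact ⟨by omega, hc⟩
      · simp only [if_neg hc]
        simp only [Finset.mem_coe, Finset.mem_sigma, mem_filter, mem_univ, true_and]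
        exact ⟨by omega, by omega⟩
    · intro s hs
      simp only [Finset.mem_coe, Finset.mem_sigma, mem_filter, mem_univ, true_and] at hs
      obtain ⟨hneg, hlt⟩ := hs
      have hge : 1 ≤ (sgnWord (Phi (τ, b)) s.1).natAbs := by omega
      by_cases hc : s.1 < s.2
      · simp only [if_pos hc]
        simp only [Finset.mem_coe, mem_filter, mem_univ, true_and]
        exact ⟨hc, by omega⟩
      · have hne : s.1 ≠ s.2 := fun h => by rw [h] at hlt; omega
        have hc' : s.2 < s.1 := by
          rcases lt_trichotomy s.1 s.2 with h | h | h
          · exact absurd h hc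
          · exact absurd h hne
          · exact h
        simp only [if_neg hc]
        simp only [Finset.mem_coe, mem_filter, mem_univ, true_and]
        exact ⟨hc', by omega⟩
    · intro p hp
      simp only [Finset.mem_coe, mem_filter, mem_univ, true_and] at hp
      obtain ⟨hlt, _⟩ := hp
      by_cases hc : (sgnWord (Phi (τ, b)) p.1).natAbs < (sgnWord (Phi (τ, b)) p.2).natAbs
      · simp only [if_pos hc]
        show (if p.2 < p.1 then (p.2, p.1) else (p.1, p.2)) = p
        rw [if_neg (fun h => absurd (lt_trans h hlt) (lt_irrefl _))]
      · simp only [if_neg hc]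
        show (if p.1 < p.2 then (p.1, p.2) else (p.2, p.1)) = p
        rw [if_pos hlt]
    · intro s hs
      simp only [Finset.mem_coe, Finset.mem_sigma, mem_filter, mem_univ, true_and] at hs
      obtain ⟨hneg, hlt⟩ := hs
      by_cases hc : s.1 < s.2
      · simp only [if_pos hc]
        show (if (sgnWord (Phi (τ, b)) s.1).natAbs < (sgnWord (Phi (τ, b)) s.2).natAbs
            then (⟨s.2, s.1⟩ : (_ : Fin n) × Fin n) else ⟨s.1, s.2⟩) = s
        rw [if_neg (by omega), Sigma.eta]
      · simp only [if_neg hc]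
        show (if (sgnWord (Phi (τ, b)) s.2).natAbs < (sgnWord (Phi (τ, b)) s.1).natAbs
            then (⟨s.1, s.2⟩ : (_ : Fin n) × Fin n) else ⟨s.2, s.1⟩) = s
        rw [if_pos hlt, Sigma.eta]
  rw [step1, Finset.card_sigma]
  apply Finset.sum_congr rfl
  intro i hi
  simp only [mem_filter, mem_univ, true_and] at hi
  have hcond : ∀ k : Fin n, ((sgnWord (Phi (τ, b)) k).natAbs <
      (sgnWord (Phi (τ, b)) i).natAbs) ↔ ((Phi (τ, b)).1 k < (Phi (τ, b)).1 i) := by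
    intro k
    have h1 := natAbs_w τ b k
    have h2 := natAbs_w τ b i
    rw [Fin.lt_def]
    omega
  rw [filter_congr (fun k _ => by rw [hcond k])]
  have hcard : (univ.filter fun k => (Phi (τ, b)).1 k < (Phi (τ, b)).1 i).card
      = (univ.filter fun m => m < (Phi (τ, b)).1 i).card := by
    apply Finset.card_nbij' (fun k => (Phi (τ, b)).1 k) (fun m => ((Phi (τ, b)).1).symm m)
    · intro k hk; simp only [Finset.mem_coe, mem_filter, mem_univ, true_and] at hk ⊢; exact hk
    · intro m hm; simp only [mem_filter, mem_univ, true_and] at hm ⊢; simpa using hm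
    · intro k _; simp
    · intro m _; simp
  rw [hcard, show univ.filter (fun m => m < (Phi (τ, b)).1 i) = Finset.Iio ((Phi (τ, b)).1 i)
    by ext m; simp, Fin.card_Iio]
  have h2 := natAbs_w τ b i
  omega

lemma sum_natAbs_Phi (τ : Equiv.Perm (Fin n)) (b : Fin n → Bool) :
    ∑ i ∈ univ.filter (fun i => sgnWord (Phi (τ, b)) i < 0), (sgnWord (Phi (τ, b)) i).natAbs
      = ∑ j ∈ univ.filter (fun j => b j = true), ((j : ℕ) + 1) := by
  apply Finset.sum_nbij' (fun i => (Phi (τ, b)).1 i) (fun j => ((Phi (τ, b)).1).symm j)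
  · intro i hi
    simp only [mem_filter, mem_univ, true_and] at hi ⊢
    exact (w_neg_iff τ b i).mp hi
  · intro j hj
    simp only [mem_filter, mem_univ, true_and] at hj ⊢
    rw [w_neg_iff]
    simpa using hj
  · intro i _; simp
  · intro j _; simp
  · intro i _
    rw [natAbs_w]

lemma neg_add_nsp_Phi (τ : Equiv.Perm (Fin n)) (b : Fin n → Bool) :
    negStat (sgnWord (Phi (τ, b))) + nspStat (sgnWord (Phi (τ, b)))
      = ∑ j ∈ univ.filter (fun j => b j = true), ((j : ℕ) + 1) := by
  rw [← sum_natAbs_Phi τ b, nspStat_Phi]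
  unfold negStat
  rw [Finset.card_eq_sum_ones, ← Finset.sum_add_distrib]
  apply Finset.sum_congr rfl
  intro i hi
  simp only [mem_filter, mem_univ, true_and] at hi
  have : 1 ≤ (sgnWord (Phi (τ, b)) i).natAbs := by omega
  omega

lemma mem_Vset_neg_iff (b : Fin n → Bool) (j : Fin n) :
    (-((j : ℤ) + 1) ∈ Vset b) ↔ b j = true := by
  constructor
  · intro hv
    obtain ⟨j', hj'⟩ := exists_hfun_eq hv
    have h2 := congrArg Int.natAbs hj'
    rw [natAbs_hfun] at h2
    have hjj : j' = j := Fin.ext (by omega)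
    rw [hjj] at hj'
    rw [← hfun_neg_iff b j, hj']
    omega
  · intro hb
    have : hfun b j = -((j : ℤ) + 1) := by unfold hfun; rw [if_pos hb]
    rw [← this]
    exact Finset.mem_image_of_mem _ (mem_univ j)

lemma Vset_eq_image (τ : Equiv.Perm (Fin n)) (b : Fin n → Bool) :
    univ.image (fun i => gval b (τ i)) = Vset b := by
  ext v
  simp only [mem_image, mem_univ, true_and]
  constructor
  · rintro ⟨i, rfl⟩; exact gval_mem b (τ i)
  · intro hv
    obtain ⟨k, hk⟩ := gval_surj hv
    exact ⟨τ.symm k, by simp [hk]⟩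

lemma Phi_injective : Function.Injective (Phi (n := n)) := by
  intro p p' h
  obtain ⟨τ, b⟩ := p
  obtain ⟨τ', b'⟩ := p'
  have hw : ∀ i, gval b (τ i) = gval b' (τ' i) := by
    intro i
    rw [← sgnWord_Phi τ b i, ← sgnWord_Phi τ' b' i, h]
  have hV : Vset b = Vset b' := by
    rw [← Vset_eq_image τ b, ← Vset_eq_image τ' b']
    apply Finset.image_congr
    intro i _
    exact hw i
  have hb : b = b' := by
    funext j
    have hiff : b j = true ↔ b' j = true := by
      rw [← mem_Vset_neg_iff b j, ← mem_Vset_neg_iff b' j, hV]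
    cases hj : b j <;> cases hj' : b' j <;> simp_all
  subst hb
  have hτ : τ = τ' := by
    apply Equiv.ext
    intro i
    exact gval_injective b (hw i)
  rw [hτ]

lemma sum_bool_eq_prod (a : Fin n → PP) :
    ∑ b : Fin n → Bool, ∏ j ∈ univ.filter (fun j => b j = true), a j
      = ∏ j : Fin n, (1 + a j) := by
  have h1 : ∏ j : Fin n, (1 + a j) = ∏ j ∈ univ, (a j + 1) := by
    apply Finset.prod_congr rfl; intros; ring
  rw [h1, Finset.prod_add]
  simp only [Finset.prod_const_one, mul_one]
  apply Finset.sum_nbij' (fun b => univ.filter fun j => b j = true)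
    (fun t => fun j => decide (j ∈ t))
  · intro b _
    simp [Finset.mem_powerset]
  · intro t _
    exact mem_univ _
  · intro b _
    funext j
    simp
  · intro t _
    ext j
    simp
  · intro b _
    rfl

lemma pow_card_prod (b : Fin n → Bool) :
    xP ^ (univ.filter fun j => b j = true).card
        * qP ^ (∑ j ∈ univ.filter (fun j => b j = true), ((j : ℕ) + 1))
      = ∏ j ∈ univ.filter (fun j => b j = true), (xP * qP ^ ((j : ℕ) + 1)) := by
  rw [Finset.prod_mul_distrib, Finset.prod_const, Finset.prod_pow_eq_pow_sum]

end NstcAux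


/-- `∑_{σ ∈ B_n} x^{nstc σ} q^{ℓ σ} = A_n(x,q) ∏_{i=1}^n (1 + x qⁱ)`, where
`A_n(x,q) = ∑_{τ ∈ S_n} x^{stc τ} q^{inv τ}`. -/
theorem nstc_len_product_formula (n : ℕ) :
    ∑ σ : SignedPerm n, xP ^ nstc σ * qP ^ lenB σ =
      (∑ τ : Equiv.Perm (Fin n),
          xP ^ stcStat (fun i => τ i) * qP ^ invStat (fun i => τ i)) *
        ∏ i ∈ Finset.range n, (1 + xP * qP ^ (i + 1)) := by
  classical
  have hbij : Function.Bijective (NstcAux.Phi (n := n)) :=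
    Finite.injective_iff_bijective.mp NstcAux.Phi_injective
  rw [← hbij.sum_comp (fun σ => xP ^ nstc σ * qP ^ lenB σ)]
  rw [Fintype.sum_prod_type, Finset.sum_mul]
  refine Finset.sum_congr rfl fun τ _ => ?_
  have hterm : ∀ b : Fin n → Bool,
      xP ^ nstc (NstcAux.Phi (τ, b)) * qP ^ lenB (NstcAux.Phi (τ, b)) =
        (xP ^ stcStat (fun i => τ i) * qP ^ invStat (fun i => τ i)) *
          ∏ j ∈ Finset.univ.filter (fun j => b j = true), (xP * qP ^ ((j : ℕ) + 1)) := by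
    intro b
    have hlen : lenB (NstcAux.Phi (τ, b)) = invStat (fun i => τ i) +
        ∑ j ∈ Finset.univ.filter (fun j => b j = true), ((j : ℕ) + 1) := by
      unfold lenB
      rw [Nat.add_assoc, NstcAux.neg_add_nsp_Phi, NstcAux.invStat_Phi]
    have hnstc : nstc (NstcAux.Phi (τ, b)) = stcStat (fun i => τ i) +
        (Finset.univ.filter fun j => b j = true).card := by
      unfold nstc
      rw [NstcAux.stcStat_Phi, NstcAux.negStat_Phi]
    rw [hlen, hnstc, pow_add, pow_add, ← NstcAux.pow_card_prod]
    ring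
  rw [Finset.sum_congr rfl (fun b _ => hterm b), ← Finset.mul_sum,
    NstcAux.sum_bool_eq_prod]
  congr 1
  exact Fin.prod_univ_eq_prod_range (fun m => 1 + xP * qP ^ (m + 1)) n
end

section
/- Define dstc(sigma) = stc(sigma) + |DNeg(sigma)| for sigma in D_n, where DNeg(sigma) = {i-1 : i in [n], sigma(i) < -1} (equivalently dstc = stc + neg + epsilon, with epsilon(sigma) = -1 if sigma^{-1}(1) < 0 and 0 otherwise). Then sum over sigma in D_n of x^{dstc(sigma)} q^{ell(sigma)} equals sum over sigma in D_n of x^{ddes(sigma)} q^{dmaj(sigma)}, where ddes(sigma) = des(sigma) + |DNeg(sigma)| and dmaj(sigma) = maj(sigma) - sum over i in DNeg(sigma) of sigma(i). -/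
open Finset

/-- The even hyperoctahedral group `D_n ⊆ B_n`. -/
def evenSigned (n : ℕ) : Finset (SignedPerm n) :=
  Finset.univ.filter fun σ => Even (negStat (sgnWord σ))

/-- `DNeg(σ) = {i - 1 : i ∈ [n], σ(i) < -1}`; its cardinality is the number of
positions with value `< -1`. -/
def dnegSet {n : ℕ} (σ : SignedPerm n) : Finset (Fin n) :=
  Finset.univ.filter fun i => sgnWord σ i < -1

/-- The type `D` Coxeter length, via its combinatorial description
`ℓ(σ) = inv(σ) + nsp(σ)`. -/
def lenD {n : ℕ} (σ : SignedPerm n) : ℕ := invStat (sgnWord σ) + nspStat (sgnWord σ)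

/-- `dstc(σ) = stc(σ) + |DNeg(σ)|`. -/
noncomputable def dstc {n : ℕ} (σ : SignedPerm n) : ℕ :=
  stcStat (sgnWord σ) + (dnegSet σ).card

/-- `ddes(σ) = des(σ) + |DNeg(σ)|`. -/
def ddes {n : ℕ} (σ : SignedPerm n) : ℕ := desStat (sgnWord σ) + (dnegSet σ).card

/-- Biagioli's `dmaj(σ) = maj(σ) - ∑_{i ∈ DNeg(σ)} σ(i)` (each value `σ(i) < -1`
contributing `|σ(i)| - 1 = -(σ(i) + 1)`, the shift by one accounting for the
`i - 1` in the definition of `DNeg`). -/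
def dmaj {n : ℕ} (σ : SignedPerm n) : ℕ :=
  majStat (sgnWord σ) + ∑ i ∈ dnegSet σ, ((sgnWord σ i).natAbs - 1)

section PartA
variable {α β : Type*} [LinearOrder α] [LinearOrder β] {n : ℕ}

lemma desSet_comp {g : α → β} (hg : StrictMono g) (w : Fin n → α) :
    desSet (fun i => g (w i)) = desSet w := by
  unfold desSet
  refine Finset.filter_congr fun i hi => exists_congr fun h => ?_
  exact hg.lt_iff_lt

lemma lehmer_comp {g : α → β} (hg : StrictMono g) (w : Fin n → α) :
    lehmer (fun i => g (w i)) = lehmer w := by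
  funext i
  unfold lehmer
  congr 1
  refine Finset.filter_congr fun j _ => and_congr_right fun _ => ?_
  exact hg.lt_iff_lt

lemma desStat_comp {g : α → β} (hg : StrictMono g) (w : Fin n → α) :
    desStat (fun i => g (w i)) = desStat w := by rw [desStat, desSet_comp hg]; rfl

lemma majStat_comp {g : α → β} (hg : StrictMono g) (w : Fin n → α) :
    majStat (fun i => g (w i)) = majStat w := by rw [majStat, desSet_comp hg]; rfl

lemma stcStat_comp {g : α → β} (hg : StrictMono g) (w : Fin n → α) :
    stcStat (fun i => g (w i)) = stcStat w := by rw [stcStat, lehmer_comp hg]; rfl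

lemma invStat_eq_sum (w : Fin n → α) : invStat w = ∑ i, lehmer w i := by
  rw [invStat, Finset.card_filter, Fintype.sum_prod_type]
  exact Finset.sum_congr rfl fun i _ => (Finset.card_filter _ _).symm

lemma invStat_comp {g : α → β} (hg : StrictMono g) (w : Fin n → α) :
    invStat (fun i => g (w i)) = invStat w := by
  rw [invStat_eq_sum, invStat_eq_sum, lehmer_comp hg]

end PartA

section PartB
variable {n : ℕ}

lemma hasStaircase_zero (c : Fin n → ℕ) : hasStaircase c 0 :=
  ⟨Fin.elim0, fun a => a.elim0, fun k => k.elim0⟩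

lemma hasStaircase_le {c : Fin n → ℕ} {r : ℕ} (h : hasStaircase c r) : r ≤ n := by
  obtain ⟨f, hf, -⟩ := h
  simpa using Fintype.card_le_of_injective f hf.injective

lemma hasStaircase_mono {c : Fin n → ℕ} {r r' : ℕ} (hr : r' ≤ r) (h : hasStaircase c r) :
    hasStaircase c r' := by
  obtain ⟨f, hf, hp⟩ := h
  refine ⟨fun k => f ⟨k + (r - r'), by omega⟩, fun a b hab => hf (by simpa using hab), fun k => ?_⟩
  have := hp ⟨k + (r - r'), by omega⟩
  simp only at this ⊢
  omega

lemma bddAbove_staircase (c : Fin n → ℕ) : BddAbove {r | hasStaircase c r} :=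
  ⟨n, fun _ hr => hasStaircase_le hr⟩

lemma hasStaircase_stcWord (c : Fin n → ℕ) : hasStaircase c (stcWord c) :=
  Nat.sSup_mem (Set.nonempty_of_mem (hasStaircase_zero c)) (bddAbove_staircase c)

lemma le_stcWord {c : Fin n → ℕ} {r : ℕ} (h : hasStaircase c r) : r ≤ stcWord c :=
  le_csSup (bddAbove_staircase c) h

lemma stcWord_le {c : Fin n → ℕ} {s : ℕ} (h : ∀ r, hasStaircase c r → r ≤ s) :
    stcWord c ≤ s :=
  csSup_le (Set.nonempty_of_mem (hasStaircase_zero c)) h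

lemma hasStaircase_cons_iff (v : ℕ) (c : Fin n → ℕ) (r : ℕ) :
    hasStaircase (Fin.cons v c) (r + 1) ↔
      (r + 1 ≤ v ∧ hasStaircase c r) ∨ hasStaircase c (r + 1) := by
  constructor
  · rintro ⟨f, hf, hp⟩
    by_cases h0 : f 0 = 0
    · left
      have hv := hp 0
      rw [h0] at hv
      simp only [Fin.cons_zero, Fin.val_zero] at hv
      refine ⟨by omega, fun k => (f k.succ).pred ?_, ?_, fun k => ?_⟩
      · intro hc
        have : (0 : Fin (r+1)) < k.succ := Fin.succ_pos k
        have := hf this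
        rw [h0, hc] at this
        exact lt_irrefl _ this
      · intro a b hab
        rw [Fin.pred_lt_pred_iff]
        exact hf (by simpa using hab)
      · have hps := hp k.succ
        simp only
        have hne : f k.succ ≠ 0 := by
          intro hc
          have h01 : (0 : Fin (r+1)) < k.succ := Fin.succ_pos k
          have := hf h01
          rw [h0, hc] at this
          exact lt_irrefl _ this
        have hcv : (Fin.cons v c : Fin (n+1) → ℕ) (f k.succ) = c ((f k.succ).pred hne) := by
          conv_lhs => rw [← Fin.succ_pred (f k.succ) hne]
          rw [Fin.cons_succ]
        rw [hcv] at hps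
        simp only [Fin.val_succ] at hps
        omega
    · right
      refine ⟨fun k => (f k).pred ?_, ?_, fun k => ?_⟩
      · intro hc
        rcases eq_or_lt_of_le (Fin.zero_le k) with hk | hk
        · exact h0 (by rw [← hk] at hc; exact hc)
        · have := hf hk
          rw [hc] at this
          exact absurd this (by simp)
      · intro a b hab
        rw [Fin.pred_lt_pred_iff]
        exact hf hab
      · have hps := hp k
        simp only
        have hne : f k ≠ 0 := by
          intro hc
          rcases eq_or_lt_of_le (Fin.zero_le k) with hk | hk
          · exact h0 (by rw [← hk] at hc; exact hc)
          · have := hf hk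
            rw [hc] at this
            exact absurd this (by simp)
        have hcv : (Fin.cons v c : Fin (n+1) → ℕ) (f k) = c ((f k).pred hne) := by
          conv_lhs => rw [← Fin.succ_pred (f k) hne]
          rw [Fin.cons_succ]
        rw [hcv] at hps
        exact hps
  · rintro (⟨hv, f, hf, hp⟩ | ⟨f, hf, hp⟩)
    · refine ⟨Fin.cons 0 (fun k => (f k).succ), ?_, fun k => ?_⟩
      · intro a b hab
        induction b using Fin.cases with
        | zero => exact absurd hab (by simp)
        | succ b =>
          induction a using Fin.cases with
          | zero => simp [Fin.succ_pos]
          | succ a =>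
            simp only [Fin.cons_succ]
            exact Fin.succ_lt_succ_iff.mpr (hf (by simpa using hab))
      · induction k using Fin.cases with
        | zero => simp; omega
        | succ k =>
          simp only [Fin.cons_succ]
          have := hp k
          simp only [Fin.val_succ]
          omega
    · refine ⟨fun k => (f k).succ, fun a b hab => Fin.succ_lt_succ_iff.mpr (hf hab), fun k => ?_⟩
      simpa using hp k

lemma stcWord_cons (v : ℕ) (c : Fin n → ℕ) :
    stcWord (Fin.cons v c) = stcWord c + if stcWord c < v then 1 else 0 := by
  set s := stcWord c with hs
  by_cases hv : s < v
  · rw [if_pos hv]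
    refine le_antisymm (stcWord_le fun r hr => ?_) (le_stcWord ?_)
    · match r with
      | 0 => omega
      | r + 1 =>
        rcases (hasStaircase_cons_iff v c r).mp hr with ⟨-, h⟩ | h
        · have := le_stcWord h; omega
        · have := le_stcWord h; omega
    · exact (hasStaircase_cons_iff v c s).mpr (Or.inl ⟨by omega, hasStaircase_stcWord c⟩)
  · rw [if_neg hv]
    refine le_antisymm (stcWord_le fun r hr => ?_) (le_stcWord ?_)
    · match r with
      | 0 => omega
      | r + 1 =>
        rcases (hasStaircase_cons_iff v c r).mp hr with ⟨h1, -⟩ | h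
        · omega
        · exact le_stcWord h
    · have hsc : hasStaircase c s := hasStaircase_stcWord c
      match hss : s, hsc with
      | 0, _ => exact hasStaircase_zero _
      | t + 1, hsc => exact (hasStaircase_cons_iff v c t).mpr (Or.inr hsc)

end PartB
section PartC
variable {α M : Type*} [LinearOrder α] [AddCommMonoid M]

lemma sum_rank (S : Finset α) (F : ℕ → M) :
    ∑ p ∈ S, F ((S.filter (· < p)).card) = ∑ i ∈ Finset.range S.card, F i := by
  induction S using Finset.strongInduction with
  | _ S ih =>
    rcases S.eq_empty_or_nonempty with rfl | hne
    · simp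
    · have hmax := S.max'_mem hne
      set m := S.max' hne with hm
      have hflt : S.filter (· < m) = S.erase m := by
        ext x
        simp only [Finset.mem_filter, Finset.mem_erase]
        exact ⟨fun ⟨hx, hlt⟩ => ⟨ne_of_lt hlt, hx⟩,
          fun ⟨hne', hx⟩ => ⟨hx, lt_of_le_of_ne (S.le_max' x hx) hne'⟩⟩
      have hcard1 : 1 ≤ S.card := Finset.card_pos.mpr hne
      rw [← Finset.sum_erase_add S _ hmax]
      have hfil : ∀ x ∈ S.erase m, F ((S.filter (· < x)).card)
          = F (((S.erase m).filter (· < x)).card) := by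
        intro x hx
        have hxm : m ∉ S.filter (· < x) := by
          simp only [Finset.mem_filter, not_and]
          intro _
          exact not_lt.mpr (S.le_max' x (Finset.mem_of_mem_erase hx))
        rw [Finset.filter_erase, Finset.erase_eq_of_notMem hxm]
      rw [Finset.sum_congr rfl hfil, ih (S.erase m) (Finset.erase_ssubset hmax),
        Finset.card_erase_of_mem hmax, hflt, Finset.card_erase_of_mem hmax]
      have : S.card = (S.card - 1) + 1 := by omega
      rw [this, Finset.sum_range_succ, Nat.add_sub_cancel]

end PartC

section PartD

lemma coeff_coeff_sum {γ : Type*} (u : Finset γ) (a b : γ → ℕ) (i j : ℕ) :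
    (((∑ σ ∈ u, xP ^ a σ * qP ^ b σ).coeff i).coeff j : ℤ)
      = ((u.filter fun σ => a σ = i ∧ b σ = j).card : ℤ) := by
  classical
  rw [Polynomial.finset_sum_coeff]
  have h1 : ∀ σ, (xP ^ a σ * qP ^ b σ).coeff i
      = if a σ = i then (Polynomial.X : Polynomial ℤ) ^ b σ else 0 := by
    intro σ
    rw [xP, qP, mul_comm, ← Polynomial.C_pow, Polynomial.coeff_C_mul,
      Polynomial.coeff_X_pow]
    split_ifs <;> simp_all
  rw [Finset.sum_congr rfl fun σ _ => h1 σ, ← Finset.sum_filter,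
    Polynomial.finset_sum_coeff]
  have h2 : ∀ σ, ((Polynomial.X : Polynomial ℤ) ^ b σ).coeff j
      = if b σ = j then 1 else 0 := by
    intro σ
    rw [Polynomial.coeff_X_pow]
    simp [eq_comm]
  rw [Finset.sum_congr rfl fun σ _ => h2 σ, ← Finset.sum_filter, Finset.filter_filter]
  simp

lemma transfer {γ δ : Type*} {M : Type*} [AddCommMonoid M] (s : Finset γ) (t : Finset δ)
    (a b : γ → ℕ) (c d : δ → ℕ)
    (h : ∑ σ ∈ s, xP ^ a σ * qP ^ b σ = ∑ σ ∈ t, xP ^ c σ * qP ^ d σ)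
    (F : ℕ → ℕ → M) :
    ∑ σ ∈ s, F (a σ) (b σ) = ∑ σ ∈ t, F (c σ) (d σ) := by
  classical
  have hcard : ∀ i j : ℕ, (s.filter fun σ => a σ = i ∧ b σ = j).card
      = (t.filter fun σ => c σ = i ∧ d σ = j).card := by
    intro i j
    have := coeff_coeff_sum s a b i j
    rw [h, coeff_coeff_sum t c d i j] at this
    exact_mod_cast this.symm
  set P := ((s.image a ∪ t.image c) ×ˢ (s.image b ∪ t.image d)) with hP
  have hs : ∀ σ ∈ s, (a σ, b σ) ∈ P := fun σ hσ => by
    simp only [hP, Finset.mem_product, Finset.mem_union, Finset.mem_image]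
    exact ⟨Or.inl ⟨σ, hσ, rfl⟩, Or.inl ⟨σ, hσ, rfl⟩⟩
  have ht : ∀ σ ∈ t, (c σ, d σ) ∈ P := fun σ hσ => by
    simp only [hP, Finset.mem_product, Finset.mem_union, Finset.mem_image]
    exact ⟨Or.inr ⟨σ, hσ, rfl⟩, Or.inr ⟨σ, hσ, rfl⟩⟩
  rw [← Finset.sum_fiberwise_of_maps_to hs (fun σ => F (a σ) (b σ)),
    ← Finset.sum_fiberwise_of_maps_to ht (fun σ => F (c σ) (d σ))]
  refine Finset.sum_congr rfl fun p _ => ?_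
  have e1 : ∀ σ ∈ s.filter (fun σ => (a σ, b σ) = p), F (a σ) (b σ) = F p.1 p.2 := by
    intro σ hσ
    rw [Finset.mem_filter] at hσ
    rw [← hσ.2]
  have e2 : ∀ σ ∈ t.filter (fun σ => (c σ, d σ) = p), F (c σ) (d σ) = F p.1 p.2 := by
    intro σ hσ
    rw [Finset.mem_filter] at hσ
    rw [← hσ.2]
  rw [Finset.sum_congr rfl e1, Finset.sum_congr rfl e2, Finset.sum_const, Finset.sum_const]
  have h1' : filter (fun σ => (a σ, b σ) = p) s = filter (fun σ => a σ = p.1 ∧ b σ = p.2) s :=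
    Finset.filter_congr fun σ _ => by simp [Prod.ext_iff]
  have h2' : filter (fun σ => (c σ, d σ) = p) t = filter (fun σ => c σ = p.1 ∧ d σ = p.2) t :=
    Finset.filter_congr fun σ _ => by simp [Prod.ext_iff]
  rw [h1', h2', hcard]

end PartD
section PartE
variable {n : ℕ}

lemma card_filter_comp_perm {β : Type*} [Fintype β] [DecidableEq β] (τ : Equiv.Perm β)
    (P : β → Prop) [DecidablePred P] :
    (Finset.univ.filter fun i => P (τ i)).card = (Finset.univ.filter P).card := by
  refine Finset.card_bij' (fun i _ => τ i) (fun j _ => τ.symm j) ?_ ?_ ?_ ?_ <;>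
    simp [Finset.mem_filter]

lemma card_filter_pos_and (P : Fin (n+1) → Prop) [DecidablePred P] :
    (Finset.univ.filter fun j : Fin (n+1) => 0 < j ∧ P j).card
      = (Finset.univ.filter fun j : Fin n => P j.succ).card := by
  have key : (Finset.univ.filter fun j : Fin n => P j.succ).card
      = (Finset.univ.filter fun j : Fin (n+1) => 0 < j ∧ P j).card := by
    apply Finset.card_bij (fun (j : Fin n) _ => j.succ)
    · intro j hj
      simp only [Finset.mem_filter] at hj ⊢
      exact ⟨Finset.mem_univ _, Fin.succ_pos j, hj.2⟩
    · intro a _ b _ hab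
      exact Fin.succ_injective n hab
    · intro j hj
      simp only [Finset.mem_filter] at hj
      refine ⟨j.pred (Fin.pos_iff_ne_zero.mp hj.2.1), ?_, ?_⟩
      · simp only [Finset.mem_filter]
        refine ⟨Finset.mem_univ _, ?_⟩
        rw [Fin.succ_pred]
        exact hj.2.2
      · rw [Fin.succ_pred]
  exact key.symm

lemma card_filter_val_lt {m : ℕ} (hm : m ≤ n) :
    (Finset.univ.filter fun y : Fin n => (y : ℕ) < m).card = m := by
  have : (Finset.univ.filter fun y : Fin n => (y : ℕ) < m).card = (Finset.range m).card := by
    apply Finset.card_bij (fun (y : Fin n) _ => (y : ℕ))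
    · intro y hy
      simp only [Finset.mem_filter] at hy
      simpa using hy.2
    · intro a ha b hb hab
      exact Fin.val_injective hab
    · intro v hv
      simp only [Finset.mem_range] at hv
      exact ⟨⟨v, by omega⟩, by simp [hv], rfl⟩
  rw [this, Finset.card_range]

noncomputable def consPerm (v : Fin (n+1)) (τ : Equiv.Perm (Fin n)) : Equiv.Perm (Fin (n+1)) :=
  Equiv.ofBijective (Fin.cons v (fun i => v.succAbove (τ i)))
    (Finite.injective_iff_bijective.mp (by
      intro x y hxy
      induction x using Fin.cases with
      | zero =>
        induction y using Fin.cases with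
        | zero => rfl
        | succ y =>
          rw [Fin.cons_zero, Fin.cons_succ] at hxy
          exact absurd hxy.symm (Fin.succAbove_ne v (τ y))
      | succ x =>
        induction y using Fin.cases with
        | zero =>
          rw [Fin.cons_zero, Fin.cons_succ] at hxy
          exact absurd hxy (Fin.succAbove_ne v (τ x))
        | succ y =>
          rw [Fin.cons_succ, Fin.cons_succ] at hxy
          rw [τ.injective (Fin.succAbove_right_injective hxy)]))

lemma consPerm_apply (v : Fin (n+1)) (τ : Equiv.Perm (Fin n)) :
    ⇑(consPerm v τ) = Fin.cons v (fun i => v.succAbove (τ i)) := rfl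

lemma pairing_bijective :
    Function.Bijective (fun p : Fin (n+1) × Equiv.Perm (Fin n) => consPerm p.1 p.2) := by
  constructor
  · rintro ⟨v, τ⟩ ⟨v', τ'⟩ h
    have h2 : consPerm v τ = consPerm v' τ' := h
    have hfun : ∀ x, consPerm v τ x = consPerm v' τ' x := fun x => by rw [h2]
    have h0 : v = v' := by
      have := hfun 0
      rwa [consPerm_apply, consPerm_apply, Fin.cons_zero, Fin.cons_zero] at this
    subst h0
    have hτ : τ = τ' := by
      apply Equiv.ext
      intro i
      have := hfun i.succ
      rw [consPerm_apply, consPerm_apply, Fin.cons_succ, Fin.cons_succ] at this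
      exact Fin.succAbove_right_injective this
    rw [hτ]
  · intro σ
    set v := σ 0 with hv
    have hne : ∀ i : Fin n, σ i.succ ≠ v := by
      intro i hc
      have := σ.injective hc
      exact (Fin.succ_ne_zero i) this
    have hsome : ∀ i : Fin n, (finSuccEquiv' v (σ i.succ)).isSome := by
      intro i
      rcases ho : finSuccEquiv' v (σ i.succ) with _ | j
      · exfalso
        apply hne i
        have := congrArg (finSuccEquiv' v).symm ho
        rwa [Equiv.symm_apply_apply, finSuccEquiv'_symm_none] at this
      · rfl
    set t : Fin n → Fin n := fun i => (finSuccEquiv' v (σ i.succ)).get (hsome i) with ht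
    have hts : ∀ i, v.succAbove (t i) = σ i.succ := by
      intro i
      have : (finSuccEquiv' v).symm (some (t i)) = v.succAbove (t i) :=
        finSuccEquiv'_symm_some v (t i)
      rw [← this, ht]
      simp only [Option.some_get]
      exact Equiv.symm_apply_apply _ _
    have htinj : Function.Injective t := by
      intro i i' hii
      have : σ i.succ = σ i'.succ := by rw [← hts i, ← hts i', hii]
      exact Fin.succ_injective n (σ.injective this)
    refine ⟨⟨v, Equiv.ofBijective t (Finite.injective_iff_bijective.mp htinj)⟩, ?_⟩
    apply Equiv.ext
    intro x
    induction x using Fin.cases with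
    | zero => rw [consPerm_apply, Fin.cons_zero, hv]
    | succ x =>
      rw [consPerm_apply, Fin.cons_succ]
      exact hts x

lemma lehmer_consPerm (v : Fin (n+1)) (τ : Equiv.Perm (Fin n)) :
    lehmer ⇑(consPerm v τ) = Fin.cons (v : ℕ) (lehmer ⇑τ) := by
  rw [consPerm_apply]
  set w : Fin (n+1) → Fin (n+1) := Fin.cons v (fun i => v.succAbove (τ i)) with hw
  funext i
  induction i using Fin.cases with
  | zero =>
    rw [Fin.cons_zero, lehmer]
    have h1 : (Finset.univ.filter fun j => (0 : Fin (n+1)) < j ∧ w j < w 0).card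
        = (Finset.univ.filter fun j : Fin n => w j.succ < w 0).card :=
      card_filter_pos_and _
    rw [h1]
    have h2 : ∀ j : Fin n, (w j.succ < w 0) ↔ v.succAbove (τ j) < v := by
      intro j
      rw [hw, Fin.cons_succ, Fin.cons_zero]
    rw [Finset.filter_congr fun j _ => h2 j,
      card_filter_comp_perm τ (fun y => v.succAbove y < v)]
    have h3 : ∀ y : Fin n, (v.succAbove y < v) ↔ (y : ℕ) < (v : ℕ) := by
      intro y
      rw [Fin.succAbove_lt_iff_castSucc_lt]
      exact Iff.rfl
    rw [Finset.filter_congr fun y _ => h3 y, card_filter_val_lt (by omega)]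
  | succ i =>
    rw [Fin.cons_succ, lehmer, lehmer]
    have h1 : ∀ j : Fin (n+1), (i.succ < j ∧ w j < w i.succ)
        ↔ (0 < j ∧ (i.succ < j ∧ w j < w i.succ)) := by
      intro j
      constructor
      · intro h
        exact ⟨lt_of_le_of_lt (Fin.zero_le _) h.1, h⟩
      · exact fun h => h.2
    rw [Finset.filter_congr fun j _ => h1 j,
      card_filter_pos_and (fun j => i.succ < j ∧ w j < w i.succ)]
    congr 1
    refine Finset.filter_congr fun j _ => ?_
    rw [Fin.succ_lt_succ_iff, hw, Fin.cons_succ, Fin.cons_succ]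
    constructor
    · rintro ⟨h1', h2'⟩
      exact ⟨h1', (Fin.strictMono_succAbove v).lt_iff_lt.mp h2'⟩
    · rintro ⟨h1', h2'⟩
      exact ⟨h1', (Fin.strictMono_succAbove v).lt_iff_lt.mpr h2'⟩

lemma stcStat_consPerm (v : Fin (n+1)) (τ : Equiv.Perm (Fin n)) :
    stcStat ⇑(consPerm v τ) = stcStat ⇑τ + if stcStat ⇑τ < (v : ℕ) then 1 else 0 := by
  rw [stcStat, lehmer_consPerm, stcWord_cons, stcStat]

lemma invStat_consPerm (v : Fin (n+1)) (τ : Equiv.Perm (Fin n)) :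
    invStat ⇑(consPerm v τ) = invStat ⇑τ + (v : ℕ) := by
  rw [invStat_eq_sum, invStat_eq_sum, lehmer_consPerm, Fin.sum_cons, add_comm]

lemma stc_side (n : ℕ) :
    ∑ σ : Equiv.Perm (Fin (n+1)), xP ^ stcStat ⇑σ * qP ^ invStat ⇑σ
      = ∑ τ : Equiv.Perm (Fin n), ∑ v ∈ Finset.range (n+1),
          xP ^ (stcStat ⇑τ + if stcStat ⇑τ < v then 1 else 0) * qP ^ (invStat ⇑τ + v) := by
  have hre := Fintype.sum_bijective _ pairing_bijective
    (fun p : Fin (n+1) × Equiv.Perm (Fin n) =>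
      xP ^ stcStat ⇑(consPerm p.1 p.2) * qP ^ invStat ⇑(consPerm p.1 p.2))
    (fun σ => xP ^ stcStat ⇑σ * qP ^ invStat ⇑σ) (fun p => rfl)
  rw [← hre, Fintype.sum_prod_type_right]
  refine Finset.sum_congr rfl fun τ _ => ?_
  rw [← Fin.sum_univ_eq_sum_range
    (fun v => xP ^ (stcStat ⇑τ + if stcStat ⇑τ < v then 1 else 0) * qP ^ (invStat ⇑τ + v)) (n+1)]
  refine Finset.sum_congr rfl fun v _ => ?_
  simp only [stcStat_consPerm, invStat_consPerm]

end PartE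
section PartF
variable {α : Type*} [LinearOrder α] {n : ℕ}

lemma mem_desSet {m : ℕ} {w : Fin m → α} {i : ℕ} :
    i ∈ desSet w ↔ 1 ≤ i ∧ ∃ h : i < m,
      w ⟨i, h⟩ < w ⟨i - 1, Nat.lt_of_le_of_lt (Nat.sub_le i 1) h⟩ := by
  unfold desSet
  simp only [Finset.mem_filter, Finset.mem_Ico]
  constructor
  · rintro ⟨⟨h1, h2⟩, h3⟩
    exact ⟨h1, h3⟩
  · rintro ⟨h1, h, h3⟩
    exact ⟨⟨h1, h⟩, h, h3⟩

lemma insertNth_val_lt {p : Fin (n+1)} {x : α} {u : Fin n → α} {i : ℕ} (h : i < n+1)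
    (hip : i < p.val) :
    (Fin.insertNth p x u : Fin (n+1) → α) ⟨i, h⟩ = u ⟨i, by omega⟩ := by
  have hin : i < n := by omega
  have heq : (⟨i, h⟩ : Fin (n+1)) = p.succAbove ⟨i, hin⟩ := by
    rw [Fin.succAbove_of_castSucc_lt]
    · rfl
    · rw [Fin.lt_def]
      exact hip
  rw [heq, Fin.insertNth_apply_succAbove]

lemma insertNth_val_eq {p : Fin (n+1)} {x : α} {u : Fin n → α} {i : ℕ} (h : i < n+1)
    (hip : i = p.val) :
    (Fin.insertNth p x u : Fin (n+1) → α) ⟨i, h⟩ = x := by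
  have heq : (⟨i, h⟩ : Fin (n+1)) = p := by
    apply Fin.ext
    exact hip
  rw [heq, Fin.insertNth_apply_same]

lemma insertNth_val_gt {p : Fin (n+1)} {x : α} {u : Fin n → α} {i : ℕ} (h : i < n+1)
    (hip : p.val < i) :
    (Fin.insertNth p x u : Fin (n+1) → α) ⟨i, h⟩ = u ⟨i - 1, by omega⟩ := by
  have heq : (⟨i, h⟩ : Fin (n+1)) = p.succAbove ⟨i - 1, by omega⟩ := by
    rw [Fin.succAbove_of_le_castSucc]
    · apply Fin.ext
      simp [Fin.val_succ]
      omega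
    · rw [Fin.le_def]
      simp only [Fin.coe_castSucc]
      omega
  rw [heq, Fin.insertNth_apply_succAbove]

lemma desSet_insertMax (p : Fin (n+1)) (u : Fin n → α) (x : α) (hx : ∀ i, u i < x) :
    desSet (Fin.insertNth p x u : Fin (n+1) → α)
      = (desSet u).image (fun i => if i < p.val then i else i + 1)
        ∪ (if p.val < n then {p.val + 1} else ∅) := by
  have hp : p.val ≤ n := by omega
  ext i
  simp only [Finset.mem_union, Finset.mem_image]
  constructor
  · intro hi
    rw [mem_desSet] at hi
    obtain ⟨h1, h, hlt⟩ := hi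
    rcases lt_trichotomy i p.val with hip | hip | hip
    · rw [insertNth_val_lt (i := i) h hip,
        insertNth_val_lt (i := i - 1) (by omega) (by omega)] at hlt
      left
      refine ⟨i, ?_, by rw [if_pos hip]⟩
      rw [mem_desSet]
      refine ⟨h1, by omega, ?_⟩
      convert hlt using 2 <;> first | rfl | (simp only [Fin.mk.injEq]; omega)
    · exfalso
      rw [insertNth_val_eq (i := i) h hip,
        insertNth_val_lt (i := i - 1) (by omega) (by omega)] at hlt
      exact absurd hlt (not_lt.mpr (le_of_lt (hx _)))
    · rcases Nat.eq_or_lt_of_le (Nat.succ_le_of_lt hip) with hip1 | hip1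
      · right
        have hpn : p.val < n := by omega
        rw [if_pos hpn]
        simp only [Finset.mem_singleton]
        omega
      · left
        rw [insertNth_val_gt (i := i) h hip,
          insertNth_val_gt (i := i - 1) (by omega) (by omega)] at hlt
        refine ⟨i - 1, ?_, ?_⟩
        · rw [mem_desSet]
          refine ⟨by omega, by omega, ?_⟩
          convert hlt using 2 <;> first | rfl | (simp only [Fin.mk.injEq]; omega)
        · rw [if_neg (by omega)]
          omega
  · intro hi
    rcases hi with ⟨j, hj, hji⟩ | hi
    · rw [mem_desSet] at hj
      obtain ⟨hj1, hjn, hjlt⟩ := hj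
      by_cases hjp : j < p.val
      · rw [if_pos hjp] at hji
        subst hji
        rw [mem_desSet]
        refine ⟨hj1, by omega, ?_⟩
        rw [insertNth_val_lt (i := j) (by omega) (by omega),
          insertNth_val_lt (i := j - 1) (by omega) (by omega)]
        convert hjlt using 2 <;> first | rfl | (simp only [Fin.mk.injEq]; omega)
      · rw [if_neg hjp] at hji
        subst hji
        rw [mem_desSet]
        refine ⟨by omega, by omega, ?_⟩
        rw [insertNth_val_gt (i := j + 1) (by omega) (by omega)]
        by_cases hjp' : j = p.val
        · rw [insertNth_val_eq (i := j + 1 - 1) (by omega) (by omega)]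
          exact hx _
        · rw [insertNth_val_gt (i := j + 1 - 1) (by omega) (by omega)]
          convert hjlt using 2 <;> first | rfl | (simp only [Fin.mk.injEq]; omega)
    · by_cases hpn : p.val < n
      · rw [if_pos hpn] at hi
        simp only [Finset.mem_singleton] at hi
        subst hi
        rw [mem_desSet]
        refine ⟨by omega, by omega, ?_⟩
        rw [insertNth_val_gt (i := p.val + 1) (by omega) (by omega),
          insertNth_val_eq (i := p.val + 1 - 1) (by omega) (by omega)]
        exact hx _
      · rw [if_neg hpn] at hi
        exact absurd hi (Finset.notMem_empty i)
lemma shift_injective (p : ℕ) : Function.Injective (fun i : ℕ => if i < p then i else i + 1) := by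
  intro a b hab
  dsimp at hab
  split_ifs at hab <;> omega

lemma image_shift_mem {D : Finset ℕ} {p : ℕ} :
    p + 1 ∈ D.image (fun i => if i < p then i else i + 1) ↔ p ∈ D := by
  simp only [Finset.mem_image]
  constructor
  · rintro ⟨j, hj, hji⟩
    split_ifs at hji <;> [omega; (rwa [show j = p by omega] at hj)]
  · intro hp
    exact ⟨p, hp, by rw [if_neg (lt_irrefl p)]⟩

lemma desStat_insertMax (p : Fin (n+1)) (u : Fin n → α) (x : α) (hx : ∀ i, u i < x) :
    desStat (Fin.insertNth p x u : Fin (n+1) → α)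
      = desStat u + (if p.val < n ∧ p.val ∉ desSet u then 1 else 0) := by
  rw [desStat, desStat, desSet_insertMax p u x hx]
  set D := desSet u with hD
  by_cases hpn : p.val < n
  · by_cases hpD : p.val ∈ D
    · have hU : D.image (fun i => if i < p.val then i else i + 1) ∪ {p.val + 1}
          = D.image (fun i => if i < p.val then i else i + 1) :=
        Finset.union_eq_left.mpr (Finset.singleton_subset_iff.mpr (image_shift_mem.mpr hpD))
      rw [if_pos hpn, if_neg (by simp [hpn, hpD]), hU,
        Finset.card_image_of_injective D (shift_injective p.val), add_zero]
    · have hdisj : Disjoint (D.image (fun i => if i < p.val then i else i + 1)) {p.val + 1} :=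
        Finset.disjoint_singleton_right.mpr (fun hc => hpD (image_shift_mem.mp hc))
      rw [if_pos hpn, if_pos ⟨hpn, hpD⟩, Finset.card_union_of_disjoint hdisj,
        Finset.card_image_of_injective D (shift_injective p.val), Finset.card_singleton]
  · rw [if_neg hpn, if_neg (by simp [hpn]), Finset.union_empty,
      Finset.card_image_of_injective D (shift_injective p.val), add_zero]

lemma majStat_insertMax (p : Fin (n+1)) (u : Fin n → α) (x : α) (hx : ∀ i, u i < x) :
    majStat (Fin.insertNth p x u : Fin (n+1) → α)
      = majStat u + ((desSet u).filter (fun j => p.val ≤ j)).card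
        + (if p.val < n ∧ p.val ∉ desSet u then (p.val + 1) else 0) := by
  rw [majStat, majStat, desSet_insertMax p u x hx]
  set D := desSet u with hD
  have hsumf : ∑ i ∈ D.image (fun i => if i < p.val then i else i + 1), i
      = ∑ i ∈ D, i + (D.filter (fun j => p.val ≤ j)).card := by
    rw [Finset.sum_image (fun a _ b _ hab => shift_injective p.val hab)]
    have hterm : ∀ j ∈ D, (if j < p.val then j else j + 1)
        = j + (if p.val ≤ j then 1 else 0) := by
      intro j _
      split_ifs <;> omega
    rw [Finset.sum_congr rfl hterm, Finset.sum_add_distrib]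
    congr 1
    rw [Finset.card_filter]
  by_cases hpn : p.val < n
  · by_cases hpD : p.val ∈ D
    · have hU : D.image (fun i => if i < p.val then i else i + 1) ∪ {p.val + 1}
          = D.image (fun i => if i < p.val then i else i + 1) :=
        Finset.union_eq_left.mpr (Finset.singleton_subset_iff.mpr (image_shift_mem.mpr hpD))
      rw [if_pos hpn, if_neg (by simp [hpn, hpD]), hU, hsumf, add_zero]
    · have hdisj : Disjoint (D.image (fun i => if i < p.val then i else i + 1)) {p.val + 1} :=
        Finset.disjoint_singleton_right.mpr (fun hc => hpD (image_shift_mem.mp hc))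
      rw [if_pos hpn, if_pos ⟨hpn, hpD⟩, Finset.sum_union hdisj, hsumf, Finset.sum_singleton]
  · rw [if_neg hpn, if_neg (by simp [hpn]), Finset.union_empty, hsumf, add_zero]

noncomputable def insMaxPerm (p : Fin (n+1)) (τ : Equiv.Perm (Fin n)) :
    Equiv.Perm (Fin (n+1)) :=
  Equiv.ofBijective (Fin.insertNth p (Fin.last n) (fun i => (τ i).castSucc) : Fin (n+1) → Fin (n+1))
    (Finite.injective_iff_bijective.mp (by
      intro a b hab
      by_cases ha : a = p <;> by_cases hb : b = p
      · rw [ha, hb]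
      · exfalso
        obtain ⟨j, hj⟩ := Fin.exists_succAbove_eq hb
        rw [ha, ← hj, Fin.insertNth_apply_same, Fin.insertNth_apply_succAbove] at hab
        exact absurd hab.symm (ne_of_lt (Fin.castSucc_lt_last _))
      · exfalso
        obtain ⟨j, hj⟩ := Fin.exists_succAbove_eq ha
        rw [hb, ← hj, Fin.insertNth_apply_same, Fin.insertNth_apply_succAbove] at hab
        exact absurd hab (ne_of_lt (Fin.castSucc_lt_last _))
      · obtain ⟨j, hj⟩ := Fin.exists_succAbove_eq ha
        obtain ⟨j', hj'⟩ := Fin.exists_succAbove_eq hb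
        rw [← hj, ← hj', Fin.insertNth_apply_succAbove, Fin.insertNth_apply_succAbove] at hab
        rw [← hj, ← hj', τ.injective (Fin.castSucc_injective n hab)]))

lemma insMaxPerm_apply (p : Fin (n+1)) (τ : Equiv.Perm (Fin n)) :
    ⇑(insMaxPerm p τ)
      = (Fin.insertNth p (Fin.last n) (fun i => (τ i).castSucc) : Fin (n+1) → Fin (n+1)) := rfl

lemma insPairing_bijective :
    Function.Bijective
      (fun q : Fin (n+1) × Equiv.Perm (Fin n) => insMaxPerm q.1 q.2) := by
  constructor
  · rintro ⟨p, τ⟩ ⟨p', τ'⟩ h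
    have h2 : insMaxPerm p τ = insMaxPerm p' τ' := h
    have hfun : ∀ x, insMaxPerm p τ x = insMaxPerm p' τ' x := fun x => by rw [h2]
    have hpp : p = p' := by
      have h1' := hfun p'
      rw [insMaxPerm_apply, insMaxPerm_apply, Fin.insertNth_apply_same] at h1'
      by_cases hc : p' = p
      · exact hc.symm
      · exfalso
        obtain ⟨j, hj⟩ := Fin.exists_succAbove_eq hc
        rw [← hj, Fin.insertNth_apply_succAbove] at h1'
        exact absurd h1' (ne_of_lt (Fin.castSucc_lt_last _))
    subst hpp
    have hττ : τ = τ' := by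
      apply Equiv.ext
      intro i
      have := hfun (p.succAbove i)
      rw [insMaxPerm_apply, insMaxPerm_apply, Fin.insertNth_apply_succAbove,
        Fin.insertNth_apply_succAbove] at this
      exact Fin.castSucc_injective n this
    rw [hττ]
  · intro σ
    set p := σ.symm (Fin.last n) with hp
    have hσp : σ p = Fin.last n := Equiv.apply_symm_apply σ _
    have hne : ∀ i : Fin n, σ (p.succAbove i) ≠ Fin.last n := by
      intro i hc
      rw [← hσp] at hc
      exact Fin.succAbove_ne p i (σ.injective hc)
    set t : Fin n → Fin n := fun i => (σ (p.succAbove i)).castPred (hne i) with ht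
    have hcp : ∀ i, (t i).castSucc = σ (p.succAbove i) := by
      intro i
      rw [ht]
      exact Fin.castSucc_castPred _ _
    have htinj : Function.Injective t := by
      intro i i' hii
      have : σ (p.succAbove i) = σ (p.succAbove i') := by
        rw [← hcp, ← hcp, hii]
      exact Fin.succAbove_right_injective (σ.injective this)
    refine ⟨⟨p, Equiv.ofBijective t (Finite.injective_iff_bijective.mp htinj)⟩, ?_⟩
    apply Equiv.ext
    intro x
    by_cases hx : x = p
    · rw [hx]
      simp only [insMaxPerm_apply]
      rw [Fin.insertNth_apply_same, hσp]
    · obtain ⟨j, hj⟩ := Fin.exists_succAbove_eq hx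
      rw [← hj]
      simp only [insMaxPerm_apply]
      rw [Fin.insertNth_apply_succAbove]
      exact hcp j

end PartF
section PartF3

lemma slot_sum (n d m : ℕ) (D : Finset ℕ) (hD : D ⊆ Finset.Ico 1 n) (hd : D.card = d) :
    ∑ p ∈ Finset.range (n+1),
      xP ^ (d + if p < n ∧ p ∉ D then 1 else 0)
        * qP ^ (m + (D.filter (fun j => p ≤ j)).card + (if p < n ∧ p ∉ D then p + 1 else 0))
    = ∑ v ∈ Finset.range (n+1), xP ^ (d + if d < v then 1 else 0) * qP ^ (m + v) := by
  have hDr : D ⊆ Finset.range n := fun j hj => by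
    have := hD hj
    rw [Finset.mem_Ico] at this
    rw [Finset.mem_range]
    omega
  have hdn : d ≤ n := by
    rw [← hd, ← Finset.card_range n]
    exact Finset.card_le_card hDr
  have hmemD : ∀ p ∈ D, 1 ≤ p ∧ p < n := fun p hp => by
    have := hD hp
    rwa [Finset.mem_Ico] at this
  have hterm_n : xP ^ (d + if n < n ∧ n ∉ D then 1 else 0)
      * qP ^ (m + (D.filter (fun j => n ≤ j)).card + (if n < n ∧ n ∉ D then n + 1 else 0))
      = xP ^ d * qP ^ m := by
    rw [if_neg (by simp), if_neg (by simp), Finset.filter_false_of_mem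
      (fun j hj => by have := hmemD j hj; omega)]
    simp
  have hsplit : Finset.range n = D ∪ (Finset.range n \ D) :=
    (Finset.union_sdiff_of_subset hDr).symm
  have hcardsplit : ∀ p, (D.filter (fun j => p ≤ j)).card = d - (D.filter (· < p)).card := by
    intro p
    have h1 : (D.filter (· < p)).card + (D.filter (fun j => ¬ j < p)).card = D.card :=
      Finset.card_filter_add_card_filter_not _
    have h2 : D.filter (fun j => ¬ j < p) = D.filter (fun j => p ≤ j) :=
      Finset.filter_congr fun j _ => by omega
    rw [h2] at h1
    omega
  have hsumD : ∑ p ∈ D,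
      xP ^ (d + if p < n ∧ p ∉ D then 1 else 0)
        * qP ^ (m + (D.filter (fun j => p ≤ j)).card + (if p < n ∧ p ∉ D then p + 1 else 0))
      = ∑ j ∈ Finset.range d, xP ^ d * qP ^ (m + (d - j)) := by
    have hr := sum_rank D (fun j => xP ^ d * qP ^ (m + (d - j)))
    rw [hd] at hr
    rw [← hr]
    refine Finset.sum_congr rfl fun p hp => ?_
    rw [if_neg (by simp [hp]), if_neg (by simp [hp]), hcardsplit p]
    simp
  have hsumE : ∑ p ∈ Finset.range n \ D,
      xP ^ (d + if p < n ∧ p ∉ D then 1 else 0)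
        * qP ^ (m + (D.filter (fun j => p ≤ j)).card + (if p < n ∧ p ∉ D then p + 1 else 0))
      = ∑ j ∈ Finset.range (n - d), xP ^ (d+1) * qP ^ (m + d + 1 + j) := by
    have hcardE : (Finset.range n \ D).card = n - d := by
      rw [Finset.card_sdiff_of_subset hDr, Finset.card_range, hd]
    have hr := sum_rank (Finset.range n \ D) (fun j => xP ^ (d+1) * qP ^ (m + d + 1 + j))
    rw [hcardE] at hr
    rw [← hr]
    refine Finset.sum_congr rfl fun p hp => ?_
    rw [Finset.mem_sdiff, Finset.mem_range] at hp
    obtain ⟨hpn, hpD⟩ := hp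
    rw [if_pos ⟨hpn, hpD⟩, if_pos ⟨hpn, hpD⟩, hcardsplit p]
    have hpart : (D.filter (· < p)).card + ((Finset.range n \ D).filter (· < p)).card = p := by
      have hun : D.filter (· < p) ∪ (Finset.range n \ D).filter (· < p)
          = Finset.range p := by
        rw [← Finset.filter_union, ← hsplit]
        ext j
        simp only [Finset.mem_filter, Finset.mem_range]
        exact ⟨fun h => h.2, fun h => ⟨by omega, h⟩⟩
      have hdisj : Disjoint (D.filter (· < p)) ((Finset.range n \ D).filter (· < p)) :=
        Finset.disjoint_filter_filter Finset.disjoint_sdiff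
      rw [← Finset.card_union_of_disjoint hdisj, hun, Finset.card_range]
    have hDltd : (D.filter (· < p)).card ≤ d := by
      rw [← hd]
      exact Finset.card_le_card (Finset.filter_subset _ _)
    have hexp : m + (d - (D.filter (· < p)).card) + (p + 1)
        = m + d + 1 + ((Finset.range n \ D).filter (· < p)).card := by omega
    rw [hexp]
  have hRHS : ∑ v ∈ Finset.range (n+1), xP ^ (d + if d < v then 1 else 0) * qP ^ (m + v)
      = (∑ v ∈ Finset.range (d+1), xP ^ d * qP ^ (m + v))
        + ∑ v ∈ Finset.Ico (d+1) (n+1), xP ^ (d+1) * qP ^ (m + v) := by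
    rw [Finset.range_eq_Ico, ← Finset.sum_Ico_consecutive _ (by omega : 0 ≤ d + 1)
      (by omega : d + 1 ≤ n + 1)]
    refine congrArg₂ (· + ·) ?_ ?_
    · rw [← Finset.range_eq_Ico]
      refine Finset.sum_congr rfl fun v hv => ?_
      rw [Finset.mem_range] at hv
      rw [if_neg (by omega), add_zero]
    · refine Finset.sum_congr rfl fun v hv => ?_
      rw [Finset.mem_Ico] at hv
      rw [if_pos (by omega)]
  rw [hRHS, Finset.range_add_one, Finset.sum_insert (by simp), hterm_n, hsplit,
    Finset.sum_union Finset.disjoint_sdiff, hsumD, hsumE]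
  have hA : xP ^ d * qP ^ m + ∑ j ∈ Finset.range d, xP ^ d * qP ^ (m + (d - j))
      = ∑ v ∈ Finset.range (d+1), xP ^ d * qP ^ (m + v) := by
    rw [Finset.sum_range_succ' (fun v => xP ^ d * qP ^ (m + v)) d, add_comm]
    congr 1
    · rw [← Finset.sum_range_reflect (fun j => xP ^ d * qP ^ (m + (j + 1))) d]
      refine Finset.sum_congr rfl fun j hj => ?_
      rw [Finset.mem_range] at hj
      exact congrArg (fun e => xP ^ d * qP ^ e) (by omega)
  have hB : ∑ j ∈ Finset.range (n - d), xP ^ (d+1) * qP ^ (m + d + 1 + j)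
      = ∑ v ∈ Finset.Ico (d+1) (n+1), xP ^ (d+1) * qP ^ (m + v) := by
    rw [Finset.sum_Ico_eq_sum_range]
    have hnd : n + 1 - (d + 1) = n - d := by omega
    rw [hnd]
    refine Finset.sum_congr rfl fun j hj => ?_
    exact congrArg (fun e => xP ^ (d+1) * qP ^ e) (by omega)
  rw [← hA, ← hB]
  ring

lemma des_side (n : ℕ) :
    ∑ σ : Equiv.Perm (Fin (n+1)), xP ^ desStat ⇑σ * qP ^ majStat ⇑σ
      = ∑ τ : Equiv.Perm (Fin n), ∑ v ∈ Finset.range (n+1),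
          xP ^ (desStat ⇑τ + if desStat ⇑τ < v then 1 else 0) * qP ^ (majStat ⇑τ + v) := by
  have hre := Fintype.sum_bijective _ insPairing_bijective
    (fun q : Fin (n+1) × Equiv.Perm (Fin n) =>
      xP ^ desStat ⇑(insMaxPerm q.1 q.2) * qP ^ majStat ⇑(insMaxPerm q.1 q.2))
    (fun σ => xP ^ desStat ⇑σ * qP ^ majStat ⇑σ) (fun q => rfl)
  rw [← hre, Fintype.sum_prod_type_right]
  refine Finset.sum_congr rfl fun τ _ => ?_
  have hcs : StrictMono (Fin.castSucc : Fin n → Fin (n+1)) := fun a b hab => by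
    rwa [Fin.castSucc_lt_castSucc_iff]
  have hdesu : desSet (fun i => ((τ i).castSucc : Fin (n+1))) = desSet ⇑τ := desSet_comp hcs ⇑τ
  have hx : ∀ i : Fin n, ((τ i).castSucc : Fin (n+1)) < Fin.last n := fun i =>
    Fin.castSucc_lt_last _
  have hstat : ∀ p : Fin (n+1),
      (desStat ⇑(insMaxPerm p τ)
          = desStat ⇑τ + (if p.val < n ∧ p.val ∉ desSet ⇑τ then 1 else 0))
      ∧ majStat ⇑(insMaxPerm p τ)
          = majStat ⇑τ + ((desSet ⇑τ).filter (fun j => p.val ≤ j)).card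
            + (if p.val < n ∧ p.val ∉ desSet ⇑τ then (p.val + 1) else 0) := by
    intro p
    constructor
    · simp only [insMaxPerm_apply]
      rw [desStat_insertMax p _ _ hx]
      simp only [desStat, hdesu]
    · simp only [insMaxPerm_apply]
      rw [majStat_insertMax p _ _ hx]
      simp only [majStat, hdesu]
  have h1 : ∑ p : Fin (n+1),
      xP ^ desStat ⇑(insMaxPerm p τ) * qP ^ majStat ⇑(insMaxPerm p τ)
      = ∑ p ∈ Finset.range (n+1),
        xP ^ (desStat ⇑τ + if p < n ∧ p ∉ desSet ⇑τ then 1 else 0)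
          * qP ^ (majStat ⇑τ + ((desSet ⇑τ).filter (fun j => p ≤ j)).card
            + (if p < n ∧ p ∉ desSet ⇑τ then p + 1 else 0)) := by
    rw [← Fin.sum_univ_eq_sum_range]
    refine Finset.sum_congr rfl fun p _ => ?_
    rw [(hstat p).1, (hstat p).2]
  rw [h1, slot_sum n (desStat ⇑τ) (majStat ⇑τ) (desSet ⇑τ)
    (Finset.filter_subset _ _) rfl]

end PartF3
section PartG

theorem skandera (n : ℕ) :
    ∑ τ : Equiv.Perm (Fin n), xP ^ stcStat ⇑τ * qP ^ invStat ⇑τ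
      = ∑ τ : Equiv.Perm (Fin n), xP ^ desStat ⇑τ * qP ^ majStat ⇑τ := by
  induction n with
  | zero =>
    refine Finset.sum_congr rfl fun τ _ => ?_
    have h1 : stcStat ⇑τ = 0 :=
      Nat.le_zero.mp (stcWord_le fun r hr => hasStaircase_le hr)
    have h2 : invStat ⇑τ = 0 := by
      rw [invStat_eq_sum]
      simp
    have h3 : desSet ⇑τ = ∅ := by
      unfold desSet
      simp
    rw [h1, h2, desStat, majStat, h3]
    simp
  | succ n ih =>
    rw [stc_side n, des_side n]
    exact transfer (Finset.univ : Finset (Equiv.Perm (Fin n)))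
      (Finset.univ : Finset (Equiv.Perm (Fin n)))
      (fun τ : Equiv.Perm (Fin n) => stcStat ⇑τ) (fun τ : Equiv.Perm (Fin n) => invStat ⇑τ)
      (fun τ : Equiv.Perm (Fin n) => desStat ⇑τ) (fun τ : Equiv.Perm (Fin n) => majStat ⇑τ) ih
      (fun d m => ∑ v ∈ Finset.range (n+1), xP ^ (d + if d < v then 1 else 0) * qP ^ (m + v))

end PartG
section PartH
variable {n : ℕ}

lemma sum_filter_comp_perm {β M : Type*} [Fintype β] [DecidableEq β] [AddCommMonoid M]
    (τ : Equiv.Perm β) (P : β → Prop) [DecidablePred P] (f : β → M) :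
    ∑ i ∈ Finset.univ.filter (fun i => P (τ i)), f (τ i)
      = ∑ r ∈ Finset.univ.filter P, f r := by
  refine Finset.sum_bij (fun i _ => τ i) ?_ ?_ ?_ ?_
  · intro i hi
    simp only [Finset.mem_filter] at hi ⊢
    exact ⟨Finset.mem_univ _, hi.2⟩
  · intro a _ b _ hab
    exact τ.injective hab
  · intro r hr
    simp only [Finset.mem_filter] at hr
    exact ⟨τ.symm r, by simp [hr.2], by simp⟩
  · intro i _
    rfl

lemma sgnWord_natAbs (σ : SignedPerm n) (i : Fin n) :
    (sgnWord σ i).natAbs = (σ.1 i : ℕ) + 1 := by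
  unfold sgnWord
  split_ifs <;> omega

lemma sgnWord_neg_iff (σ : SignedPerm n) (i : Fin n) :
    sgnWord σ i < 0 ↔ σ.2 i = true := by
  unfold sgnWord
  split_ifs with h
  · constructor
    · intro _
      exact h
    · intro _
      omega
  · constructor
    · intro hc
      exfalso
      omega
    · intro hc
      exact absurd hc h

lemma sgnWord_injective (σ : SignedPerm n) : Function.Injective (sgnWord σ) := by
  intro i j hij
  have h1 : (sgnWord σ i).natAbs = (sgnWord σ j).natAbs := by rw [hij]
  rw [sgnWord_natAbs, sgnWord_natAbs] at h1
  have h2 : σ.1 i = σ.1 j := Fin.ext (by omega)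
  exact σ.1.injective h2

lemma nspStat_eq_sum (σ : SignedPerm n) :
    nspStat (sgnWord σ)
      = ∑ i ∈ Finset.univ.filter (fun i => sgnWord σ i < 0), ((sgnWord σ i).natAbs - 1) := by
  classical
  set w := sgnWord σ with hw
  have hwinj : Function.Injective w := sgnWord_injective σ
  -- step 1: sort pairs by value
  have step1 : nspStat w
      = ((Finset.univ : Finset (Fin n × Fin n)).filter
          fun p => w p.1 < w p.2 ∧ w p.2 < -(w p.1)).card := by
    rw [nspStat]
    refine Finset.card_bij' (fun p _ => if w p.1 < w p.2 then p else (p.2, p.1))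
      (fun q _ => if q.1 < q.2 then q else (q.2, q.1)) ?_ ?_ ?_ ?_
    · intro p hp
      simp only [Finset.mem_filter] at hp ⊢
      obtain ⟨-, hp1, hp2⟩ := hp
      by_cases hcmp : w p.1 < w p.2
      · rw [if_pos hcmp]
        refine ⟨Finset.mem_univ _, hcmp, by omega⟩
      · have hne : w p.1 ≠ w p.2 := fun hc => (ne_of_lt hp1) (hwinj hc)
        have hlt : w p.2 < w p.1 := lt_of_le_of_ne (not_lt.mp hcmp) (Ne.symm hne)
        rw [if_neg hcmp]
        exact ⟨Finset.mem_univ _,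
          show w p.2 < w p.1 ∧ w p.1 < -(w p.2) from ⟨hlt, by omega⟩⟩
    · intro q hq
      simp only [Finset.mem_filter] at hq ⊢
      obtain ⟨-, hq1, hq2⟩ := hq
      have hne : q.1 ≠ q.2 := fun hc => absurd hq1 (by rw [hc]; exact lt_irrefl _)
      by_cases hcmp : q.1 < q.2
      · rw [if_pos hcmp]
        exact ⟨Finset.mem_univ _, hcmp, by omega⟩
      · have hlt : q.2 < q.1 := lt_of_le_of_ne (not_lt.mp hcmp) (Ne.symm hne)
        rw [if_neg hcmp]
        exact ⟨Finset.mem_univ _,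
          show q.2 < q.1 ∧ w q.2 + w q.1 < 0 from ⟨hlt, by omega⟩⟩
    · intro p hp
      simp only [Finset.mem_filter] at hp
      obtain ⟨-, hp1, hp2⟩ := hp
      by_cases hcmp : w p.1 < w p.2
      · rw [if_pos hcmp, if_pos hp1]
      · rw [if_neg hcmp,
          if_neg (show ¬ ((p.2, p.1).1 < (p.2, p.1).2) from
            fun hc => absurd (lt_trans hp1 hc) (lt_irrefl _))]
    · intro q hq
      simp only [Finset.mem_filter] at hq
      obtain ⟨-, hq1, hq2⟩ := hq
      by_cases hcmp : q.1 < q.2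
      · rw [if_pos hcmp, if_pos hq1]
      · rw [if_neg hcmp,
          if_neg (show ¬ (w (q.2, q.1).1 < w (q.2, q.1).2) from
            fun hc => absurd (lt_trans hq1 hc) (lt_irrefl _))]
  -- step 2: fiberwise
  have step2 : ((Finset.univ : Finset (Fin n × Fin n)).filter
        fun p => w p.1 < w p.2 ∧ w p.2 < -(w p.1)).card
      = ∑ i : Fin n, (Finset.univ.filter fun j => w i < w j ∧ w j < -(w i)).card := by
    rw [Finset.card_filter, Fintype.sum_prod_type]
    exact Finset.sum_congr rfl fun i _ => (Finset.card_filter _ _).symm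
  -- step 3: per-i evaluation
  have step3 : ∀ i : Fin n, (Finset.univ.filter fun j => w i < w j ∧ w j < -(w i)).card
      = if w i < 0 then (w i).natAbs - 1 else 0 := by
    intro i
    by_cases hneg : w i < 0
    · rw [if_pos hneg]
      have hwi : w i = -((σ.1 i : ℤ) + 1) := by
        rw [hw]
        unfold sgnWord
        split_ifs with h
        · rfl
        · exfalso
          rw [hw] at hneg
          rw [(sgnWord_neg_iff σ i)] at hneg
          simp [hneg] at h
      have hcond : ∀ j : Fin n, (w i < w j ∧ w j < -(w i)) ↔ (σ.1 j : ℕ) < (σ.1 i : ℕ) := by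
        intro j
        rw [hwi, hw]
        unfold sgnWord
        split_ifs with h <;> omega
      rw [Finset.filter_congr fun j _ => hcond j,
        card_filter_comp_perm σ.1 (fun y => (y : ℕ) < (σ.1 i : ℕ)),
        card_filter_val_lt (by omega)]
      rw [hwi]
      omega
    · rw [if_neg hneg]
      rw [Finset.card_eq_zero, Finset.filter_eq_empty_iff]
      intro j _
      rintro ⟨h1, h2⟩
      omega
  rw [step1, step2, Finset.sum_congr rfl fun i _ => step3 i, ← Finset.sum_filter]

lemma card_le_n (A : Finset (Fin n)) : A.card ≤ n := by
  simpa using A.card_le_univ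

noncomputable def phiFun (A : Finset (Fin n)) : Fin n → Fin n := fun r =>
  if h : (r : ℕ) < A.card then
    A.orderEmbOfFin rfl ⟨A.card - 1 - (r : ℕ), by omega⟩
  else
    Aᶜ.orderEmbOfFin (by rw [Finset.card_compl, Fintype.card_fin])
      ⟨(r : ℕ) - A.card, by have := r.isLt; omega⟩

lemma phiFun_mem (A : Finset (Fin n)) (r : Fin n) :
    phiFun A r ∈ A ↔ (r : ℕ) < A.card := by
  unfold phiFun
  split_ifs with h
  · simp only [h, iff_true]
    exact Finset.orderEmbOfFin_mem _ _ _
  · simp only [h, iff_false]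
    have : Aᶜ.orderEmbOfFin (by rw [Finset.card_compl, Fintype.card_fin])
        ⟨(r : ℕ) - A.card, by have := r.isLt; omega⟩ ∈ Aᶜ :=
      Finset.orderEmbOfFin_mem _ _ _
    rw [Finset.mem_compl] at this
    exact this

lemma phiFun_injective (A : Finset (Fin n)) : Function.Injective (phiFun A) := by
  intro a b hab
  unfold phiFun at hab
  split_ifs at hab with h1 h2 h2
  · have := (A.orderEmbOfFin rfl).injective hab
    rw [Fin.mk.injEq] at this
    exact Fin.ext (by omega)
  · exfalso
    have h5 : A.orderEmbOfFin rfl ⟨A.card - 1 - (a : ℕ), by omega⟩ ∈ A :=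
      Finset.orderEmbOfFin_mem _ _ _
    have h4 : Aᶜ.orderEmbOfFin (by rw [Finset.card_compl, Fintype.card_fin])
        ⟨(b : ℕ) - A.card, by have := b.isLt; omega⟩ ∈ Aᶜ :=
      Finset.orderEmbOfFin_mem _ _ _
    rw [hab] at h5
    exact (Finset.mem_compl.mp h4) h5
  · exfalso
    have h5 : A.orderEmbOfFin rfl ⟨A.card - 1 - (b : ℕ), by omega⟩ ∈ A :=
      Finset.orderEmbOfFin_mem _ _ _
    have h4 : Aᶜ.orderEmbOfFin (by rw [Finset.card_compl, Fintype.card_fin])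
        ⟨(a : ℕ) - A.card, by have := a.isLt; omega⟩ ∈ Aᶜ :=
      Finset.orderEmbOfFin_mem _ _ _
    rw [← hab] at h5
    exact (Finset.mem_compl.mp h4) h5
  · have := (Aᶜ.orderEmbOfFin _).injective hab
    rw [Fin.mk.injEq] at this
    have ha := a.isLt
    have hb := b.isLt
    exact Fin.ext (by omega)

lemma image_phiFun_lt (A : Finset (Fin n)) :
    (Finset.univ.filter fun r : Fin n => (r : ℕ) < A.card).image (phiFun A) = A := by
  have hkn := card_le_n A
  apply Finset.eq_of_subset_of_card_le
  · intro a ha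
    rw [Finset.mem_image] at ha
    obtain ⟨r, hr, hra⟩ := ha
    rw [Finset.mem_filter] at hr
    rw [← hra]
    exact (phiFun_mem A r).mpr hr.2
  · rw [Finset.card_image_of_injective _ (phiFun_injective A), card_filter_val_lt hkn]

lemma image_phiFun_ge (A : Finset (Fin n)) :
    (Finset.univ.filter fun r : Fin n => ¬ ((r : ℕ) < A.card)).image (phiFun A) = Aᶜ := by
  have hkn := card_le_n A
  apply Finset.eq_of_subset_of_card_le
  · intro a ha
    rw [Finset.mem_image] at ha
    obtain ⟨r, hr, hra⟩ := ha
    rw [Finset.mem_filter] at hr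
    rw [← hra, Finset.mem_compl]
    intro hc
    exact hr.2 ((phiFun_mem A r).mp hc)
  · rw [Finset.card_image_of_injective _ (phiFun_injective A), Finset.card_compl,
      Fintype.card_fin]
    have hsplit : (Finset.univ.filter fun r : Fin n => (r : ℕ) < A.card).card
        + (Finset.univ.filter fun r : Fin n => ¬ ((r : ℕ) < A.card)).card
        = n := by
      rw [Finset.card_filter_add_card_filter_not]
      simp
    rw [card_filter_val_lt hkn] at hsplit
    omega
noncomputable def gA (A : Finset (Fin n)) : Fin n → ℤ := fun r =>
  if (r : ℕ) < A.card then -((phiFun A r : ℤ) + 1) else (phiFun A r : ℤ) + 1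

lemma gA_strictMono (A : Finset (Fin n)) : StrictMono (gA A) := by
  intro a b hab
  have hab' : (a : ℕ) < (b : ℕ) := hab
  unfold gA
  by_cases h1 : (a : ℕ) < A.card <;> by_cases h2 : (b : ℕ) < A.card
  · rw [if_pos h1, if_pos h2]
    have hlt : phiFun A b < phiFun A a := by
      unfold phiFun
      rw [dif_pos h1, dif_pos h2]
      apply (A.orderEmbOfFin rfl).strictMono
      rw [Fin.mk_lt_mk]
      omega
    have hv : (phiFun A b : ℕ) < (phiFun A a : ℕ) := hlt
    omega
  · rw [if_pos h1, if_neg h2]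
    omega
  · exfalso
    omega
  · rw [if_neg h1, if_neg h2]
    have hlt : phiFun A a < phiFun A b := by
      unfold phiFun
      rw [dif_neg h1, dif_neg h2]
      apply (Aᶜ.orderEmbOfFin _).strictMono
      rw [Fin.mk_lt_mk]
      omega
    have hv : (phiFun A a : ℕ) < (phiFun A b : ℕ) := hlt
    omega

noncomputable def phiPerm (A : Finset (Fin n)) : Equiv.Perm (Fin n) :=
  Equiv.ofBijective (phiFun A) (Finite.injective_iff_bijective.mp (phiFun_injective A))

noncomputable def mkSigned (s : Equiv.Perm (Fin n)) (A : Finset (Fin n)) : SignedPerm n :=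
  (s.trans (phiPerm A), fun i => decide ((s i : ℕ) < A.card))

lemma sgnWord_mkSigned (s : Equiv.Perm (Fin n)) (A : Finset (Fin n)) :
    sgnWord (mkSigned s A) = fun i => gA A (s i) := by
  funext i
  unfold sgnWord mkSigned gA
  simp only [Equiv.trans_apply]
  by_cases h : (s i : ℕ) < A.card
  · rw [if_pos (by simp [h]), if_pos h]
    rfl
  · rw [if_neg (by simp [h]), if_neg h]
    rfl

def negValues (σ : SignedPerm n) : Finset (Fin n) :=
  (Finset.univ.filter fun i => σ.2 i = true).image σ.1

lemma negStat_eq_negValues_card (σ : SignedPerm n) :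
    negStat (sgnWord σ) = (negValues σ).card := by
  rw [negStat, negValues, Finset.card_image_of_injective _ σ.1.injective]
  congr 1
  exact Finset.filter_congr fun i _ => sgnWord_neg_iff σ i

def rankMk (w : Fin n → ℤ) : Fin n → Fin n := fun i =>
  ⟨(Finset.univ.filter fun j => w j < w i).card, by
    have hsub : (Finset.univ.filter fun j => w j < w i) ⊆ Finset.univ.erase i := by
      intro j hj
      rw [Finset.mem_filter] at hj
      rw [Finset.mem_erase]
      exact ⟨fun hc => absurd hj.2 (by rw [hc]; exact lt_irrefl _), Finset.mem_univ _⟩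
    have h1 := Finset.card_le_card hsub
    rw [Finset.card_erase_of_mem (Finset.mem_univ i), Finset.card_univ, Fintype.card_fin] at h1
    have := i.isLt
    omega⟩

lemma rankMk_injective {w : Fin n → ℤ} (hw : Function.Injective w) :
    Function.Injective (rankMk w) := by
  intro a b hab
  unfold rankMk at hab
  rw [Fin.mk.injEq] at hab
  rcases lt_trichotomy (w a) (w b) with h | h | h
  · exfalso
    have hsub : (Finset.univ.filter fun j => w j < w a)
        ⊆ (Finset.univ.filter fun j => w j < w b) := by
      intro j hj
      rw [Finset.mem_filter] at hj ⊢
      exact ⟨hj.1, lt_trans hj.2 h⟩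
    have hss : (Finset.univ.filter fun j => w j < w a)
        ⊂ (Finset.univ.filter fun j => w j < w b) := by
      rw [Finset.ssubset_iff_of_subset hsub]
      exact ⟨a, by simp [h], by simp⟩
    have := Finset.card_lt_card hss
    omega
  · exact hw h
  · exfalso
    have hsub : (Finset.univ.filter fun j => w j < w b)
        ⊆ (Finset.univ.filter fun j => w j < w a) := by
      intro j hj
      rw [Finset.mem_filter] at hj ⊢
      exact ⟨hj.1, lt_trans hj.2 h⟩
    have hss : (Finset.univ.filter fun j => w j < w b)
        ⊂ (Finset.univ.filter fun j => w j < w a) := by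
      rw [Finset.ssubset_iff_of_subset hsub]
      exact ⟨b, by simp [h], by simp⟩
    have := Finset.card_lt_card hss
    omega

noncomputable def patternPerm (σ : SignedPerm n) : Equiv.Perm (Fin n) :=
  Equiv.ofBijective (rankMk (sgnWord σ))
    (Finite.injective_iff_bijective.mp (rankMk_injective (sgnWord_injective σ)))

lemma rankMk_comp_strictMono {g : Fin n → ℤ} (hg : StrictMono g) (s : Equiv.Perm (Fin n))
    (i : Fin n) : rankMk (fun j => g (s j)) i = s i := by
  unfold rankMk
  apply Fin.ext
  simp only
  have h1 : ∀ j, (g (s j) < g (s i)) ↔ s j < s i := fun j => hg.lt_iff_lt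
  rw [Finset.filter_congr fun j _ => h1 j, card_filter_comp_perm s (fun y => y < s i),
    Finset.filter_congr fun y (_ : y ∈ Finset.univ) => Fin.lt_def,
    card_filter_val_lt (le_of_lt (s i).isLt)]
lemma image_univ_comp_perm {f : Fin n → ℤ} (e : Equiv.Perm (Fin n)) :
    (Finset.univ.image fun i => f (e i)) = Finset.univ.image f := by
  ext z
  simp only [Finset.mem_image, Finset.mem_univ, true_and]
  constructor
  · rintro ⟨i, rfl⟩
    exact ⟨e i, rfl⟩
  · rintro ⟨j, rfl⟩
    exact ⟨e.symm j, by simp⟩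

lemma patternPerm_mkSigned (s : Equiv.Perm (Fin n)) (A : Finset (Fin n)) :
    patternPerm (mkSigned s A) = s := by
  apply Equiv.ext
  intro i
  show rankMk (sgnWord (mkSigned s A)) i = s i
  rw [sgnWord_mkSigned]
  exact rankMk_comp_strictMono (gA_strictMono A) s i

lemma negValues_mkSigned (s : Equiv.Perm (Fin n)) (A : Finset (Fin n)) :
    negValues (mkSigned s A) = A := by
  have h1 : negValues (mkSigned s A)
      = (Finset.univ.filter fun r : Fin n => (r : ℕ) < A.card).image (phiFun A) := by
    unfold negValues
    ext a
    simp only [Finset.mem_image, Finset.mem_filter, Finset.mem_univ, true_and]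
    constructor
    · rintro ⟨i, hi, rfl⟩
      have hi' : (s i : ℕ) < A.card := by
        have hd : decide ((s i : ℕ) < A.card) = true := hi
        exact of_decide_eq_true hd
      exact ⟨s i, hi', rfl⟩
    · rintro ⟨r, hr, rfl⟩
      refine ⟨s.symm r, ?_, ?_⟩
      · show decide (((s (s.symm r)) : ℕ) < A.card) = true
        rw [Equiv.apply_symm_apply]
        exact decide_eq_true hr
      · show phiFun A (s (s.symm r)) = phiFun A r
        rw [Equiv.apply_symm_apply]
  rw [h1, image_phiFun_lt]

def valSet (A : Finset (Fin n)) : Finset ℤ :=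
  A.image (fun a : Fin n => -((a : ℤ) + 1)) ∪ Aᶜ.image (fun b : Fin n => ((b : ℤ) + 1))

lemma image_gA (A : Finset (Fin n)) : Finset.univ.image (gA A) = valSet A := by
  have hsplit : Finset.univ.image (gA A)
      = ((Finset.univ.filter fun r : Fin n => (r : ℕ) < A.card).image (gA A))
        ∪ ((Finset.univ.filter fun r : Fin n => ¬ ((r : ℕ) < A.card)).image (gA A)) := by
    conv_lhs => rw [← Finset.filter_union_filter_not_eq
      (p := fun r : Fin n => (r : ℕ) < A.card) Finset.univ]
    rw [Finset.image_union]
  rw [hsplit, valSet]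
  congr 1
  · have h1 : (Finset.univ.filter fun r : Fin n => (r : ℕ) < A.card).image (gA A)
        = ((Finset.univ.filter fun r : Fin n => (r : ℕ) < A.card).image (phiFun A)).image
            (fun a : Fin n => -((a : ℤ) + 1)) := by
      rw [Finset.image_image]
      apply Finset.image_congr
      intro r hr
      simp only [Finset.coe_filter, Set.mem_setOf_eq] at hr
      show gA A r = -((phiFun A r : ℤ) + 1)
      unfold gA
      rw [if_pos hr.2]
    rw [h1, image_phiFun_lt]
  · have h1 : (Finset.univ.filter fun r : Fin n => ¬ ((r : ℕ) < A.card)).image (gA A)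
        = ((Finset.univ.filter fun r : Fin n => ¬ ((r : ℕ) < A.card)).image (phiFun A)).image
            (fun b : Fin n => ((b : ℤ) + 1)) := by
      rw [Finset.image_image]
      apply Finset.image_congr
      intro r hr
      simp only [Finset.coe_filter, Set.mem_setOf_eq] at hr
      show gA A r = (phiFun A r : ℤ) + 1
      unfold gA
      rw [if_neg hr.2]
    rw [h1, image_phiFun_ge]

lemma image_sgnWord (σ : SignedPerm n) :
    Finset.univ.image (sgnWord σ) = valSet (negValues σ) := by
  ext z
  simp only [valSet, Finset.mem_image, Finset.mem_union, Finset.mem_univ, true_and,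
    Finset.mem_compl]
  constructor
  · rintro ⟨i, rfl⟩
    by_cases h : σ.2 i = true
    · left
      refine ⟨σ.1 i, ?_, ?_⟩
      · unfold negValues
        exact Finset.mem_image_of_mem _ (by simp [h])
      · unfold sgnWord
        rw [if_pos h]
    · right
      refine ⟨σ.1 i, ?_, ?_⟩
      · intro hc
        unfold negValues at hc
        rw [Finset.mem_image] at hc
        obtain ⟨i', hi', hii⟩ := hc
        rw [Finset.mem_filter] at hi'
        have heq : i' = i := σ.1.injective hii
        rw [heq] at hi'
        exact h hi'.2
      · unfold sgnWord
        rw [if_neg h]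
  · rintro (⟨a, ha, rfl⟩ | ⟨b, hb, rfl⟩)
    · unfold negValues at ha
      rw [Finset.mem_image] at ha
      obtain ⟨i, hi, rfl⟩ := ha
      rw [Finset.mem_filter] at hi
      refine ⟨i, ?_⟩
      unfold sgnWord
      rw [if_pos hi.2]
    · refine ⟨σ.1.symm b, ?_⟩
      have hs : ¬ (σ.2 (σ.1.symm b) = true) := by
        intro hc
        apply hb
        unfold negValues
        rw [Finset.mem_image]
        exact ⟨σ.1.symm b, by simp [hc], by simp⟩
      unfold sgnWord
      rw [if_neg hs]
      simp

lemma word_eq {w w' : Fin n → ℤ} (hw : Function.Injective w) (hw' : Function.Injective w')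
    (him : Finset.univ.image w = Finset.univ.image w')
    (hrk : ∀ i, rankMk w i = rankMk w' i) : w = w' := by
  have key : ∀ (u : Fin n → ℤ), Function.Injective u → ∀ i : Fin n,
      ((Finset.univ.image u).filter (· < u i)).card = (rankMk u i : ℕ) := by
    intro u hu i
    have himg : (Finset.univ.image u).filter (· < u i)
        = (Finset.univ.filter fun j => u j < u i).image u := by
      ext z
      simp only [Finset.mem_filter, Finset.mem_image, Finset.mem_univ, true_and]
      constructor
      · rintro ⟨⟨j, rfl⟩, hz⟩
        exact ⟨j, hz, rfl⟩
      · rintro ⟨j, hj, rfl⟩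
        exact ⟨⟨j, rfl⟩, hj⟩
    rw [himg, Finset.card_image_of_injective _ hu]
    rfl
  funext i
  have h1 := key w hw i
  have h2 := key w' hw' i
  rw [← him] at h2
  rw [hrk i] at h1
  rcases lt_trichotomy (w i) (w' i) with h | h | h
  · exfalso
    have hmem : w i ∈ Finset.univ.image w := Finset.mem_image_of_mem w (Finset.mem_univ i)
    have hsub : (Finset.univ.image w).filter (· < w i)
        ⊆ (Finset.univ.image w).filter (· < w' i) := by
      intro z hz
      rw [Finset.mem_filter] at hz ⊢
      exact ⟨hz.1, lt_trans hz.2 h⟩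
    have hss : (Finset.univ.image w).filter (· < w i)
        ⊂ (Finset.univ.image w).filter (· < w' i) := by
      rw [Finset.ssubset_iff_of_subset hsub]
      exact ⟨w i, by simp [hmem, h], by simp⟩
    have := Finset.card_lt_card hss
    omega
  · exact h
  · exfalso
    have hmem : w' i ∈ Finset.univ.image w := by
      rw [him]
      exact Finset.mem_image_of_mem w' (Finset.mem_univ i)
    have hsub : (Finset.univ.image w).filter (· < w' i)
        ⊆ (Finset.univ.image w).filter (· < w i) := by
      intro z hz
      rw [Finset.mem_filter] at hz ⊢
      exact ⟨hz.1, lt_trans hz.2 h⟩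
    have hss : (Finset.univ.image w).filter (· < w' i)
        ⊂ (Finset.univ.image w).filter (· < w i) := by
      rw [Finset.ssubset_iff_of_subset hsub]
      exact ⟨w' i, by simp [hmem, h], by simp⟩
    have := Finset.card_lt_card hss
    omega

lemma signedPerm_eq_of_sgnWord {σ σ' : SignedPerm n} (h : sgnWord σ = sgnWord σ') :
    σ = σ' := by
  have h1 : σ.1 = σ'.1 := by
    apply Equiv.ext
    intro i
    have hi := congrFun h i
    have hn : (sgnWord σ i).natAbs = (sgnWord σ' i).natAbs := by rw [hi]
    rw [sgnWord_natAbs, sgnWord_natAbs] at hn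
    exact Fin.ext (by omega)
  have h2 : σ.2 = σ'.2 := by
    funext i
    have hi := congrFun h i
    have hb : (sgnWord σ i < 0) ↔ (sgnWord σ' i < 0) := by rw [hi]
    rw [sgnWord_neg_iff, sgnWord_neg_iff] at hb
    cases hσ : σ.2 i <;> cases hσ' : σ'.2 i <;> simp_all
  exact Prod.ext h1 h2

lemma mkSigned_pattern_negValues (σ : SignedPerm n) :
    mkSigned (patternPerm σ) (negValues σ) = σ := by
  apply signedPerm_eq_of_sgnWord
  rw [sgnWord_mkSigned]
  apply word_eq
  · intro i j hij
    exact (patternPerm σ).injective ((gA_strictMono (negValues σ)).injective hij)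
  · exact sgnWord_injective σ
  · rw [image_univ_comp_perm (patternPerm σ), image_gA, image_sgnWord]
  · intro i
    exact rankMk_comp_strictMono (gA_strictMono (negValues σ)) (patternPerm σ) i
lemma mkSigned_mem_evenSigned (s : Equiv.Perm (Fin n)) {A : Finset (Fin n)}
    (hA : Even A.card) : mkSigned s A ∈ evenSigned n := by
  unfold evenSigned
  rw [Finset.mem_filter]
  refine ⟨Finset.mem_univ _, ?_⟩
  rw [negStat_eq_negValues_card, negValues_mkSigned]
  exact hA

lemma sum_evenSigned (G : SignedPerm n → PP) :
    ∑ σ ∈ evenSigned n, G σ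
      = ∑ p ∈ (Finset.univ : Finset (Equiv.Perm (Fin n))) ×ˢ
          (Finset.univ.filter fun A : Finset (Fin n) => Even A.card),
          G (mkSigned p.1 p.2) := by
  refine (Finset.sum_nbij' (i := fun p : Equiv.Perm (Fin n) × Finset (Fin n) =>
      mkSigned p.1 p.2)
    (j := fun σ => (patternPerm σ, negValues σ)) ?_ ?_ ?_ ?_ ?_).symm
  · intro p hp
    rw [Finset.mem_product, Finset.mem_filter] at hp
    exact mkSigned_mem_evenSigned p.1 hp.2.2
  · intro σ hσ
    unfold evenSigned at hσ
    rw [Finset.mem_filter] at hσ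
    rw [Finset.mem_product, Finset.mem_filter]
    refine ⟨Finset.mem_univ _, Finset.mem_univ _, ?_⟩
    rw [← negStat_eq_negValues_card]
    exact hσ.2
  · intro p _
    exact Prod.ext (patternPerm_mkSigned p.1 p.2) (negValues_mkSigned p.1 p.2)
  · intro σ _
    exact mkSigned_pattern_negValues σ
  · intro p _
    rfl

noncomputable def CA (A : Finset (Fin n)) : ℕ :=
  (Finset.univ.filter fun r : Fin n => gA A r < -1).card

noncomputable def EA (A : Finset (Fin n)) : ℕ :=
  ∑ r ∈ Finset.univ.filter fun r : Fin n => gA A r < -1, ((gA A r).natAbs - 1)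

lemma dnegSet_mkSigned (s : Equiv.Perm (Fin n)) (A : Finset (Fin n)) :
    dnegSet (mkSigned s A) = Finset.univ.filter fun i => gA A (s i) < -1 := by
  unfold dnegSet
  ext i
  simp only [Finset.mem_filter, Finset.mem_univ, true_and]
  rw [congrFun (sgnWord_mkSigned s A) i]

lemma card_dneg_mk (s : Equiv.Perm (Fin n)) (A : Finset (Fin n)) :
    (dnegSet (mkSigned s A)).card = CA A := by
  rw [dnegSet_mkSigned]
  exact card_filter_comp_perm s (fun r => gA A r < -1)

lemma sum_dneg_mk (s : Equiv.Perm (Fin n)) (A : Finset (Fin n)) :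
    ∑ i ∈ dnegSet (mkSigned s A), ((sgnWord (mkSigned s A) i).natAbs - 1) = EA A := by
  have h1 : ∀ i, (sgnWord (mkSigned s A) i).natAbs - 1 = (gA A (s i)).natAbs - 1 :=
    fun i => by rw [congrFun (sgnWord_mkSigned s A) i]
  rw [dnegSet_mkSigned, Finset.sum_congr rfl (fun i _ => h1 i)]
  exact sum_filter_comp_perm s (fun r => gA A r < -1) (fun r => (gA A r).natAbs - 1)

lemma stc_mk (s : Equiv.Perm (Fin n)) (A : Finset (Fin n)) :
    stcStat (sgnWord (mkSigned s A)) = stcStat ⇑s := by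
  rw [sgnWord_mkSigned]
  exact stcStat_comp (gA_strictMono A) ⇑s

lemma inv_mk (s : Equiv.Perm (Fin n)) (A : Finset (Fin n)) :
    invStat (sgnWord (mkSigned s A)) = invStat ⇑s := by
  rw [sgnWord_mkSigned]
  exact invStat_comp (gA_strictMono A) ⇑s

lemma des_mk (s : Equiv.Perm (Fin n)) (A : Finset (Fin n)) :
    desStat (sgnWord (mkSigned s A)) = desStat ⇑s := by
  rw [sgnWord_mkSigned]
  exact desStat_comp (gA_strictMono A) ⇑s

lemma maj_mk (s : Equiv.Perm (Fin n)) (A : Finset (Fin n)) :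
    majStat (sgnWord (mkSigned s A)) = majStat ⇑s := by
  rw [sgnWord_mkSigned]
  exact majStat_comp (gA_strictMono A) ⇑s

lemma lenD_eq (σ : SignedPerm n) :
    lenD σ = invStat (sgnWord σ) + ∑ i ∈ dnegSet σ, ((sgnWord σ i).natAbs - 1) := by
  rw [lenD, nspStat_eq_sum]
  congr 1
  refine (Finset.sum_subset ?_ ?_).symm
  · intro i hi
    unfold dnegSet at hi
    rw [Finset.mem_filter] at hi ⊢
    exact ⟨hi.1, by omega⟩
  · intro i hi hni
    rw [Finset.mem_filter] at hi
    unfold dnegSet at hni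
    rw [Finset.mem_filter] at hni
    have h1 : ¬ (sgnWord σ i < -1) := fun hc => hni ⟨hi.1, hc⟩
    have h2 : sgnWord σ i = -1 := by omega
    rw [h2]
    simp

end PartH

theorem main_result (n : ℕ) :
    ∑ σ ∈ evenSigned n, xP ^ dstc σ * qP ^ lenD σ =
      ∑ σ ∈ evenSigned n, xP ^ ddes σ * qP ^ dmaj σ := by
  classical
  have hL1 : ∑ σ ∈ evenSigned n, xP ^ dstc σ * qP ^ lenD σ
      = ∑ σ ∈ evenSigned n,
          xP ^ (stcStat (sgnWord σ) + (dnegSet σ).card)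
            * qP ^ (invStat (sgnWord σ) + ∑ i ∈ dnegSet σ, ((sgnWord σ i).natAbs - 1)) :=
    Finset.sum_congr rfl fun σ _ => by rw [dstc, lenD_eq]
  have hR1 : ∑ σ ∈ evenSigned n, xP ^ ddes σ * qP ^ dmaj σ
      = ∑ σ ∈ evenSigned n,
          xP ^ (desStat (sgnWord σ) + (dnegSet σ).card)
            * qP ^ (majStat (sgnWord σ) + ∑ i ∈ dnegSet σ, ((sgnWord σ i).natAbs - 1)) :=
    Finset.sum_congr rfl fun σ _ => by rw [ddes, dmaj]
  rw [hL1, hR1, sum_evenSigned, sum_evenSigned, Finset.sum_product, Finset.sum_product]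
  have hterm : ∀ (st iv : ℕ) (A : Finset (Fin n)),
      xP ^ (st + CA A) * qP ^ (iv + EA A)
        = (xP ^ CA A * qP ^ EA A) * (xP ^ st * qP ^ iv) := by
    intro st iv A
    rw [pow_add, pow_add]
    ring
  have hLfac : ∀ s : Equiv.Perm (Fin n),
      ∑ A ∈ Finset.univ.filter fun A : Finset (Fin n) => Even A.card,
        xP ^ (stcStat (sgnWord (mkSigned s A)) + (dnegSet (mkSigned s A)).card)
          * qP ^ (invStat (sgnWord (mkSigned s A))
            + ∑ i ∈ dnegSet (mkSigned s A), ((sgnWord (mkSigned s A) i).natAbs - 1))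
      = (∑ A ∈ Finset.univ.filter fun A : Finset (Fin n) => Even A.card,
          xP ^ CA A * qP ^ EA A) * (xP ^ stcStat ⇑s * qP ^ invStat ⇑s) := by
    intro s
    rw [Finset.sum_mul]
    refine Finset.sum_congr rfl fun A _ => ?_
    rw [stc_mk, inv_mk, card_dneg_mk, sum_dneg_mk, hterm]
  have hRfac : ∀ s : Equiv.Perm (Fin n),
      ∑ A ∈ Finset.univ.filter fun A : Finset (Fin n) => Even A.card,
        xP ^ (desStat (sgnWord (mkSigned s A)) + (dnegSet (mkSigned s A)).card)
          * qP ^ (majStat (sgnWord (mkSigned s A))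
            + ∑ i ∈ dnegSet (mkSigned s A), ((sgnWord (mkSigned s A) i).natAbs - 1))
      = (∑ A ∈ Finset.univ.filter fun A : Finset (Fin n) => Even A.card,
          xP ^ CA A * qP ^ EA A) * (xP ^ desStat ⇑s * qP ^ majStat ⇑s) := by
    intro s
    rw [Finset.sum_mul]
    refine Finset.sum_congr rfl fun A _ => ?_
    rw [des_mk, maj_mk, card_dneg_mk, sum_dneg_mk, hterm]
  rw [Finset.sum_congr rfl fun s _ => hLfac s, Finset.sum_congr rfl fun s _ => hRfac s,
    ← Finset.mul_sum, ← Finset.mul_sum, skandera n]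

/-- `(dstc, ℓ)` is equidistributed with `(ddes, dmaj)` on `D_n`. -/
theorem dstc_len_equidistributed_ddes_dmaj (n : ℕ) :
    ∑ σ ∈ evenSigned n, xP ^ dstc σ * qP ^ lenD σ =
      ∑ σ ∈ evenSigned n, xP ^ ddes σ * qP ^ dmaj σ := by
  exact main_result n
end
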